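/- arXiv:1406.6723 — 8 statements merged into one kernel-verified Lean document; each statement's English description precedes it below -/
import Mathlib

section
/- Let U ⊆ ℂ be a nonempty open set, z ∈ U, and φ : U → 𝔻 a conformal equivalence onto the open unit disc 𝔻 = {w ∈ ℂ : |w| < 1} (a bijective holomorphic map with holomorphic inverse) with φ(z) = 0. Then for all integers 0 ≤ k ≤ m there exist complex numbers a₀, …, a_m such that the holomorphic function h = Σ_{i=0}^m a_i·φ^i satisfies: the i-th Taylor coefficient h^{(i)}(z)/i! equals 1 if i = k and equals 0 for every other i with 0 ≤ i ≤ m. -/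
open Metric Asymptotics

private lemma aux_sub_pow_iteratedDeriv (z : ℂ) (k : ℕ) : ∀ i : ℕ,
    iteratedDeriv i (fun w : ℂ => (w - z) ^ k) =
      fun w => (k.descFactorial i : ℂ) * (w - z) ^ (k - i) := by
  intro i
  induction i with
  | zero => simp
  | succ n ih =>
    rw [iteratedDeriv_succ, ih]
    funext w
    have hd : HasDerivAt (fun w : ℂ => (w - z) ^ (k - n))
        (((k - n : ℕ) : ℂ) * (w - z) ^ (k - n - 1)) w := by
      simpa using ((hasDerivAt_id w).sub_const z).fun_pow (k - n)
    rw [deriv_const_mul _ hd.differentiableAt, hd.deriv, Nat.descFactorial_succ, Nat.sub_sub]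
    push_cast
    ring

private lemma aux_bridge {f : ℂ → ℂ} {p : FormalMultilinearSeries ℂ ℂ ℂ} {z : ℂ}
    (hp : HasFPowerSeriesAt f p z) (n : ℕ) :
    iteratedDeriv n f z = (n.factorial : ℂ) * p.coeff n := by
  obtain ⟨r, hr⟩ := hp
  have h := hr.factorial_smul (1 : ℂ) n
  rw [FormalMultilinearSeries.apply_eq_pow_smul_coeff, one_pow, one_smul] at h
  rw [iteratedDeriv_eq_iteratedFDeriv, ← h, nsmul_eq_mul]

private lemma aux_coeff_zero {f : ℂ → ℂ} {p : FormalMultilinearSeries ℂ ℂ ℂ} {z : ℂ} {m : ℕ}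
    (hp : HasFPowerSeriesAt f p z)
    (hO : f =O[nhds z] fun w => ‖w - z‖ ^ (m + 1)) :
    ∀ i ≤ m, p.coeff i = 0 := by
  have htend : Filter.Tendsto (fun y : ℂ => z + y) (nhds 0) (nhds z) := by
    simpa using (continuous_const.fun_add continuous_id).tendsto (0 : ℂ)
  have h1 : (fun y : ℂ => f (z + y)) =O[nhds 0] fun y => ‖y‖ ^ (m + 1) := by
    have := hO.comp_tendsto htend
    simp only [Function.comp_def, add_sub_cancel_left] at this
    exact this
  intro i
  induction i using Nat.strong_induction_on with
  | _ i IH =>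
    intro him
    have hps : ∀ y : ℂ, p.partialSum i y = 0 := by
      intro y
      apply Finset.sum_eq_zero
      intro j hj
      rw [FormalMultilinearSeries.apply_eq_pow_smul_coeff,
        IH j (Finset.mem_range.mp hj) (le_trans (Nat.le_of_lt (Finset.mem_range.mp hj)) him),
        smul_zero]
    have hcmp : (fun y : ℂ => ‖y‖ ^ (m + 1)) =O[nhds 0] fun y => ‖y‖ ^ (i + 1) := by
      apply IsBigO.of_bound 1
      filter_upwards [Metric.ball_mem_nhds (0 : ℂ) one_pos] with y hy
      simp only [norm_pow, norm_norm, one_mul]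
      exact pow_le_pow_of_le_one (norm_nonneg y) (le_of_lt (by simpa using hy)) (by omega)
    have h2 := hp.isBigO_sub_partialSum_pow (i + 1)
    have key : (fun y : ℂ => p i fun _ => y) =O[nhds 0] fun y => ‖y‖ ^ (i + 1) := by
      have heq : (fun y : ℂ => p i fun _ => y) =
          fun y => (f (z + y) - p.partialSum i y) - (f (z + y) - p.partialSum (i + 1) y) := by
        funext y
        simp [FormalMultilinearSeries.partialSum, Finset.sum_range_succ]
      rw [heq]
      have h3 : (fun y : ℂ => f (z + y) - p.partialSum i y) =O[nhds 0]
          fun y => ‖y‖ ^ (i + 1) := by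
        have : (fun y : ℂ => f (z + y) - p.partialSum i y) = fun y => f (z + y) := by
          funext y; rw [hps, sub_zero]
        rw [this]; exact h1.trans hcmp
      exact h3.sub h2
    have := key.continuousMultilinearMap_apply_eq_zero 1
    rw [FormalMultilinearSeries.apply_eq_pow_smul_coeff, one_pow, one_smul] at this
    exact this

/-- **Lemma on polynomials in a conformal equivalence.**
Let `U ⊆ ℂ` be a nonempty open set, `z ∈ U`, and `φ : U → 𝔻` a conformal equivalence onto
the open unit disc (with holomorphic inverse `ψ`) such that `φ z = 0`. Then for all
`0 ≤ k ≤ m` there are complex numbers `a₀, …, a_m` such that the function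
`h = ∑_{i=0}^m a_i φ^i` satisfies `h^{(i)}(z)/i! = δ_{ik}` for all `0 ≤ i ≤ m`. -/
theorem polynomial_in_conformal_equiv_with_prescribed_taylor_coefficient
    (U : Set ℂ) (hU : IsOpen U) (hne : U.Nonempty) (z : ℂ) (hz : z ∈ U)
    (φ ψ : ℂ → ℂ)
    (hφa : AnalyticOnNhd ℂ φ U) (hφm : Set.MapsTo φ U (Metric.ball (0 : ℂ) 1))
    (hψa : AnalyticOnNhd ℂ ψ (Metric.ball (0 : ℂ) 1))
    (hψm : Set.MapsTo ψ (Metric.ball (0 : ℂ) 1) U)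
    (hleft : ∀ w ∈ U, ψ (φ w) = w)
    (hright : ∀ w ∈ Metric.ball (0 : ℂ) 1, φ (ψ w) = w)
    (hz0 : φ z = 0) :
    ∀ k m : ℕ, k ≤ m → ∃ a : ℕ → ℂ,
      ∀ i ≤ m,
        ((Nat.factorial i : ℂ))⁻¹ *
            iteratedDeriv i (fun w => ∑ n ∈ Finset.range (m + 1), a n * φ w ^ n) z =
          if i = k then 1 else 0 := by
  intro k m hkm
  have h0mem : (0 : ℂ) ∈ Metric.ball (0 : ℂ) 1 := by simp
  set G : ℂ → ℂ := fun ζ => (ψ ζ - z) ^ k with hG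
  have hGa : AnalyticAt ℂ G 0 := ((hψa 0 h0mem).sub analyticAt_const).pow k
  obtain ⟨q, hq⟩ := hGa
  set a : ℕ → ℂ := fun n => q.coeff n with ha
  refine ⟨a, ?_⟩
  -- the error term
  set E : ℂ → ℂ := fun w => q.partialSum (m + 1) (φ w) - G (φ w) with hE
  have hφz : AnalyticAt ℂ φ z := hφa z hz
  -- partial sums as polynomials
  have hps_eq : ∀ y : ℂ, q.partialSum (m + 1) y = ∑ n ∈ Finset.range (m + 1), a n * y ^ n := by
    intro y
    apply Finset.sum_congr rfl
    intro n _
    rw [FormalMultilinearSeries.apply_eq_pow_smul_coeff, smul_eq_mul]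
    ring
  -- E is analytic at z
  have hRa : AnalyticAt ℂ (fun ζ : ℂ => q.partialSum (m + 1) ζ - G ζ) 0 := by
    apply AnalyticAt.sub _ ⟨q, hq⟩
    have : AnalyticAt ℂ (fun ζ : ℂ => ∑ n ∈ Finset.range (m + 1), a n * ζ ^ n) 0 := by
      apply Finset.analyticAt_fun_sum
      intro n _
      exact analyticAt_const.mul (analyticAt_id.pow n)
    exact this.congr (Filter.Eventually.of_forall fun y => (hps_eq y).symm)
  have hEa : AnalyticAt ℂ E z := by
    have hcomp : AnalyticAt ℂ ((fun ζ : ℂ => q.partialSum (m + 1) ζ - G ζ) ∘ φ) z := by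
      apply AnalyticAt.comp _ hφz
      rw [hz0]; exact hRa
    exact hcomp
  obtain ⟨pE, hpE⟩ := hEa
  -- E is O(|w - z|^(m+1))
  have htendφ : Filter.Tendsto φ (nhds z) (nhds 0) := by
    have := hφz.continuousAt.tendsto
    rwa [hz0] at this
  have hR_O : (fun ζ : ℂ => q.partialSum (m + 1) ζ - G ζ) =O[nhds 0]
      fun ζ => ‖ζ‖ ^ (m + 1) := by
    have h1 := (hq.isBigO_sub_partialSum_pow (m + 1)).neg_left
    simp only [zero_add, neg_sub] at h1
    exact h1
  have hEO : E =O[nhds z] fun w => ‖w - z‖ ^ (m + 1) := by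
    have h1 : E =O[nhds z] fun w => ‖φ w‖ ^ (m + 1) := by
      have := hR_O.comp_tendsto htendφ
      simpa [Function.comp_def] using this
    refine h1.trans ?_
    have hφO : φ =O[nhds z] fun w => w - z := by
      have := hφz.differentiableAt.isBigO_sub
      simpa [hz0] using this
    have := (hφO.norm_norm.pow (m + 1))
    simpa using this
  have hEcoeff : ∀ i ≤ m, pE.coeff i = 0 := aux_coeff_zero hpE hEO
  -- power series of (w - z)^k
  obtain ⟨pP, hpP⟩ : AnalyticAt ℂ (fun w : ℂ => (w - z) ^ k) z :=
    (analyticAt_id.sub analyticAt_const).pow k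
  -- h agrees with (w-z)^k + E near z
  have hhEq : (fun w : ℂ => (w - z) ^ k + E w) =ᶠ[nhds z]
      fun w => ∑ n ∈ Finset.range (m + 1), a n * φ w ^ n := by
    filter_upwards [hU.mem_nhds hz] with w hw
    have hGw : G (φ w) = (w - z) ^ k := by rw [hG]; simp [hleft w hw]
    rw [hE]
    simp only [hGw, hps_eq (φ w)]
    ring
  have hh : HasFPowerSeriesAt
      (fun w => ∑ n ∈ Finset.range (m + 1), a n * φ w ^ n) (pP + pE) z :=
    (hpP.add hpE).congr hhEq
  intro i him
  rw [aux_bridge hh i]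
  have hcoeff_add : (pP + pE).coeff i = pP.coeff i + pE.coeff i := rfl
  rw [hcoeff_add, hEcoeff i him, add_zero]
  -- compute pP.coeff i
  have hP : (i.factorial : ℂ) * pP.coeff i = if i = k then (k.factorial : ℂ) else 0 := by
    rw [← aux_bridge hpP i, aux_sub_pow_iteratedDeriv z k i]
    simp only [sub_self]
    rcases lt_trichotomy i k with h | h | h
    · rw [if_neg (Nat.ne_of_lt h), zero_pow (by omega), mul_zero]
    · subst h
      simp [Nat.descFactorial_self]
    · rw [if_neg (Nat.ne_of_gt h), Nat.descFactorial_eq_zero_iff_lt.mpr h]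
      simp
  rw [hP]
  rcases eq_or_ne i k with h | h
  · subst h
    rw [if_pos rfl, if_pos rfl, inv_mul_cancel₀ (Nat.cast_ne_zero.mpr i.factorial_ne_zero)]
  · simp [h]
end

section
/- Let U ⊆ ℂ be a nonempty open set, z ∈ U, φ : U → 𝔻 a conformal equivalence with φ(z) = 0, and f : U → ℂ holomorphic. For n ≥ 0 let a_n denote the n-th Taylor coefficient of f ∘ φ⁻¹ at the origin. Then for every integer m ≥ 0, the functions f and Σ_{n=0}^m a_n·φ^n have the same derivatives at z up to order m, i.e., f^{(i)}(z) = (Σ_{n=0}^m a_n·φ^n)^{(i)}(z) for all 0 ≤ i ≤ m. -/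
open Metric


open Metric Topology Filter Function

private lemma iteratedDeriv_eq_coeff {g : ℂ → ℂ} {p : FormalMultilinearSeries ℂ ℂ ℂ} {x : ℂ}
    (hp : HasFPowerSeriesAt g p x) (n : ℕ) :
    iteratedDeriv n g x = (n.factorial : ℂ) * p.coeff n := by
  obtain ⟨r, hr⟩ := hp
  have h := hr.factorial_smul (1 : ℂ) n
  rw [iteratedDeriv_eq_iteratedFDeriv, ← h]
  show (n.factorial • p n fun _ => 1) = _
  rw [nsmul_eq_mul]
  rfl

private lemma analyticAt_deriv' {g : ℂ → ℂ} {x : ℂ} (hg : AnalyticAt ℂ g x) :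
    AnalyticAt ℂ (deriv g) x := by
  obtain ⟨s, hs, h⟩ := hg.exists_mem_nhds_analyticOnNhd
  exact h.deriv x (mem_of_mem_nhds hs)

private lemma iteratedDeriv_pow_eq (n : ℕ) :
    ∀ k : ℕ, iteratedDeriv k (fun u : ℂ => u ^ n) =
      fun u => (n.descFactorial k : ℂ) * u ^ (n - k) := by
  intro k
  induction k with
  | zero => simp
  | succ k ih =>
    rw [iteratedDeriv_succ, ih]
    funext u
    rw [deriv_const_mul _ (differentiableAt_pow _), deriv_pow_field,
      Nat.descFactorial_succ, Nat.cast_mul]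
    have : n - (k + 1) = n - k - 1 := by omega
    rw [this]; ring

private lemma iteratedDeriv_pow_at_zero (n k : ℕ) :
    iteratedDeriv k (fun u : ℂ => u ^ n) 0 = if k = n then (n.factorial : ℂ) else 0 := by
  rw [iteratedDeriv_pow_eq]
  rcases lt_trichotomy k n with h | h | h
  · simp [if_neg h.ne, zero_pow (show n - k ≠ 0 by omega)]
  · subst h
    simp [Nat.descFactorial_self]
  · simp [if_neg h.ne', Nat.descFactorial_eq_zero_iff_lt.mpr h]

private lemma iteratedDeriv_fun_sum' {ι : Type*} (s : Finset ι) (F : ι → ℂ → ℂ)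
    (hF : ∀ j ∈ s, ContDiff ℂ ⊤ (F j)) (k : ℕ) (x : ℂ) :
    iteratedDeriv k (fun u => ∑ j ∈ s, F j u) x = ∑ j ∈ s, iteratedDeriv k (F j) x := by
  simp only [iteratedDeriv_eq_iteratedFDeriv]
  rw [iteratedFDeriv_sum (fun j hj => (hF j hj).of_le le_top)]
  simp

private lemma iteratedDeriv_fun_const_mul {g : ℂ → ℂ} (hg : ContDiff ℂ ⊤ g) (c : ℂ) (k : ℕ)
    (x : ℂ) : iteratedDeriv k (fun u => c * g u) x = c * iteratedDeriv k g x := by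
  simp only [← iteratedDerivWithin_univ]
  exact iteratedDerivWithin_const_mul (Set.mem_univ x) uniqueDiffOn_univ c
    (hg.contDiffWithinAt.of_le le_top)

private lemma iteratedDeriv_add_of_analytic {g h : ℂ → ℂ} {x : ℂ}
    (hg : AnalyticAt ℂ g x) (hh : AnalyticAt ℂ h x) (n : ℕ) :
    iteratedDeriv n (fun y => g y + h y) x = iteratedDeriv n g x + iteratedDeriv n h x := by
  obtain ⟨p, hp⟩ := hg
  obtain ⟨q, hq⟩ := hh
  have hpq := hp.add hq
  rw [show (fun y => g y + h y) = g + h from rfl, iteratedDeriv_eq_coeff hpq,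
    iteratedDeriv_eq_coeff hp, iteratedDeriv_eq_coeff hq,
    show (p + q).coeff n = p.coeff n + q.coeff n from rfl]
  ring

private lemma iteratedDeriv_sub_of_analytic {g h : ℂ → ℂ} {x : ℂ}
    (hg : AnalyticAt ℂ g x) (hh : AnalyticAt ℂ h x) (n : ℕ) :
    iteratedDeriv n (fun y => g y - h y) x = iteratedDeriv n g x - iteratedDeriv n h x := by
  obtain ⟨p, hp⟩ := hg
  obtain ⟨q, hq⟩ := hh
  have hpq := hp.sub hq
  rw [show (fun y => g y - h y) = g - h from rfl, iteratedDeriv_eq_coeff hpq,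
    iteratedDeriv_eq_coeff hp, iteratedDeriv_eq_coeff hq,
    show (p - q).coeff n = p.coeff n - q.coeff n from rfl]
  ring

private lemma iteratedDeriv_pow_mul_vanish {u : ℂ → ℂ} {x : ℂ}
    (hu : AnalyticAt ℂ u x) (hux : u x = 0) :
    ∀ i : ℕ, ∀ v : ℂ → ℂ, AnalyticAt ℂ v x →
      iteratedDeriv i (fun w => u w ^ (i + 1) * v w) x = 0 := by
  intro i
  induction i with
  | zero => intro v hv; simp [hux]
  | succ i ih =>
    intro v hv
    rw [iteratedDeriv_succ']
    have heq : deriv (fun w => u w ^ (i + 1 + 1) * v w) =ᶠ[𝓝 x]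
        fun w => u w ^ (i + 1) * (((i : ℂ) + 2) * deriv u w * v w + u w * deriv v w) := by
      filter_upwards [hu.eventually_analyticAt, hv.eventually_analyticAt] with y hy1 hy2
      rw [deriv_fun_mul (hy1.differentiableAt.fun_pow _) hy2.differentiableAt,
        deriv_fun_pow hy1.differentiableAt _]
      push_cast
      ring_nf
    rw [heq.iteratedDeriv_eq i]
    exact ih _ (((analyticAt_const.mul (analyticAt_deriv' hu)).mul hv).add
      (hu.mul (analyticAt_deriv' hv)))

private lemma eq_pow_mul_iterate_dslope' {h : ℂ → ℂ} {q : FormalMultilinearSeries ℂ ℂ ℂ} {x : ℂ}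
    (hq : HasFPowerSeriesAt h q x) (N : ℕ) (hc : ∀ k < N, q.coeff k = 0) :
    ∀ᶠ w in 𝓝 x, h w = (w - x) ^ N * ((Function.swap dslope x)^[N] h w) := by
  have h1 := hasFPowerSeriesAt_iff'.mp (hq.has_fpower_series_iterate_dslope_fslope N)
  filter_upwards [h1, hasFPowerSeriesAt_iff'.mp hq] with w hw1 hw2
  obtain ⟨t, ht1, ht2⟩ := hw2.exists_hasSum_smul_of_apply_eq_zero hc
  rw [smul_eq_mul] at ht1
  simp only [FormalMultilinearSeries.coeff_iterate_fslope] at hw1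
  rw [← ht1]
  congr 1
  exact (hw1.unique ht2).symm


/-- **Taylor expansion in a conformal equivalence.**
Let `U ⊆ ℂ` be a nonempty open set, `z ∈ U`, `φ : U → 𝔻` a conformal equivalence (with
holomorphic inverse `ψ`) such that `φ z = 0`, and `f` holomorphic on `U`. Let
`a n = (f ∘ φ⁻¹)^{(n)}(0)/n!` be the `n`-th Taylor coefficient of `f ∘ φ⁻¹` at the origin.
Then for every `m ≥ 0` the functions `f` and `∑_{n=0}^m a_n φ^n` have the same derivatives
at `z` up to order `m`. -/
theorem derivatives_agree_with_polynomial_in_conformal_equiv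
    (U : Set ℂ) (hU : IsOpen U) (hne : U.Nonempty) (z : ℂ) (hz : z ∈ U)
    (φ ψ : ℂ → ℂ)
    (hφa : AnalyticOnNhd ℂ φ U) (hφm : Set.MapsTo φ U (Metric.ball (0 : ℂ) 1))
    (hψa : AnalyticOnNhd ℂ ψ (Metric.ball (0 : ℂ) 1))
    (hψm : Set.MapsTo ψ (Metric.ball (0 : ℂ) 1) U)
    (hleft : ∀ w ∈ U, ψ (φ w) = w)
    (hright : ∀ w ∈ Metric.ball (0 : ℂ) 1, φ (ψ w) = w)
    (hz0 : φ z = 0)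
    (f : ℂ → ℂ) (hf : AnalyticOnNhd ℂ f U)
    (a : ℕ → ℂ) (ha : ∀ n : ℕ, a n = ((Nat.factorial n : ℂ))⁻¹ * iteratedDeriv n (f ∘ ψ) 0) :
    ∀ m : ℕ, ∀ i ≤ m,
      iteratedDeriv i f z =
        iteratedDeriv i (fun w => ∑ n ∈ Finset.range (m + 1), a n * φ w ^ n) z := by
  intro m i him
  -- ψ 0 = z
  have hψ0 : ψ 0 = z := by rw [← hz0]; exact hleft z hz
  have h0mem : (0 : ℂ) ∈ Metric.ball (0 : ℂ) 1 := by simp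
  have hφz : AnalyticAt ℂ φ z := hφa z hz
  -- g := f ∘ ψ is analytic at 0
  have hg : AnalyticAt ℂ (f ∘ ψ) 0 := by
    refine AnalyticAt.comp ?_ (hψa 0 h0mem)
    rw [hψ0]; exact hf z hz
  obtain ⟨p, hp⟩ := hg
  -- a n = p.coeff n
  have ha' : ∀ n, a n = p.coeff n := by
    intro n
    rw [ha n, iteratedDeriv_eq_coeff hp n, ← mul_assoc,
      inv_mul_cancel₀ (by exact_mod_cast n.factorial_ne_zero), one_mul]
  -- the polynomial and its analyticity
  have hPanal : ∀ y : ℂ, AnalyticAt ℂ (fun u => ∑ n ∈ Finset.range (m + 1), a n * u ^ n) y := by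
    intro y
    exact Finset.analyticAt_fun_sum _ fun n _ =>
      (analyticAt_const.mul ((analyticAt_id).pow n))
  -- the remainder h := g - P is analytic at 0 with vanishing coefficients up to m
  have hh : AnalyticAt ℂ (fun u => (f ∘ ψ) u - ∑ n ∈ Finset.range (m + 1), a n * u ^ n) 0 :=
    hp.analyticAt.sub (hPanal 0)
  obtain ⟨q, hq⟩ := hh
  have hqc : ∀ k < m + 1, q.coeff k = 0 := by
    intro k hk
    have h1 := iteratedDeriv_eq_coeff hq k
    have h2 : iteratedDeriv k
        (fun u => (f ∘ ψ) u - ∑ n ∈ Finset.range (m + 1), a n * u ^ n) 0 =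
        iteratedDeriv k (f ∘ ψ) 0 -
          iteratedDeriv k (fun u => ∑ n ∈ Finset.range (m + 1), a n * u ^ n) 0 :=
      iteratedDeriv_sub_of_analytic hp.analyticAt (hPanal 0) k
    have h3 : iteratedDeriv k (fun u => ∑ n ∈ Finset.range (m + 1), a n * u ^ n) 0 =
        (k.factorial : ℂ) * a k := by
      rw [iteratedDeriv_fun_sum' (Finset.range (m + 1)) (fun n u => a n * u ^ n)
        (fun n _ => by exact contDiff_const.mul ((contDiff_id).pow n)) k 0]
      have h4 : ∀ n ∈ Finset.range (m + 1),
          iteratedDeriv k (fun u : ℂ => a n * u ^ n) 0 =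
          if k = n then (k.factorial : ℂ) * a k else 0 := by
        intro n _
        rw [iteratedDeriv_fun_const_mul
          (show ContDiff ℂ ⊤ (fun u : ℂ => u ^ n) by exact (contDiff_id).pow n) (a n) k 0,
          iteratedDeriv_pow_at_zero]
        split_ifs with hkn
        · subst hkn; ring
        · ring
      rw [Finset.sum_congr rfl h4, Finset.sum_ite_eq (Finset.range (m + 1)) k
        (fun _ => (k.factorial : ℂ) * a k)]
      simp [Finset.mem_range.mpr hk]
    have h5 : iteratedDeriv k (f ∘ ψ) 0 = (k.factorial : ℂ) * a k := by
      rw [iteratedDeriv_eq_coeff hp k, ha' k]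
    have h6 : (k.factorial : ℂ) * q.coeff k = 0 := by
      rw [← h1, h2, h3, h5, sub_self]
    have hkf : (k.factorial : ℂ) ≠ 0 := by exact_mod_cast k.factorial_ne_zero
    exact (mul_eq_zero.mp h6).resolve_left hkf
  -- factorization of the remainder
  have hfact := eq_pow_mul_iterate_dslope' hq (m + 1) hqc
  set R : ℂ → ℂ := (Function.swap dslope 0)^[m + 1]
    (fun u => (f ∘ ψ) u - ∑ n ∈ Finset.range (m + 1), a n * u ^ n) with hRdef
  have hR : AnalyticAt ℂ R 0 :=
    (hq.has_fpower_series_iterate_dslope_fslope (m + 1)).analyticAt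
  have hRφ : AnalyticAt ℂ (fun w => R (φ w)) z := by
    have : AnalyticAt ℂ R (φ z) := by rw [hz0]; exact hR
    exact this.comp hφz
  -- tendsto
  have hT : Filter.Tendsto φ (𝓝 z) (𝓝 0) := by
    have := hφz.continuousAt
    rwa [ContinuousAt, hz0] at this
  -- f is eventually equal to polynomial + remainder
  have hfeq : f =ᶠ[𝓝 z] fun w =>
      (∑ n ∈ Finset.range (m + 1), a n * φ w ^ n) + φ w ^ (m + 1) * R (φ w) := by
    filter_upwards [hU.mem_nhds hz, hT.eventually hfact] with w hwU hwf
    have hfw : f w = (f ∘ ψ) (φ w) := by simp [Function.comp, hleft w hwU]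
    rw [hfw]
    have : (f ∘ ψ) (φ w) =
        ((f ∘ ψ) (φ w) - ∑ n ∈ Finset.range (m + 1), a n * φ w ^ n) +
          ∑ n ∈ Finset.range (m + 1), a n * φ w ^ n := by ring
    rw [this, hwf]
    ring
  rw [hfeq.iteratedDeriv_eq i]
  have hQ : AnalyticAt ℂ (fun w => ∑ n ∈ Finset.range (m + 1), a n * φ w ^ n) z := by
    have := (hPanal (φ z)).comp hφz
    exact this.congr (by filter_upwards with w using rfl)
  have hE : AnalyticAt ℂ (fun w => φ w ^ (m + 1) * R (φ w)) z :=
    (hφz.pow _).mul hRφ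
  rw [iteratedDeriv_add_of_analytic hQ hE i]
  have hzero : iteratedDeriv i (fun w => φ w ^ (m + 1) * R (φ w)) z = 0 := by
    have hrw : (fun w => φ w ^ (m + 1) * R (φ w)) =
        fun w => φ w ^ (i + 1) * (φ w ^ (m - i) * R (φ w)) := by
      funext w
      rw [← mul_assoc, ← pow_add]
      congr 2
      omega
    rw [hrw]
    exact iteratedDeriv_pow_mul_vanish hφz hz0 i _ ((hφz.pow _).mul hRφ)
  rw [hzero, add_zero]
end

section
/- Let 𝓕 be an admissible space of analytic functions from U to W with base point z ∈ U. Then for every w ∈ U and every integer n ≥ 0, the linear map 𝓕 → W, F ↦ F^{(n)}(w) (evaluation of the n-th derivative at w), is bounded. -/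
open Metric Filter

noncomputable section

/-- `ψ` is a conformal equivalence from `U` onto the open unit disc. -/
def IsConfEquiv (U : Set ℂ) (ψ : ℂ → ℂ) : Prop :=
  ∃ ψi : ℂ → ℂ,
    AnalyticOnNhd ℂ ψ U ∧ Set.MapsTo ψ U (Metric.ball (0 : ℂ) 1) ∧
    AnalyticOnNhd ℂ ψi (Metric.ball (0 : ℂ) 1) ∧ Set.MapsTo ψi (Metric.ball (0 : ℂ) 1) U ∧
    (∀ w ∈ U, ψi (ψ w) = w) ∧ (∀ w ∈ Metric.ball (0 : ℂ) 1, ψ (ψi w) = w)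

/-- An admissible space of analytic functions from `U` to `W`, in the sense of
Kalton and Montgomery-Smith: a Banach space `𝓕` of `W`-valued analytic functions on `U`
(realized through an injective linear map `toFun`) such that evaluations are bounded and
multiplication by a conformal equivalence `ψ : U → 𝔻` is an isometry of `𝓕`. -/
structure AdmissibleSpace (U : Set ℂ) (W : Type*) [NormedAddCommGroup W] [NormedSpace ℂ W]
    [CompleteSpace W] (𝓕 : Type*) [NormedAddCommGroup 𝓕] [NormedSpace ℂ 𝓕]
    [CompleteSpace 𝓕] where
  isOpen_U : IsOpen U
  nonempty_U : U.Nonempty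
  conf : ∃ ψ, IsConfEquiv U ψ
  toFun : 𝓕 →ₗ[ℂ] ℂ → W
  analyticOn : ∀ F : 𝓕, AnalyticOnNhd ℂ (toFun F) U
  ext_on : ∀ F G : 𝓕, (∀ w ∈ U, toFun F w = toFun G w) → F = G
  eval_bound : ∀ w ∈ U, ∃ C : ℝ, ∀ F : 𝓕, ‖toFun F w‖ ≤ C * ‖F‖
  smul_mem : ∀ ψ, IsConfEquiv U ψ → ∀ F : 𝓕,
      ∃ G : 𝓕, (∀ w ∈ U, toFun G w = ψ w • toFun F w) ∧ ‖G‖ = ‖F‖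
  mem_of_smul : ∀ ψ, IsConfEquiv U ψ → ∀ F : 𝓕, ∀ g : ℂ → W, AnalyticOnNhd ℂ g U →
      (∀ w ∈ U, toFun F w = ψ w • g w) →
      ∃ G : 𝓕, (∀ w ∈ U, toFun G w = g w) ∧ ‖G‖ = ‖F‖

variable {U : Set ℂ} {W : Type*} [NormedAddCommGroup W] [NormedSpace ℂ W] [CompleteSpace W]
  {𝓕 : Type*} [NormedAddCommGroup 𝓕] [NormedSpace ℂ 𝓕] [CompleteSpace 𝓕]

/-- The `i`-th Taylor coefficient `F̂[i] = F^{(i)}(z)/i!` of (the function represented by)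
`F ∈ 𝓕` at the base point `z`. -/
def taylorCoeff (A : AdmissibleSpace U W 𝓕) (z : ℂ) (i : ℕ) (F : 𝓕) : W :=
  ((Nat.factorial i : ℂ))⁻¹ • iteratedDeriv i (A.toFun F) z

/-- The derived space `Z^(n)`, realized as the set of `n`-tuples of Taylor coefficients
(at the base point `z`) of functions of `𝓕`; the tuple `x` records the `i`-th Taylor
coefficient in position `i`. -/
def Zset (A : AdmissibleSpace U W 𝓕) (z : ℂ) (n : ℕ) : Set (Fin n → W) :=
  {x | ∃ F : 𝓕, ∀ i : Fin n, taylorCoeff A z i F = x i}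

/-- The (quotient) norm of the derived space `Z^(n)`. -/
def Znorm (A : AdmissibleSpace U W 𝓕) (z : ℂ) (n : ℕ) (x : Fin n → W) : ℝ :=
  sInf {c : ℝ | ∃ F : 𝓕, (∀ i : Fin n, taylorCoeff A z i F = x i) ∧ ‖F‖ = c}

/-- The "inclusion on the left" `ι_{n,m}`: in terms of Taylor indices, it shifts a tuple
up by `m - n`, filling with zeros: `(ι x)_i = x_{i-(m-n)}` for `i ≥ m - n`, `0` otherwise. -/
def leftShift (W : Type*) [NormedAddCommGroup W] (n m : ℕ) (x : Fin n → W) : Fin m → W :=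
  fun i => if h : m - n ≤ (i : ℕ) ∧ (i : ℕ) - (m - n) < n
    then x ⟨(i : ℕ) - (m - n), h.2⟩ else 0

/-- The "projection on the right" `π_{m,k}`: in terms of Taylor indices, it keeps the
coefficients of index `< k`. -/
def rightProj (W : Type*) [NormedAddCommGroup W] (m k : ℕ) (h : k ≤ m) (x : Fin m → W) :
    Fin k → W :=
  fun i => x (Fin.castLE h i)

/-- **Boundedness of derivative evaluations on an admissible space.**
If `𝓕` is an admissible space of analytic functions from `U` to `W` (with base point
`z ∈ U`), then for every `w ∈ U` and every `n ≥ 0` the linear map `𝓕 → W`,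
`F ↦ F^{(n)}(w)`, is bounded. -/
theorem AdmissibleSpace.derivEval_bounded (A : AdmissibleSpace U W 𝓕) (z : ℂ) (hz : z ∈ U) :
    ∀ w ∈ U, ∀ n : ℕ, ∃ D : 𝓕 →L[ℂ] W, ∀ F : 𝓕, D F = iteratedDeriv n (A.toFun F) w := by
  intro w hw n
  -- choose a closed ball inside U
  obtain ⟨ε, hε, hball⟩ := Metric.isOpen_iff.mp A.isOpen_U w hw
  set r : NNReal := ⟨ε / 2, by positivity⟩ with hrdef
  have hr0 : (0 : ℝ) < r := by exact half_pos hε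
  have hr0' : (0 : NNReal) < r := by exact_mod_cast hr0
  have hsub : Metric.closedBall w (r : ℝ) ⊆ U := fun x hx => by
    apply hball
    have hx' : dist x w ≤ (r : ℝ) := Metric.mem_closedBall.mp hx
    exact Metric.mem_ball.mpr (lt_of_le_of_lt hx' (by exact half_lt_self hε))
  -- bounded evaluation maps at points of the closed ball
  have key : ∀ ζ : Metric.closedBall w (r : ℝ), ∃ g : 𝓕 →L[ℂ] W,
      ∀ F, g F = A.toFun F (ζ : ℂ) := by
    rintro ⟨ζ, hζ⟩
    obtain ⟨C, hC⟩ := A.eval_bound ζ (hsub hζ)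
    exact ⟨LinearMap.mkContinuousOfExistsBound
      ((LinearMap.proj ζ).comp A.toFun) ⟨C, fun F => hC F⟩, fun F => rfl⟩
  choose g hg using key
  -- Banach–Steinhaus: uniform bound on the closed ball
  have hptwise : ∀ F : 𝓕, ∃ C, ∀ ζ, ‖g ζ F‖ ≤ C := by
    intro F
    obtain ⟨C, hC⟩ := (isCompact_closedBall w (r : ℝ)).exists_bound_of_continuousOn
      (((A.analyticOn F).continuousOn).mono hsub)
    exact ⟨C, fun ζ => by rw [hg]; exact hC ζ ζ.2⟩
  obtain ⟨C', hC'⟩ := banach_steinhaus hptwise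
  have hC'0 : 0 ≤ C' :=
    le_trans (norm_nonneg _) (hC' ⟨w, Metric.mem_closedBall_self hr0.le⟩)
  have hbound : ∀ F : 𝓕, ∀ ζ ∈ Metric.closedBall w (r : ℝ), ‖A.toFun F ζ‖ ≤ C' * ‖F‖ := by
    intro F ζ hζ
    have h1 := (g ⟨ζ, hζ⟩).le_opNorm F
    rw [hg] at h1
    exact h1.trans (mul_le_mul_of_nonneg_right (hC' _) (norm_nonneg F))
  -- the linear map F ↦ iteratedDeriv n (toFun F) w
  have hiterAdd : ∀ F G : 𝓕,
      iteratedDeriv n (A.toFun (F + G)) w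
        = iteratedDeriv n (A.toFun F) w + iteratedDeriv n (A.toFun G) w := by
    intro F G
    have hFG : A.toFun (F + G) = A.toFun F + A.toFun G := by rw [map_add]
    have hws : w ∈ Metric.ball w ε := Metric.mem_ball_self hε
    have haF : AnalyticOnNhd ℂ (A.toFun F) (Metric.ball w ε) :=
      fun x hx => A.analyticOn F x (hball hx)
    have haG : AnalyticOnNhd ℂ (A.toFun G) (Metric.ball w ε) :=
      fun x hx => A.analyticOn G x (hball hx)
    have hcF : ContDiffOn ℂ n (A.toFun F) (Metric.ball w ε) := haF.contDiffOn_of_completeSpace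
    have hcG : ContDiffOn ℂ n (A.toFun G) (Metric.ball w ε) := haG.contDiffOn_of_completeSpace
    simp only [iteratedDeriv_eq_iteratedFDeriv, hFG]
    rw [← iteratedFDerivWithin_of_isOpen n Metric.isOpen_ball hws,
      iteratedFDerivWithin_add_apply (hcF w hws) (hcG w hws) Metric.isOpen_ball.uniqueDiffOn hws,
      iteratedFDerivWithin_of_isOpen n Metric.isOpen_ball hws,
      iteratedFDerivWithin_of_isOpen n Metric.isOpen_ball hws]
    rfl
  have hiterSmul : ∀ (c : ℂ) (F : 𝓕),
      iteratedDeriv n (A.toFun (c • F)) w = c • iteratedDeriv n (A.toFun F) w := by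
    intro c F
    have hFc : A.toFun (c • F) = c • A.toFun F := by rw [map_smul]
    have hws : w ∈ Metric.ball w ε := Metric.mem_ball_self hε
    have haF : AnalyticOnNhd ℂ (A.toFun F) (Metric.ball w ε) :=
      fun x hx => A.analyticOn F x (hball hx)
    have hcF : ContDiffOn ℂ n (A.toFun F) (Metric.ball w ε) := haF.contDiffOn_of_completeSpace
    simp only [iteratedDeriv_eq_iteratedFDeriv, hFc]
    rw [← iteratedFDerivWithin_of_isOpen n Metric.isOpen_ball hws,
      iteratedFDerivWithin_const_smul_apply (hcF w hws) Metric.isOpen_ball.uniqueDiffOn hws,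
      iteratedFDerivWithin_of_isOpen n Metric.isOpen_ball hws]
    rfl
  set T : 𝓕 →ₗ[ℂ] W :=
    { toFun := fun F => iteratedDeriv n (A.toFun F) w
      map_add' := hiterAdd
      map_smul' := hiterSmul } with hT
  -- Cauchy estimate
  have hTbound : ∀ F : 𝓕,
      ‖iteratedDeriv n (A.toFun F) w‖ ≤ ((n.factorial : ℝ) * C' * ((r : ℝ)⁻¹) ^ n) * ‖F‖ := by
    intro F
    have hd : DifferentiableOn ℂ (A.toFun F) (Metric.closedBall w (r : ℝ)) := fun x hx =>
      ((A.analyticOn F x (hsub hx)).differentiableAt).differentiableWithinAt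
    have hps := hd.hasFPowerSeriesOnBall hr0'
    have h1 : iteratedDeriv n (A.toFun F) w
        = n.factorial • cauchyPowerSeries (A.toFun F) w (r : ℝ) n (fun _ => (1 : ℂ)) := by
      rw [iteratedDeriv_eq_iteratedFDeriv, ← hps.factorial_smul (1 : ℂ) n]
    have h2 : ‖cauchyPowerSeries (A.toFun F) w (r : ℝ) n (fun _ => (1 : ℂ))‖
        ≤ ‖cauchyPowerSeries (A.toFun F) w (r : ℝ) n‖ := by
      have := (cauchyPowerSeries (A.toFun F) w (r : ℝ) n).le_opNorm (fun _ => (1 : ℂ))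
      simpa using this
    have hint : (∫ θ : ℝ in (0)..2 * Real.pi, ‖A.toFun F (circleMap w (r : ℝ) θ)‖)
        ≤ 2 * Real.pi * (C' * ‖F‖) := by
      have hcont : Continuous fun θ : ℝ => ‖A.toFun F (circleMap w (r : ℝ) θ)‖ := by
        apply Continuous.norm
        exact ContinuousOn.comp_continuous
          (((A.analyticOn F).continuousOn).mono hsub) (continuous_circleMap w (r : ℝ))
          (fun θ => circleMap_mem_closedBall w hr0.le θ)
      calc (∫ θ : ℝ in (0)..2 * Real.pi, ‖A.toFun F (circleMap w (r : ℝ) θ)‖)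
          ≤ ∫ _ : ℝ in (0)..2 * Real.pi, C' * ‖F‖ := by
            apply intervalIntegral.integral_mono_on Real.two_pi_pos.le
              (hcont.intervalIntegrable 0 (2 * Real.pi)) intervalIntegrable_const
            intro θ _
            exact hbound F _ (circleMap_mem_closedBall w hr0.le θ)
        _ = 2 * Real.pi * (C' * ‖F‖) := by
            rw [intervalIntegral.integral_const, smul_eq_mul, sub_zero]
    have h3 : ‖cauchyPowerSeries (A.toFun F) w (r : ℝ) n‖
        ≤ (C' * ‖F‖) * ((r : ℝ)⁻¹) ^ n := by
      refine (norm_cauchyPowerSeries_le (A.toFun F) w (r : ℝ) n).trans ?_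
      rw [abs_of_nonneg hr0.le]
      apply mul_le_mul_of_nonneg_right _ (by positivity)
      calc (2 * Real.pi)⁻¹ * ∫ θ : ℝ in (0)..2 * Real.pi, ‖A.toFun F (circleMap w (r : ℝ) θ)‖
          ≤ (2 * Real.pi)⁻¹ * (2 * Real.pi * (C' * ‖F‖)) := by
            apply mul_le_mul_of_nonneg_left hint (by positivity)
        _ = C' * ‖F‖ := by
            field_simp
    calc ‖iteratedDeriv n (A.toFun F) w‖
        = ‖n.factorial • cauchyPowerSeries (A.toFun F) w (r : ℝ) n (fun _ => (1 : ℂ))‖ := by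
          rw [h1]
      _ ≤ (n.factorial : ℝ) * ‖cauchyPowerSeries (A.toFun F) w (r : ℝ) n (fun _ => (1 : ℂ))‖ :=
          norm_nsmul_le
      _ ≤ (n.factorial : ℝ) * ((C' * ‖F‖) * ((r : ℝ)⁻¹) ^ n) := by
          apply mul_le_mul_of_nonneg_left (h2.trans h3) (by positivity)
      _ = ((n.factorial : ℝ) * C' * ((r : ℝ)⁻¹) ^ n) * ‖F‖ := by ring
  exact ⟨LinearMap.mkContinuousOfExistsBound T
    ⟨(n.factorial : ℝ) * C' * ((r : ℝ)⁻¹) ^ n, hTbound⟩, fun F => rfl⟩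

end
end

section
/- Let 𝓕 be an admissible space of analytic functions from U to W with base point z ∈ U, and let 1 ≤ n < m be integers, k = m − n. Then there is a constant M (depending only on 𝓕, z, n, m) such that for every F ∈ 𝓕 there exists G ∈ 𝓕 with ‖G‖_𝓕 ≤ M‖F‖_𝓕, Ĝ[i] = 0 for all 0 ≤ i < k, and Ĝ[i] = F̂[i−k] for all k ≤ i < m. Consequently, the left-shift map ι_{n,m} : (x_{n−1},…,x_0) ↦ (x_{n−1},…,x_0,0,…,0) maps Z^(n) into Z^(m) and is a bounded linear operator Z^(n) → Z^(m). -/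
open Metric Filter

noncomputable section

variable {U : Set ℂ} {W : Type*} [NormedAddCommGroup W] [NormedSpace ℂ W] [CompleteSpace W]
  {𝓕 : Type*} [NormedAddCommGroup 𝓕] [NormedSpace ℂ 𝓕] [CompleteSpace 𝓕]

namespace LeftShiftAux

variable {V : Type*} [NormedAddCommGroup V] [NormedSpace ℂ V] [CompleteSpace V]
variable {U : Set ℂ}

lemma itd_analytic {g : ℂ → V} (hg : AnalyticOnNhd ℂ g U) (j : ℕ) :
    AnalyticOnNhd ℂ (iteratedDeriv j g) U := by
  induction j with
  | zero => simpa [iteratedDeriv_zero] using hg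
  | succ j ih => rw [iteratedDeriv_succ]; exact ih.deriv

lemma itd_sum (hU : IsOpen U) {ι : Type*} {t : Finset ι} {g : ι → ℂ → V}
    (hg : ∀ s ∈ t, AnalyticOnNhd ℂ (g s) U) (i : ℕ) :
    ∀ w ∈ U, iteratedDeriv i (fun x => ∑ s ∈ t, g s x) w = ∑ s ∈ t, iteratedDeriv i (g s) w := by
  induction i with
  | zero => intro w hw; simp [iteratedDeriv_zero]
  | succ i ih =>
    intro w hw
    rw [iteratedDeriv_succ]
    have hcongr : deriv (iteratedDeriv i (fun x => ∑ s ∈ t, g s x)) w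
        = deriv (fun x => ∑ s ∈ t, iteratedDeriv i (g s) x) w := by
      apply Filter.EventuallyEq.deriv_eq
      filter_upwards [hU.mem_nhds hw] with x hx using ih x hx
    rw [hcongr]
    have hD : HasDerivAt (fun x => ∑ s ∈ t, iteratedDeriv i (g s) x)
        (∑ s ∈ t, iteratedDeriv (i + 1) (g s) w) w := by
      apply HasDerivAt.fun_sum
      intro s hs
      have hd := ((itd_analytic (hg s hs) i) w hw).differentiableAt.hasDerivAt
      rwa [← iteratedDeriv_succ] at hd
    rw [hD.deriv]

lemma itd_const_smul (hU : IsOpen U) {g : ℂ → V} (hg : AnalyticOnNhd ℂ g U) (c : ℂ) (i : ℕ) :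
    ∀ w ∈ U, iteratedDeriv i (fun x => c • g x) w = c • iteratedDeriv i g w := by
  induction i with
  | zero => intro w hw; simp [iteratedDeriv_zero]
  | succ i ih =>
    intro w hw
    rw [iteratedDeriv_succ, iteratedDeriv_succ]
    have hcongr : deriv (iteratedDeriv i (fun x => c • g x)) w
        = deriv (fun x => c • iteratedDeriv i g x) w := by
      apply Filter.EventuallyEq.deriv_eq
      filter_upwards [hU.mem_nhds hw] with x hx using ih x hx
    rw [hcongr]
    have hD : HasDerivAt (fun x => c • iteratedDeriv i g x) (c • deriv (iteratedDeriv i g) w) w :=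
      ((itd_analytic hg i w hw).differentiableAt.hasDerivAt).const_smul c
    rw [hD.deriv]

lemma leibniz (hU : IsOpen U) {h : ℂ → ℂ} {f : ℂ → V}
    (hh : AnalyticOnNhd ℂ h U) (hf : AnalyticOnNhd ℂ f U) (i : ℕ) :
    ∀ w ∈ U, iteratedDeriv i (fun x => h x • f x) w
      = ∑ j ∈ Finset.range (i + 1),
          i.choose j • (iteratedDeriv j h w • iteratedDeriv (i - j) f w) := by
  induction i with
  | zero => intro w hw; simp [iteratedDeriv_zero]
  | succ i ih =>
    intro w hw
    rw [iteratedDeriv_succ]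
    have hcongr : deriv (iteratedDeriv i (fun x => h x • f x)) w
        = deriv (fun x => ∑ j ∈ Finset.range (i + 1),
            i.choose j • (iteratedDeriv j h x • iteratedDeriv (i - j) f x)) w := by
      apply Filter.EventuallyEq.deriv_eq
      filter_upwards [hU.mem_nhds hw] with x hx using ih x hx
    rw [hcongr]
    have hD : HasDerivAt (fun x => ∑ j ∈ Finset.range (i + 1),
          i.choose j • (iteratedDeriv j h x • iteratedDeriv (i - j) f x))
        (∑ j ∈ Finset.range (i + 1), i.choose j •
          (iteratedDeriv j h w • iteratedDeriv (i - j + 1) f w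
            + iteratedDeriv (j + 1) h w • iteratedDeriv (i - j) f w)) w := by
      apply HasDerivAt.fun_sum
      intro j hj
      refine HasDerivAt.const_smul (i.choose j) ?_
      have h1 : HasDerivAt (iteratedDeriv j h) (iteratedDeriv (j + 1) h w) w := by
        have hd := ((itd_analytic hh j) w hw).differentiableAt.hasDerivAt
        rwa [← iteratedDeriv_succ] at hd
      have h2 : HasDerivAt (iteratedDeriv (i - j) f) (iteratedDeriv (i - j + 1) f w) w := by
        have hd := ((itd_analytic hf (i - j)) w hw).differentiableAt.hasDerivAt
        rwa [← iteratedDeriv_succ] at hd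
      exact h1.smul h2
    rw [hD.deriv]
    rw [Finset.sum_choose_succ_nsmul
      (fun a b => iteratedDeriv a h w • iteratedDeriv b f w) i]
    simp only [smul_add, Finset.sum_add_distrib]
    congr 1
    apply Finset.sum_congr rfl
    intro j hj
    have hji : i + 1 - j = (i - j) + 1 := Nat.succ_sub (Nat.lt_succ_iff.mp (Finset.mem_range.mp hj))
    rw [hji]

/-- The `i`-th Taylor coefficient of a plain function. -/
def tc (g : ℂ → V) (z : ℂ) (i : ℕ) : V := ((Nat.factorial i : ℂ))⁻¹ • iteratedDeriv i g z

lemma tc_smul (hU : IsOpen U) {h : ℂ → ℂ} {f : ℂ → V}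
    (hh : AnalyticOnNhd ℂ h U) (hf : AnalyticOnNhd ℂ f U) {z : ℂ} (hz : z ∈ U) (i : ℕ) :
    tc (fun x => h x • f x) z i = ∑ j ∈ Finset.range (i + 1), tc h z j • tc f z (i - j) := by
  unfold tc
  rw [leibniz hU hh hf i z hz, Finset.smul_sum]
  apply Finset.sum_congr rfl
  intro j hj
  have hji : j ≤ i := Nat.lt_succ_iff.mp (Finset.mem_range.mp hj)
  rw [← Nat.cast_smul_eq_nsmul ℂ]
  rw [smul_smul, smul_smul, smul_eq_mul, smul_smul]
  congr 1
  have key : ((i.choose j : ℂ)) * (j.factorial : ℂ) * ((i - j).factorial : ℂ)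
      = (i.factorial : ℂ) := by
    exact_mod_cast congrArg (Nat.cast : ℕ → ℂ) (Nat.choose_mul_factorial_mul_factorial hji)
  have h1 : (j.factorial : ℂ) ≠ 0 := Nat.cast_ne_zero.mpr (Nat.factorial_ne_zero j)
  have h2 : ((i - j).factorial : ℂ) ≠ 0 := Nat.cast_ne_zero.mpr (Nat.factorial_ne_zero (i - j))
  have h3 : (i.factorial : ℂ) ≠ 0 := Nat.cast_ne_zero.mpr (Nat.factorial_ne_zero i)
  field_simp
  linear_combination (iteratedDeriv j h z) * key


lemma tc_pow (hU : IsOpen U) {ψ : ℂ → ℂ} (hψ : AnalyticOnNhd ℂ ψ U) {z : ℂ} (hz : z ∈ U) :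
    ∀ s : ℕ, (∀ r < s, tc (fun w => (ψ w - ψ z) ^ s) z r = 0) ∧
      tc (fun w => (ψ w - ψ z) ^ s) z s = (deriv ψ z) ^ s := by
  have hφ : AnalyticOnNhd ℂ (fun w => ψ w - ψ z) U := hψ.sub analyticOnNhd_const
  have htc0 : tc (fun w => ψ w - ψ z) z 0 = 0 := by
    simp [tc, iteratedDeriv_zero]
  have htc1 : tc (fun w => ψ w - ψ z) z 1 = deriv ψ z := by
    simp [tc, iteratedDeriv_one, deriv_sub_const]
  intro s
  induction s with
  | zero =>
    constructor
    · intro r hr; omega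
    · simp [tc, iteratedDeriv_zero]
  | succ s ih =>
    have heq : (fun w => (ψ w - ψ z) ^ (s + 1))
        = fun w => (ψ w - ψ z) • (ψ w - ψ z) ^ s := by
      funext w; rw [smul_eq_mul, ← pow_succ']
    have hconv : ∀ i, tc (fun w => (ψ w - ψ z) ^ (s + 1)) z i
        = ∑ j ∈ Finset.range (i + 1),
            tc (fun w => ψ w - ψ z) z j • tc (fun w => (ψ w - ψ z) ^ s) z (i - j) := by
      intro i
      rw [heq]
      exact tc_smul hU hφ (hφ.pow s) hz i
    constructor
    · intro r hr
      rw [hconv r]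
      apply Finset.sum_eq_zero
      intro j hj
      have hjr : j ≤ r := Nat.lt_succ_iff.mp (Finset.mem_range.mp hj)
      rcases Nat.eq_zero_or_pos j with hj0 | hj1
      · subst hj0; rw [htc0, zero_smul]
      · rw [ih.1 (r - j) (by omega), smul_zero]
    · rw [hconv (s + 1)]
      rw [Finset.sum_eq_single_of_mem 1 (by simp)]
      · rw [htc1]
        have : s + 1 - 1 = s := by omega
        rw [this, ih.2, smul_eq_mul, ← pow_succ']
      · intro j hj hne
        rcases Nat.eq_zero_or_pos j with hj0 | hj1
        · subst hj0; rw [htc0, zero_smul]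
        · have hj2 : 2 ≤ j := by omega
          have : s + 1 - j < s := by
            have : j < s + 2 := Finset.mem_range.mp hj
            omega
          rw [ih.1 (s + 1 - j) this, smul_zero]

end LeftShiftAux

/-- **The left inclusion `ι_{n,m} : Z^(n) → Z^(m)` is bounded.**
Let `𝓕` be an admissible space of analytic functions with base point `z ∈ U` and
`1 ≤ n < m`, `k = m - n`. There is a constant `M` such that every `F ∈ 𝓕` admits `G ∈ 𝓕`
with `‖G‖ ≤ M‖F‖`, `Ĝ[i] = 0` for `i < k` and `Ĝ[i] = F̂[i-k]` for `k ≤ i < m`.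
Consequently the left shift `ι_{n,m}` maps `Z^(n)` into `Z^(m)` boundedly. -/
theorem AdmissibleSpace.leftShift_bounded (A : AdmissibleSpace U W 𝓕) (z : ℂ) (hz : z ∈ U)
    (n m : ℕ) (hn : 1 ≤ n) (hm : n < m) :
    ∃ M : ℝ,
      (∀ F : 𝓕, ∃ G : 𝓕, ‖G‖ ≤ M * ‖F‖ ∧
        (∀ i : ℕ, i < m - n → taylorCoeff A z i G = 0) ∧
        (∀ i : ℕ, m - n ≤ i → i < m → taylorCoeff A z i G = taylorCoeff A z (i - (m - n)) F)) ∧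
      (∀ x ∈ Zset A z n, leftShift W n m x ∈ Zset A z m ∧
        Znorm A z m (leftShift W n m x) ≤ M * Znorm A z n x) := by
  classical
  obtain ⟨ψ, hc⟩ := A.conf
  obtain ⟨ψi, hψa, hψm, hψia, hψim, hlft, hrgt⟩ := id hc
  have hU := A.isOpen_U
  set k := m - n with hk
  have hdmul : deriv ψi (ψ z) * deriv ψ z = 1 := by
    have hdiff1 : DifferentiableAt ℂ ψi (ψ z) := (hψia (ψ z) (hψm hz)).differentiableAt
    have hdiff2 : DifferentiableAt ℂ ψ z := (hψa z hz).differentiableAt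
    have hcmp : deriv (ψi ∘ ψ) z = deriv ψi (ψ z) * deriv ψ z := deriv_comp z hdiff1 hdiff2
    have hev : (ψi ∘ ψ) =ᶠ[nhds z] id := by
      filter_upwards [hU.mem_nhds hz] with w hw using hlft w hw
    rw [hev.deriv_eq, deriv_id] at hcmp
    exact hcmp.symm
  have hd0 : deriv ψ z ≠ 0 := right_ne_zero_of_mul_eq_one hdmul
  have hφa : AnalyticOnNhd ℂ (fun w => ψ w - ψ z) U := hψa.sub analyticOnNhd_const
  have hpow := LeftShiftAux.tc_pow hU hψa hz
  set Mx : Matrix (Fin m) (Fin m) ℂ :=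
    fun r s => LeftShiftAux.tc (fun w => (ψ w - ψ z) ^ (s : ℕ)) z (r : ℕ) with hMx
  have htri : Mx.BlockTriangular OrderDual.toDual := by
    intro r s hrs
    have hrs' : (r : ℕ) < (s : ℕ) := hrs
    exact (hpow (s : ℕ)).1 (r : ℕ) hrs'
  have hdet : Mx.det ≠ 0 := by
    rw [Matrix.det_of_lowerTriangular Mx htri]
    apply Finset.prod_ne_zero_iff.mpr
    intro s _
    have : Mx s s = (deriv ψ z) ^ (s : ℕ) := (hpow (s : ℕ)).2
    rw [this]
    exact pow_ne_zero _ hd0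
  set v : Fin m → ℂ := fun r => if (r : ℕ) = k then 1 else 0 with hv
  set b : Fin m → ℂ := Mx⁻¹.mulVec v with hb
  have hMb : Mx.mulVec b = v := by
    rw [hb, Matrix.mulVec_mulVec, Matrix.mul_nonsing_inv _ (isUnit_iff_ne_zero.mpr hdet),
      Matrix.one_mulVec]
  set h : ℂ → ℂ := fun w => ∑ s : Fin m, b s * (ψ w - ψ z) ^ (s : ℕ) with hh
  have hha : AnalyticOnNhd ℂ h U := by
    apply Finset.analyticOnNhd_fun_sum
    intro s _
    exact analyticOnNhd_const.mul (hφa.pow (s : ℕ))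
  have hcoef : ∀ j : ℕ, j < m → LeftShiftAux.tc h z j = if j = k then 1 else 0 := by
    intro j hj
    have e1 : LeftShiftAux.tc h z j
        = ∑ s : Fin m, b s * LeftShiftAux.tc (fun w => (ψ w - ψ z) ^ (s : ℕ)) z j := by
      unfold LeftShiftAux.tc
      have hsum := LeftShiftAux.itd_sum (V := ℂ) hU (t := (Finset.univ : Finset (Fin m)))
        (g := fun (s : Fin m) (x : ℂ) => b s • (ψ x - ψ z) ^ (s : ℕ))
        (fun s _ => analyticOnNhd_const.smul (hφa.pow (s : ℕ))) j z hz
      have hrw : h = fun x => ∑ s : Fin m, b s • (ψ x - ψ z) ^ (s : ℕ) := by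
        funext x; simp [hh, smul_eq_mul]
      rw [hrw, hsum, Finset.smul_sum]
      apply Finset.sum_congr rfl
      intro s _
      rw [LeftShiftAux.itd_const_smul hU (g := fun w => (ψ w - ψ z) ^ (s : ℕ)) (hφa.pow (s : ℕ)) (b s) j z hz]
      rw [smul_comm, smul_eq_mul]
    have e2 : (∑ s : Fin m, b s * LeftShiftAux.tc (fun w => (ψ w - ψ z) ^ (s : ℕ)) z j)
        = Mx.mulVec b ⟨j, hj⟩ := by
      simp [Matrix.mulVec, dotProduct, hMx, mul_comm]
    rw [e1, e2, hMb]
  have hψz1 : ‖ψ z‖ < 1 := by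
    have := hψm hz
    simpa [mem_ball, dist_eq_norm] using this
  have key : ∀ F : 𝓕, ∀ s : ℕ, ∃ Gs : 𝓕,
      (∀ w ∈ U, A.toFun Gs w = (ψ w - ψ z) ^ s • A.toFun F w) ∧ ‖Gs‖ ≤ 2 ^ s * ‖F‖ := by
    intro F s
    induction s with
    | zero => exact ⟨F, fun w hw => by simp, by simp⟩
    | succ s ih =>
      obtain ⟨Gs, hG1, hG2⟩ := ih
      obtain ⟨G', hG'1, hG'2⟩ := A.smul_mem ψ hc Gs
      refine ⟨G' - ψ z • Gs, ?_, ?_⟩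
      · intro w hw
        have e : A.toFun (G' - ψ z • Gs) w = A.toFun G' w - ψ z • A.toFun Gs w := by
          simp [map_sub, map_smul]
        rw [e, hG'1 w hw, hG1 w hw, smul_smul, smul_smul, ← sub_smul, ← sub_mul]
        rw [← pow_succ']
      · have hn0 : (0:ℝ) ≤ ‖Gs‖ := norm_nonneg _
        calc ‖G' - ψ z • Gs‖ ≤ ‖G'‖ + ‖ψ z • Gs‖ := norm_sub_le _ _
          _ = ‖Gs‖ + ‖ψ z‖ * ‖Gs‖ := by rw [hG'2, norm_smul]
          _ ≤ ‖Gs‖ + 1 * ‖Gs‖ := by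
              have := mul_le_mul_of_nonneg_right (le_of_lt hψz1) hn0
              linarith
          _ = 2 * ‖Gs‖ := by ring
          _ ≤ 2 * (2 ^ s * ‖F‖) := by linarith
          _ = 2 ^ (s + 1) * ‖F‖ := by ring
  set M : ℝ := (∑ s : Fin m, ‖b s‖ * 2 ^ (s : ℕ)) + 1 with hM
  have hM0 : 0 < M := by
    have : (0:ℝ) ≤ ∑ s : Fin m, ‖b s‖ * 2 ^ (s : ℕ) :=
      Finset.sum_nonneg fun s _ => by positivity
    linarith
  have part1 : ∀ F : 𝓕, ∃ G : 𝓕, ‖G‖ ≤ M * ‖F‖ ∧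
      (∀ i : ℕ, i < k → taylorCoeff A z i G = 0) ∧
      (∀ i : ℕ, k ≤ i → i < m → taylorCoeff A z i G = taylorCoeff A z (i - k) F) := by
    intro F
    choose Gs hGs1 hGs2 using key F
    refine ⟨∑ s : Fin m, b s • Gs (s : ℕ), ?_, ?_⟩
    · calc ‖∑ s : Fin m, b s • Gs (s : ℕ)‖ ≤ ∑ s : Fin m, ‖b s • Gs (s : ℕ)‖ :=
            norm_sum_le _ _
        _ ≤ ∑ s : Fin m, ‖b s‖ * (2 ^ (s : ℕ) * ‖F‖) := by
            apply Finset.sum_le_sum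
            intro s _
            rw [norm_smul]
            exact mul_le_mul_of_nonneg_left (hGs2 (s : ℕ)) (norm_nonneg _)
        _ = (∑ s : Fin m, ‖b s‖ * 2 ^ (s : ℕ)) * ‖F‖ := by
            rw [Finset.sum_mul]
            exact Finset.sum_congr rfl fun s _ => by ring
        _ ≤ M * ‖F‖ := by
            apply mul_le_mul_of_nonneg_right _ (norm_nonneg F)
            rw [hM]; linarith
    have hGf : ∀ w ∈ U, A.toFun (∑ s : Fin m, b s • Gs (s : ℕ)) w = h w • A.toFun F w := by
      intro w hw
      have e : A.toFun (∑ s : Fin m, b s • Gs (s : ℕ)) w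
          = ∑ s : Fin m, b s • A.toFun (Gs (s : ℕ)) w := by
        simp [map_sum, map_smul]
      rw [e, hh]
      simp only
      rw [Finset.sum_smul]
      apply Finset.sum_congr rfl
      intro s _
      rw [hGs1 (s : ℕ) w hw, smul_smul]
    have hGc2 : ∀ i : ℕ, i < m → taylorCoeff A z i (∑ s : Fin m, b s • Gs (s : ℕ))
        = if k ≤ i then taylorCoeff A z (i - k) F else 0 := by
      intro i hi
      have e : taylorCoeff A z i (∑ s : Fin m, b s • Gs (s : ℕ))
          = LeftShiftAux.tc (fun x => h x • A.toFun F x) z i := by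
        unfold taylorCoeff LeftShiftAux.tc
        congr 1
        exact Set.EqOn.iteratedDeriv_of_isOpen (fun w hw => hGf w hw) hU i hz
      rw [e, LeftShiftAux.tc_smul hU hha (A.analyticOn F) hz i]
      have e3 : ∀ j ∈ Finset.range (i + 1),
          LeftShiftAux.tc h z j • LeftShiftAux.tc (A.toFun F) z (i - j)
          = if j = k then LeftShiftAux.tc (A.toFun F) z (i - j) else 0 := by
        intro j hj
        rw [hcoef j (lt_of_le_of_lt (Nat.lt_succ_iff.mp (Finset.mem_range.mp hj)) hi)]
        split <;> simp
      rw [Finset.sum_congr rfl e3,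
        Finset.sum_ite_eq' (Finset.range (i + 1)) k
          (fun j => LeftShiftAux.tc (A.toFun F) z (i - j))]
      simp only [Finset.mem_range, Nat.lt_succ_iff]
      rfl
    constructor
    · intro i hik
      have him : i < m := by omega
      rw [hGc2 i him, if_neg (by omega)]
    · intro i h1 h2
      rw [hGc2 i h2, if_pos h1]
  refine ⟨M, part1, ?_⟩
  intro x hx
  obtain ⟨F0, hF0⟩ := hx
  have hmatch : ∀ F : 𝓕, (∀ i : Fin n, taylorCoeff A z i F = x i) →
      ∃ G : 𝓕, (∀ i : Fin m, taylorCoeff A z i G = leftShift W n m x i) ∧ ‖G‖ ≤ M * ‖F‖ := by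
    intro F hF
    obtain ⟨G, hGn, hG0, hGs⟩ := part1 F
    refine ⟨G, ?_, hGn⟩
    intro i
    by_cases hik : k ≤ (i : ℕ)
    · have h2 : (i : ℕ) - k < n := by have := i.isLt; omega
      rw [hGs (i : ℕ) hik i.isLt, leftShift, dif_pos ⟨hik, h2⟩]
      exact hF ⟨(i : ℕ) - k, h2⟩
    · rw [hG0 (i : ℕ) (by omega), leftShift, dif_neg (by tauto)]
  constructor
  · obtain ⟨G, hG, _⟩ := hmatch F0 hF0
    exact ⟨G, hG⟩
  · have hbdd : BddBelow {c : ℝ | ∃ F : 𝓕,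
        (∀ i : Fin m, taylorCoeff A z i F = leftShift W n m x i) ∧ ‖F‖ = c} := by
      refine ⟨0, ?_⟩
      rintro c ⟨F, -, rfl⟩
      exact norm_nonneg F
    have hne : {c : ℝ | ∃ F : 𝓕, (∀ i : Fin n, taylorCoeff A z i F = x i) ∧ ‖F‖ = c}.Nonempty :=
      ⟨‖F0‖, F0, hF0, rfl⟩
    have hstep : ∀ c ∈ {c : ℝ | ∃ F : 𝓕, (∀ i : Fin n, taylorCoeff A z i F = x i) ∧ ‖F‖ = c},
        Znorm A z m (leftShift W n m x) / M ≤ c := by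
      rintro c ⟨F, hF, rfl⟩
      obtain ⟨G, hG, hGn⟩ := hmatch F hF
      have h1 : Znorm A z m (leftShift W n m x) ≤ M * ‖F‖ :=
        le_trans (csInf_le hbdd ⟨G, hG, rfl⟩) hGn
      rw [div_le_iff₀ hM0, mul_comm]
      exact h1
    have hfin := le_csInf hne hstep
    have : Znorm A z m (leftShift W n m x) ≤ Znorm A z n x * M := by
      rw [← div_le_iff₀ hM0]
      exact hfin
    rw [mul_comm]
    exact this

end
end

section
/- Let 𝓕 be an admissible space of analytic functions from U to W with base point z ∈ U, let φ : U → 𝔻 be a conformal equivalence with φ(z) = 0, and let k ≥ 1. If x ∈ W is such that (x,0,…,0) ∈ Z^(k+1) (the tuple with first entry x followed by k zeros), then x ∈ Z^(1), and moreover ‖x‖_{Z^(1)} ≤ |φ′(z)|^k · ‖(x,0,…,0)‖_{Z^(k+1)}. -/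
open Metric Filter

open scoped Topology

noncomputable section

variable {U : Set ℂ} {W : Type*} [NormedAddCommGroup W] [NormedSpace ℂ W] [CompleteSpace W]
  {𝓕 : Type*} [NormedAddCommGroup 𝓕] [NormedSpace ℂ 𝓕] [CompleteSpace 𝓕]

open scoped Topology in
/-- Taylor coefficients of a function are the coefficients of its power series. -/
lemma coeffA {f : ℂ → W} {p : FormalMultilinearSeries ℂ ℂ W} {z : ℂ}
    (hp : HasFPowerSeriesAt f p z) (n : ℕ) :
    ((n.factorial : ℂ))⁻¹ • iteratedDeriv n f z = p.coeff n := by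
  obtain ⟨r, hr⟩ := hp
  have h := hr.factorial_smul (1 : ℂ) n
  rw [iteratedDeriv, ← h, FormalMultilinearSeries.coeff,
    ← Nat.cast_smul_eq_nsmul ℂ, smul_smul,
    inv_mul_cancel₀ (by exact_mod_cast n.factorial_ne_zero), one_smul]
  rfl

lemma analyticAt_dslope_self {f : ℂ → W} {z : ℂ} (hf : AnalyticAt ℂ f z) :
    AnalyticAt ℂ (dslope f z) z := by
  obtain ⟨p, hp⟩ := hf
  exact ⟨_, hp.has_fpower_series_dslope_fslope⟩

lemma coeffShift {f : ℂ → W} {z : ℂ} (hf : AnalyticAt ℂ f z) (n : ℕ) :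
    (((n + 1).factorial : ℂ))⁻¹ • iteratedDeriv (n + 1) f z =
      ((n.factorial : ℂ))⁻¹ • iteratedDeriv n (dslope f z) z := by
  obtain ⟨p, hp⟩ := hf
  rw [coeffA hp, coeffA hp.has_fpower_series_dslope_fslope,
    FormalMultilinearSeries.coeff_fslope]

lemma dslope_eq_of_ne {f : ℂ → W} {z w : ℂ} (hw : w ≠ z) :
    dslope f z w = (w - z)⁻¹ • (f w - f z) := by
  have hwz : w - z ≠ 0 := sub_ne_zero.2 hw
  have h := sub_smul_dslope f z w
  calc dslope f z w = (w - z)⁻¹ • ((w - z) • dslope f z w) := by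
        rw [smul_smul, inv_mul_cancel₀ hwz, one_smul]
    _ = (w - z)⁻¹ • (f w - f z) := by rw [h]

lemma analyticAt_dslope_of_ne {f : ℂ → W} {z w : ℂ} (hw : w ≠ z)
    (hf : AnalyticAt ℂ f w) : AnalyticAt ℂ (dslope f z) w := by
  have h1 : AnalyticAt ℂ (fun u => (u - z)⁻¹ • (f u - f z)) w :=
    (((analyticAt_id).sub analyticAt_const).inv (sub_ne_zero.2 hw)).smul
      (hf.sub analyticAt_const)
  refine h1.congr ?_
  filter_upwards [isOpen_compl_singleton.mem_nhds (by simpa using hw)] with u hu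
  exact (dslope_eq_of_ne (by simpa using hu)).symm

/-- If `h = (w - z) ^ n • s w` near `z` with `s` analytic at `z`, then the `n`-th Taylor
coefficient of `h` at `z` is `s z`. -/
lemma coeffB {z : ℂ} : ∀ {n : ℕ} {h s : ℂ → W}, AnalyticAt ℂ s z →
    (∀ᶠ w in 𝓝 z, h w = (w - z) ^ n • s w) →
    ((n.factorial : ℂ))⁻¹ • iteratedDeriv n h z = s z := by
  intro n
  induction n with
  | zero =>
    intro h s _ hev
    have := hev.self_of_nhds
    simpa [iteratedDeriv_zero] using this
  | succ n ih =>
    intro h s hs hev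
    have hR : AnalyticAt ℂ (fun w => (w - z) ^ (n + 1) • s w) z :=
      (((analyticAt_id).sub analyticAt_const).pow _).smul hs
    have hh : AnalyticAt ℂ h z := hR.congr (hev.mono fun w hw => hw.symm)
    have hhz : h z = 0 := by simpa using hev.self_of_nhds
    have hd : AnalyticAt ℂ (dslope h z) z := analyticAt_dslope_self hh
    have hR' : AnalyticAt ℂ (fun w => (w - z) ^ n • s w) z :=
      (((analyticAt_id).sub analyticAt_const).pow _).smul hs
    have hpun : ∀ᶠ w in 𝓝[≠] z, dslope h z w = (w - z) ^ n • s w := by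
      filter_upwards [eventually_nhdsWithin_of_eventually_nhds hev,
        self_mem_nhdsWithin] with w hw hw'
      have hwz : w - z ≠ 0 := sub_ne_zero.2 hw'
      rw [dslope_eq_of_ne hw', hhz, sub_zero, hw, smul_smul, pow_succ',
        ← mul_assoc, inv_mul_cancel₀ hwz, one_mul]
    have hev' : dslope h z =ᶠ[𝓝 z] fun w => (w - z) ^ n • s w :=
      (hd.frequently_eq_iff_eventually_eq hR').mp hpun.frequently
    rw [coeffShift hh n]
    exact ih hs hev'

/-- Division by a conformal equivalence vanishing at `z`. -/
lemma div_lemma {z : ℂ} {φ : ℂ → ℂ} (hU : IsOpen U) (hz : z ∈ U)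
    (hφ : AnalyticOnNhd ℂ φ U) (hφz : φ z = 0)
    (hφne : ∀ w ∈ U, w ≠ z → φ w ≠ 0) (hc : deriv φ z ≠ 0)
    {h : ℂ → W} (hh : AnalyticOnNhd ℂ h U) (hhz : h z = 0) :
    ∃ g : ℂ → W, AnalyticOnNhd ℂ g U ∧ ∀ w ∈ U, h w = φ w • g w := by
  set q : ℂ → ℂ := dslope φ z with hq
  have hq_an : ∀ w ∈ U, AnalyticAt ℂ q w := by
    intro w hw
    rcases eq_or_ne w z with rfl | hwz
    · exact analyticAt_dslope_self (hφ w hw)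
    · exact analyticAt_dslope_of_ne hwz (hφ w hw)
  have hq_ne : ∀ w ∈ U, q w ≠ 0 := by
    intro w hw
    rcases eq_or_ne w z with rfl | hwz
    · rw [hq, dslope_same]; exact hc
    · rw [hq, dslope_eq_of_ne hwz, hφz, sub_zero]
      exact mul_ne_zero (inv_ne_zero (sub_ne_zero.2 hwz)) (hφne w hw hwz)
  have hφ_eq : ∀ w, φ w = (w - z) * q w := by
    intro w
    have := sub_smul_dslope φ z w
    rw [hφz, sub_zero] at this
    simpa [hq, smul_eq_mul, mul_comm] using this.symm
  have hp_an : ∀ w ∈ U, AnalyticAt ℂ (dslope h z) w := by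
    intro w hw
    rcases eq_or_ne w z with rfl | hwz
    · exact analyticAt_dslope_self (hh w hw)
    · exact analyticAt_dslope_of_ne hwz (hh w hw)
  refine ⟨fun w => (q w)⁻¹ • dslope h z w, ?_, ?_⟩
  · intro w hw
    exact ((hq_an w hw).inv (hq_ne w hw)).smul (hp_an w hw)
  · intro w hw
    have h1 := sub_smul_dslope h z w
    rw [hhz, sub_zero] at h1
    rw [hφ_eq w, smul_smul, mul_assoc, mul_inv_cancel₀ (hq_ne w hw), mul_one, h1]

/-- The key construction: from `F` realizing the corner tuple, produce `H ∈ 𝓕` realizing `x`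
in `Z^(1)` with controlled norm. -/
lemma AdmissibleSpace.corner_aux (A : AdmissibleSpace U W 𝓕) (z : ℂ) (hz : z ∈ U)
    (φ : ℂ → ℂ) (hφ : IsConfEquiv U φ) (hz0 : φ z = 0) (k : ℕ) (x : W) (F : 𝓕)
    (hF : ∀ i : Fin (k + 1), taylorCoeff A z i F = if (i : ℕ) = k then x else 0) :
    ∃ H : 𝓕, taylorCoeff A z 0 H = x ∧ ‖H‖ = ‖deriv φ z‖ ^ k * ‖F‖ := by
  obtain ⟨ψi, hφa, hφm, hψa, hψm, hli, hri⟩ := hφ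
  have hU : IsOpen U := A.isOpen_U
  -- the derivative of `φ` at `z` is nonzero
  have hc : deriv φ z ≠ 0 := by
    have hψ0 : AnalyticAt ℂ ψi 0 := hψa 0 (mem_ball_self one_pos)
    have h1 : (ψi ∘ φ) =ᶠ[𝓝 z] id := by
      filter_upwards [hU.mem_nhds hz] with w hw
      exact hli w hw
    have h2 : deriv (ψi ∘ φ) z = 1 := by
      rw [h1.deriv_eq]; exact deriv_id z
    have h3 : deriv (ψi ∘ φ) z = deriv ψi (φ z) * deriv φ z :=
      deriv_comp (x := z) (by rw [hz0]; exact hψ0.differentiableAt : DifferentiableAt ℂ ψi (φ z))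
        ((hφa z hz).differentiableAt)
    intro hder
    rw [h3, hder, mul_zero] at h2
    exact zero_ne_one h2
  -- `φ` is nonzero on `U \ {z}`
  have hφne : ∀ w ∈ U, w ≠ z → φ w ≠ 0 := by
    intro w hw hwz hw0
    apply hwz
    have : ψi (φ w) = w := hli w hw
    rw [hw0] at this
    rw [← this, ← hz0, hli z hz]
  set q : ℂ → ℂ := dslope φ z with hq
  have hq_an : AnalyticAt ℂ q z := analyticAt_dslope_self (hφa z hz)
  have hqz : q z = deriv φ z := dslope_same φ z
  have hφ_eq : ∀ w, φ w = (w - z) * q w := by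
    intro w
    have := sub_smul_dslope φ z w
    rw [hz0, sub_zero] at this
    simpa [hq, smul_eq_mul, mul_comm] using this.symm
  -- the value of the `j`-th Taylor coefficient of `F` when `F = φ ^ j • G` on `U`
  have coeff_calc : ∀ (j : ℕ) (G : 𝓕), (∀ w ∈ U, A.toFun F w = φ w ^ j • A.toFun G w) →
      ((j.factorial : ℂ))⁻¹ • iteratedDeriv j (A.toFun F) z =
        (deriv φ z) ^ j • A.toFun G z := by
    intro j G hG
    have hs : AnalyticAt ℂ (fun w => q w ^ j • A.toFun G w) z :=
      (hq_an.pow j).smul (A.analyticOn G z hz)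
    have hev : ∀ᶠ w in 𝓝 z, A.toFun F w = (w - z) ^ j • (q w ^ j • A.toFun G w) := by
      filter_upwards [hU.mem_nhds hz] with w hw
      rw [hG w hw, hφ_eq w, mul_pow, mul_smul]
    have := coeffB hs hev
    rw [this, hqz]
  -- the induction: divide `F` by `φ`, `k` times
  have main : ∀ j : ℕ, j ≤ k → ∃ G : 𝓕, ‖G‖ = ‖F‖ ∧
      ∀ w ∈ U, A.toFun F w = φ w ^ j • A.toFun G w := by
    intro j
    induction j with
    | zero => intro _; exact ⟨F, rfl, fun w _ => by simp⟩
    | succ j ih =>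
      intro hj
      obtain ⟨G, hGn, hGf⟩ := ih (Nat.le_of_succ_le hj)
      -- `G` vanishes at `z`
      have hjk : j < k := hj
      have hFj : taylorCoeff A z j F = 0 := by
        have := hF ⟨j, by omega⟩
        simpa [Nat.ne_of_lt hjk] using this
      have hGz : A.toFun G z = 0 := by
        have h1 := coeff_calc j G hGf
        rw [taylorCoeff] at hFj
        rw [hFj] at h1
        have := h1.symm
        rcases smul_eq_zero.mp this with h | h
        · exact absurd h (pow_ne_zero j hc)
        · exact h
      obtain ⟨g, hg_an, hg_eq⟩ := div_lemma hU hz hφa hz0 hφne hc (A.analyticOn G) hGz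
      obtain ⟨G', hG'eq, hG'n⟩ := A.mem_of_smul φ ⟨ψi, hφa, hφm, hψa, hψm, hli, hri⟩ G g hg_an hg_eq
      refine ⟨G', by rw [hG'n, hGn], fun w hw => ?_⟩
      rw [hGf w hw, hg_eq w hw, hG'eq w hw, pow_succ, mul_smul]
  obtain ⟨G, hGn, hGf⟩ := main k le_rfl
  have hFk : taylorCoeff A z k F = x := by
    have := hF ⟨k, by omega⟩
    simpa using this
  have hxG : x = (deriv φ z) ^ k • A.toFun G z := by
    have h1 := coeff_calc k G hGf
    rw [taylorCoeff] at hFk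
    rw [hFk] at h1
    exact h1
  refine ⟨(deriv φ z) ^ k • G, ?_, ?_⟩
  · rw [taylorCoeff]
    simp only [Nat.factorial_zero, Nat.cast_one, inv_one, one_smul, iteratedDeriv_zero]
    rw [map_smul]
    simpa using hxG.symm
  · rw [norm_smul, norm_pow, hGn]

/-- **Key lemma: `(x,0,…,0) ∈ Z^(k+1)` implies `x ∈ Z^(1)`.**
Let `𝓕` be an admissible space of analytic functions with base point `z ∈ U`, let
`φ : U → 𝔻` be a conformal equivalence with `φ z = 0` and `k ≥ 1`. If the tuple whose
`k`-th Taylor position is `x` and whose lower positions vanish belongs to `Z^(k+1)`,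
then `x ∈ Z^(1)` and `‖x‖_{Z^(1)} ≤ |φ′(z)|^k ‖(x,0,…,0)‖_{Z^(k+1)}`. -/
theorem AdmissibleSpace.mem_Z1_of_corner (A : AdmissibleSpace U W 𝓕) (z : ℂ) (hz : z ∈ U)
    (φ : ℂ → ℂ) (hφ : IsConfEquiv U φ) (hz0 : φ z = 0) (k : ℕ) (hk : 1 ≤ k) (x : W)
    (hx : (fun i : Fin (k + 1) => if (i : ℕ) = k then x else 0) ∈ Zset A z (k + 1)) :
    ((fun _ : Fin 1 => x) ∈ Zset A z 1) ∧
      Znorm A z 1 (fun _ : Fin 1 => x) ≤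
        ‖deriv φ z‖ ^ k *
          Znorm A z (k + 1) (fun i : Fin (k + 1) => if (i : ℕ) = k then x else 0) := by
  have hc : (0 : ℝ) < ‖deriv φ z‖ ^ k := by
    obtain ⟨ψi, hφa, hφm, hψa, hψm, hli, hri⟩ := hφ
    have hU : IsOpen U := A.isOpen_U
    have hψ0 : AnalyticAt ℂ ψi 0 := hψa 0 (mem_ball_self one_pos)
    have h1 : (ψi ∘ φ) =ᶠ[𝓝 z] id := by
      filter_upwards [hU.mem_nhds hz] with w hw
      exact hli w hw
    have h2 : deriv (ψi ∘ φ) z = 1 := by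
      rw [h1.deriv_eq]; exact deriv_id z
    have h3 : deriv (ψi ∘ φ) z = deriv ψi (φ z) * deriv φ z :=
      deriv_comp (x := z) (by rw [hz0]; exact hψ0.differentiableAt : DifferentiableAt ℂ ψi (φ z))
        ((hφa z hz).differentiableAt)
    have hder : deriv φ z ≠ 0 := by
      intro hder
      rw [h3, hder, mul_zero] at h2
      exact zero_ne_one h2
    exact pow_pos (norm_pos_iff.mpr hder) k
  obtain ⟨F₀, hF₀⟩ := hx
  have key : ∀ F : 𝓕, (∀ i : Fin (k + 1),
      taylorCoeff A z i F = if (i : ℕ) = k then x else 0) →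
      Znorm A z 1 (fun _ : Fin 1 => x) ≤ ‖deriv φ z‖ ^ k * ‖F‖ := by
    intro F hF
    obtain ⟨H, hH1, hH2⟩ := A.corner_aux z hz φ hφ hz0 k x F hF
    have hmem : ‖deriv φ z‖ ^ k * ‖F‖ ∈
        {c : ℝ | ∃ G : 𝓕, (∀ i : Fin 1, taylorCoeff A z i G = (fun _ : Fin 1 => x) i) ∧
          ‖G‖ = c} := by
      refine ⟨H, fun i => ?_, hH2⟩
      have hi : (i : ℕ) = 0 := by omega
      rw [hi, hH1]
    have hbdd : BddBelow {c : ℝ | ∃ G : 𝓕,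
        (∀ i : Fin 1, taylorCoeff A z i G = (fun _ : Fin 1 => x) i) ∧ ‖G‖ = c} := by
      refine ⟨0, fun c hc' => ?_⟩
      obtain ⟨G, _, hG⟩ := hc'
      rw [← hG]; exact norm_nonneg G
    exact csInf_le hbdd hmem
  constructor
  · obtain ⟨H, hH1, _⟩ := A.corner_aux z hz φ hφ hz0 k x F₀ hF₀
    refine ⟨H, fun i => ?_⟩
    have hi : (i : ℕ) = 0 := by omega
    rw [hi, hH1]
  · rw [Znorm]
    have hne : {c : ℝ | ∃ F : 𝓕, (∀ i : Fin (k + 1),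
        taylorCoeff A z i F = if (i : ℕ) = k then x else 0) ∧ ‖F‖ = c}.Nonempty :=
      ⟨‖F₀‖, F₀, hF₀, rfl⟩
    have hle : Znorm A z 1 (fun _ : Fin 1 => x) / ‖deriv φ z‖ ^ k ≤
        sInf {c : ℝ | ∃ F : 𝓕, (∀ i : Fin (k + 1),
          taylorCoeff A z i F = if (i : ℕ) = k then x else 0) ∧ ‖F‖ = c} := by
      apply le_csInf hne
      rintro c ⟨F, hF, rfl⟩
      rw [div_le_iff₀ hc]
      calc Znorm A z 1 (fun _ : Fin 1 => x) ≤ ‖deriv φ z‖ ^ k * ‖F‖ := key F hF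
        _ = ‖F‖ * ‖deriv φ z‖ ^ k := mul_comm _ _
    rw [div_le_iff₀ hc] at hle
    calc Znorm A z 1 (fun _ : Fin 1 => x) ≤ _ := hle
      _ = _ := mul_comm _ _

end
end

section
/- Let 𝓕 be an admissible space of analytic functions from U to W with base point z ∈ U. Suppose there is no bounded linear operator P : Z^(2) → Z^(1) with P ∘ ι_{1,2} = id_{Z^(1)} (i.e., the exact sequence 0 → Z^(1) → Z^(2) → Z^(1) → 0 is nontrivial). Then for all integers n, k ≥ 1 there is no bounded linear operator P : Z^(n+k) → Z^(n) with P ∘ ι_{n,n+k} = id_{Z^(n)} (i.e., the exact sequence 0 → Z^(n) → Z^(n+k) → Z^(k) → 0 is nontrivial). -/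
open Metric Filter

noncomputable section

variable {U : Set ℂ} {W : Type*} [NormedAddCommGroup W] [NormedSpace ℂ W] [CompleteSpace W]
  {𝓕 : Type*} [NormedAddCommGroup 𝓕] [NormedSpace ℂ 𝓕] [CompleteSpace 𝓕]

/-- `P` is a bounded linear projection (retraction) witnessing that the exact sequence
`0 → Z^(n) → Z^(n+k) → Z^(k) → 0` is trivial: `P` is a bounded linear operator
`Z^(n+k) → Z^(n)` with `P ∘ ι_{n,n+k} = id` on `Z^(n)`. -/
def AdmissibleSpace.IsSplittingProjection (A : AdmissibleSpace U W 𝓕) (z : ℂ) (n k : ℕ)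
    (P : (Fin (n + k) → W) → Fin n → W) : Prop :=
  (∀ x ∈ Zset A z (n + k), P x ∈ Zset A z n) ∧
  (∀ x ∈ Zset A z (n + k), ∀ y ∈ Zset A z (n + k), P (x + y) = P x + P y) ∧
  (∀ (c : ℂ), ∀ x ∈ Zset A z (n + k), P (c • x) = c • P x) ∧
  (∃ C : ℝ, ∀ x ∈ Zset A z (n + k), Znorm A z n (P x) ≤ C * Znorm A z (n + k) x) ∧
  (∀ x ∈ Zset A z n, P (leftShift W n (n + k) x) = x)

/-- Taylor coefficient of a function at `z`. -/
def tc (z : ℂ) (i : ℕ) (f : ℂ → W) : W :=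
  ((Nat.factorial i : ℂ))⁻¹ • iteratedDeriv i f z

lemma tc_congr {z : ℂ} {i : ℕ} {f g : ℂ → W} (h : f =ᶠ[nhds z] g) :
    tc z i f = tc z i g := by
  unfold tc; rw [h.iteratedDeriv_eq]

lemma tc_coeff {z : ℂ} {f : ℂ → W} {p : FormalMultilinearSeries ℂ ℂ W}
    (hf : HasFPowerSeriesAt f p z) (i : ℕ) : tc z i f = p.coeff i := by
  obtain ⟨r, hr⟩ := hf
  have h1 := hr.factorial_smul (1 : ℂ) i
  unfold tc
  rw [iteratedDeriv_eq_iteratedFDeriv, ← h1, ← Nat.cast_smul_eq_nsmul ℂ,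
    inv_smul_smul₀ (by exact_mod_cast Nat.factorial_ne_zero i)]
  rfl

lemma tc_zero_fun (z : ℂ) (i : ℕ) : tc z i (fun _ => (0 : W)) = 0 := by
  unfold tc
  have : ∀ (j : ℕ) (x : ℂ), iteratedDeriv j (fun _ => (0 : W)) x = 0 := by
    intro j
    induction j with
    | zero => intro x; simp [iteratedDeriv_zero]
    | succ n ih =>
      intro x
      rw [iteratedDeriv_succ']
      have : deriv (fun _ : ℂ => (0 : W)) = fun _ : ℂ => (0 : W) := by
        funext y; exact deriv_const y 0
      rw [this]; exact ih x
  rw [this]; simp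

lemma tc_add {z : ℂ} {f g : ℂ → W} (hf : AnalyticAt ℂ f z) (hg : AnalyticAt ℂ g z) (i : ℕ) :
    tc z i (fun w => f w + g w) = tc z i f + tc z i g := by
  obtain ⟨p, hp⟩ := hf
  obtain ⟨q, hq⟩ := hg
  have := tc_coeff (hp.add hq) i
  rw [tc_coeff hp, tc_coeff hq]
  rw [show (fun w => f w + g w) = f + g from rfl, this]
  rfl

lemma tc_smul {z : ℂ} {f : ℂ → W} (hf : AnalyticAt ℂ f z) (c : ℂ) (i : ℕ) :
    tc z i (fun w => c • f w) = c • tc z i f := by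
  obtain ⟨p, hp⟩ := hf
  obtain ⟨r, hr⟩ := hp
  have h2 : HasFPowerSeriesAt (fun w => c • f w)
      ((c • (ContinuousLinearMap.id ℂ W)).compFormalMultilinearSeries p) z :=
    ⟨r, (c • (ContinuousLinearMap.id ℂ W)).comp_hasFPowerSeriesOnBall hr⟩
  rw [tc_coeff h2, tc_coeff ⟨r, hr⟩]
  rfl

lemma tc_neg {z : ℂ} {f : ℂ → W} (hf : AnalyticAt ℂ f z) (i : ℕ) :
    tc z i (fun w => -(f w)) = -(tc z i f) := by
  have := tc_smul hf (-1 : ℂ) i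
  simpa using this

lemma tc_shift {z : ℂ} {g : ℂ → W} (hg : AnalyticAt ℂ g z) :
    tc z 0 (fun w => (w - z) • g w) = 0 ∧
      ∀ i, tc z (i + 1) (fun w => (w - z) • g w) = tc z i g := by
  set f : ℂ → W := fun w => (w - z) • g w with hfdef
  have hfa : AnalyticAt ℂ f z :=
    ((analyticAt_id.sub analyticAt_const)).smul hg
  obtain ⟨p, hp⟩ := hfa
  have hf0 : f z = 0 := by simp [hfdef]
  have hds : dslope f z = g := by
    funext w
    by_cases hw : w = z
    · rw [hw, dslope_same]
      have h1 : HasDerivAt (fun w => w - z) 1 z := (hasDerivAt_id z).sub_const z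
      have h2 : HasDerivAt g (deriv g z) z := hg.differentiableAt.hasDerivAt
      have h3 : HasDerivAt f ((1 : ℂ) • g z + (z - z) • deriv g z) z := by
        have h4 := h1.smul h2
        rw [show ((fun w => w - z) • g) = f from rfl] at h4
        simpa using h4
      rw [h3.deriv]
      simp
    · rw [dslope_of_ne f hw, slope_def_module, hf0, sub_zero, hfdef]
      rw [smul_smul, inv_mul_cancel₀ (sub_ne_zero.mpr hw), one_smul]
  have hq : HasFPowerSeriesAt g p.fslope z := by
    rw [← hds]; exact hp.has_fpower_series_dslope_fslope
  constructor
  · rw [tc_coeff hp]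
    have h0 := hp.coeff_zero (fun _ => 1)
    rw [hf0] at h0
    exact h0
  · intro i
    rw [tc_coeff hp, tc_coeff hq, FormalMultilinearSeries.coeff_fslope]

lemma tc_pow_shift {z : ℂ} {g : ℂ → W} (hg : AnalyticAt ℂ g z) (j : ℕ) :
    ∀ i, tc z i (fun w => (w - z) ^ j • g w) =
      if j ≤ i then tc z (i - j) g else 0 := by
  induction j generalizing g with
  | zero => intro i; simp [hg]
  | succ j ih =>
    intro i
    have hgj : AnalyticAt ℂ (fun w => (w - z) ^ j • g w) z :=
      ((analyticAt_id.sub analyticAt_const).pow j).smul hg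
    have hfe : (fun w => (w - z) ^ (j + 1) • g w)
        = fun w => (w - z) • ((w - z) ^ j • g w) := by
      funext w; rw [smul_smul, ← pow_succ']
    rw [hfe]
    cases i with
    | zero =>
      rw [(tc_shift hgj).1]
      simp
    | succ i =>
      rw [(tc_shift hgj).2 i, ih hg i]
      by_cases h : j ≤ i
      · rw [if_pos h, if_pos (by omega)]
        congr 1; omega
      · rw [if_neg h, if_neg (by omega)]

/-- Vanishing of low coefficients of `φ^m • g` when `φ z = 0`. -/
lemma tc_kill {z : ℂ} {φ : ℂ → ℂ} (hφ : AnalyticAt ℂ φ z) (hφ0 : φ z = 0) {g : ℂ → W}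
    (hg : AnalyticAt ℂ g z) (m i : ℕ) (him : i < m) :
    tc z i (fun w => φ w ^ m • g w) = 0 := by
  have hu : AnalyticAt ℂ (dslope φ z) z := by
    obtain ⟨p, hp⟩ := hφ
    exact ⟨p.fslope, hp.has_fpower_series_dslope_fslope⟩
  have hfac : ∀ w, φ w = (w - z) * dslope φ z w := by
    intro w
    by_cases hw : w = z
    · rw [hw]; simp [hφ0]
    · rw [dslope_of_ne φ hw, slope_def_field]
      field_simp [sub_ne_zero.mpr hw, hφ0]
      simp [hφ0]
  have heq : (fun w => φ w ^ m • g w)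
      = fun w => (w - z) ^ m • ((dslope φ z w ^ m) • g w) := by
    funext w
    rw [hfac w, mul_pow, mul_smul]
  rw [heq, tc_pow_shift (g := fun w => dslope φ z w ^ m • g w) ((hu.pow m).smul hg) m i, if_neg (by omega)]

lemma analyticOnNhd_dslope {U : Set ℂ} {z : ℂ} (hzU : z ∈ U) {f : ℂ → W}
    (hf : AnalyticOnNhd ℂ f U) : AnalyticOnNhd ℂ (dslope f z) U := by
  intro w hw
  by_cases hwz : w = z
  · subst hwz
    obtain ⟨p, hp⟩ := hf w hw
    exact ⟨p.fslope, hp.has_fpower_series_dslope_fslope⟩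
  · have h1 : AnalyticAt ℂ (fun w' => (w' - z)⁻¹ • (f w' - f z)) w := by
      refine AnalyticAt.smul ?_ ((hf w hw).sub analyticAt_const)
      exact (analyticAt_id.sub analyticAt_const).inv (sub_ne_zero.mpr hwz)
    refine h1.congr ?_
    have hmem : {w' : ℂ | w' ≠ z} ∈ nhds w := by
      exact IsOpen.mem_nhds (isOpen_ne) hwz
    filter_upwards [hmem] with w' hw'
    rw [dslope_of_ne f hw', slope_def_module]

/-- Division of analytic decomposition: every scalar analytic function on `U` can be
written as a polynomial in `φ` plus `φ^m` times an analytic function, where `φ` vanishes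
(only) at `z` with nonvanishing `dslope`. -/
lemma decomp {U : Set ℂ} {z : ℂ} (hzU : z ∈ U) {φ : ℂ → ℂ}
    (hφ : AnalyticOnNhd ℂ φ U)
    (hu : ∀ w ∈ U, dslope φ z w ≠ 0) (hφ0 : φ z = 0) :
    ∀ (m : ℕ) (f : ℂ → ℂ), AnalyticOnNhd ℂ f U →
    ∃ (c : ℕ → ℂ) (g : ℂ → ℂ), AnalyticOnNhd ℂ g U ∧
      ∀ w ∈ U, f w = (∑ i ∈ Finset.range m, c i * φ w ^ i) + φ w ^ m * g w := by
  intro m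
  induction m with
  | zero =>
    intro f hf
    exact ⟨0, f, hf, fun w _ => by simp⟩
  | succ m ih =>
    intro f hf
    set f₁ : ℂ → ℂ := fun w => (dslope φ z w)⁻¹ * dslope f z w with hf₁def
    have hf₁ : AnalyticOnNhd ℂ f₁ U := by
      intro w hw
      exact AnalyticAt.mul (((analyticOnNhd_dslope hzU hφ) w hw).inv (hu w hw))
        ((analyticOnNhd_dslope hzU hf) w hw)
    have hkey : ∀ w ∈ U, f w = f z + φ w * f₁ w := by
      intro w hw
      have h1 : φ w = (w - z) * dslope φ z w := by
        by_cases hwz : w = z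
        · rw [hwz]; simp [hφ0]
        · rw [dslope_of_ne φ hwz, slope_def_field]
          field_simp [sub_ne_zero.mpr hwz, hφ0]
          simp [hφ0]
      have h2 : (w - z) • dslope f z w = f w - f z := sub_smul_dslope f z w
      rw [smul_eq_mul] at h2
      have h3 : φ w * f₁ w = f w - f z := by
        rw [hf₁def, h1]
        field_simp [hu w hw]
        linear_combination h2
      rw [h3]; ring
    obtain ⟨c, g, hg, hgeq⟩ := ih f₁ hf₁
    refine ⟨fun i => if i = 0 then f z else c (i - 1), g, hg, ?_⟩
    intro w hw
    rw [Finset.sum_range_succ']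
    have hs : ∀ x ∈ Finset.range m,
        (if x + 1 = 0 then f z else c (x + 1 - 1)) * φ w ^ (x + 1)
          = φ w * (c x * φ w ^ x) := by
      intro x _
      rw [if_neg (Nat.succ_ne_zero x)]
      simp only [Nat.add_sub_cancel]
      ring
    rw [Finset.sum_congr rfl hs]
    simp only [↓reduceIte, pow_zero, mul_one]
    rw [← Finset.mul_sum, hkey w hw, hgeq w hw]
    ring
/-- Möbius transformation of the unit disc. -/
def mob (a w : ℂ) : ℂ := (w - a) / (1 - (starRingEnd ℂ) a * w)

lemma mob_den_ne {a w : ℂ} (ha : ‖a‖ < 1) (hw : ‖w‖ < 1) :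
    1 - (starRingEnd ℂ) a * w ≠ 0 := by
  intro h
  have h1 : (1 : ℂ) = (starRingEnd ℂ) a * w := by linear_combination h
  have h2 : (1 : ℝ) = ‖(starRingEnd ℂ) a * w‖ := by
    rw [← h1]; simp
  rw [norm_mul, RCLike.norm_conj] at h2
  nlinarith [norm_nonneg a, norm_nonneg w]

lemma mob_normSq_identity (a w : ℂ) :
    Complex.normSq (1 - (starRingEnd ℂ) a * w) - Complex.normSq (w - a)
      = (1 - Complex.normSq a) * (1 - Complex.normSq w) := by
  simp only [Complex.normSq_apply, Complex.sub_re, Complex.sub_im, Complex.mul_re,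
    Complex.mul_im, Complex.one_re, Complex.one_im, Complex.conj_re, Complex.conj_im]
  ring

lemma mob_maps {a w : ℂ} (ha : ‖a‖ < 1) (hw : ‖w‖ < 1) : ‖mob a w‖ < 1 := by
  have hden := mob_den_ne ha hw
  have hsq : Complex.normSq (w - a) < Complex.normSq (1 - (starRingEnd ℂ) a * w) := by
    have h1 : Complex.normSq a < 1 := by
      rw [← Complex.sq_norm] at *
      nlinarith [norm_nonneg a, ha]
    have h2 : Complex.normSq w < 1 := by
      rw [← Complex.sq_norm] at *
      nlinarith [norm_nonneg w, hw]
    nlinarith [mob_normSq_identity a w]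
  rw [mob, norm_div]
  rw [div_lt_one (norm_pos_iff.mpr hden)]
  · rw [← Real.sqrt_sq (norm_nonneg (w - a)),
      ← Real.sqrt_sq (norm_nonneg (1 - (starRingEnd ℂ) a * w)), Complex.sq_norm,
      Complex.sq_norm]
    exact Real.sqrt_lt_sqrt (Complex.normSq_nonneg _) hsq

lemma mob_analyticAt {a w : ℂ} (ha : ‖a‖ < 1) (hw : ‖w‖ < 1) :
    AnalyticAt ℂ (mob a) w := by
  apply AnalyticAt.div
  · exact analyticAt_id.sub analyticAt_const
  · exact analyticAt_const.sub (analyticAt_const.mul analyticAt_id)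
  · exact mob_den_ne ha hw

lemma mob_inv {a w : ℂ} (ha : ‖a‖ < 1) (hw : ‖w‖ < 1) :
    mob (-a) (mob a w) = w := by
  have hD := mob_den_ne ha hw
  have haa : (1 : ℂ) - (starRingEnd ℂ) a * a ≠ 0 := mob_den_ne ha ha
  have hE : 1 - (starRingEnd ℂ) (-a) * mob a w
      = (1 - (starRingEnd ℂ) a * a) / (1 - (starRingEnd ℂ) a * w) := by
    rw [mob, map_neg]
    field_simp
    ring
  rw [mob, hE]
  rw [div_eq_iff (div_ne_zero haa hD), mob]
  rw [sub_neg_eq_add, div_add' _ _ _ hD, mul_div_assoc', div_left_inj' hD]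
  ring
/- ### Normalized conformal equivalence -/

lemma exists_normalized (A : AdmissibleSpace U W 𝓕) {z : ℂ} (hz : z ∈ U) :
    ∃ φ : ℂ → ℂ, IsConfEquiv U φ ∧ φ z = 0 ∧ AnalyticOnNhd ℂ φ U ∧
      (∀ w ∈ U, dslope φ z w ≠ 0) := by
  obtain ⟨ψ, ψi, hψa, hψm, hψia, hψim, hli, hri⟩ := A.conf
  set a := ψ z with ha_def
  have ha : ‖a‖ < 1 := by
    have := hψm hz
    rwa [mem_ball_zero_iff] at this
  have ha' : ‖-a‖ < 1 := by rwa [norm_neg]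
  set φ : ℂ → ℂ := fun w => mob a (ψ w) with hφ_def
  set φi : ℂ → ℂ := fun v => ψi (mob (-a) v) with hφi_def
  have hball : ∀ w ∈ U, ‖ψ w‖ < 1 := fun w hw => mem_ball_zero_iff.mp (hψm hw)
  have hφa : AnalyticOnNhd ℂ φ U := fun w hw =>
    (mob_analyticAt ha (hball w hw)).comp (hψa w hw)
  have hφm : Set.MapsTo φ U (ball (0 : ℂ) 1) := fun w hw =>
    mem_ball_zero_iff.mpr (mob_maps ha (hball w hw))
  have hmobm : ∀ v ∈ ball (0 : ℂ) 1, mob (-a) v ∈ ball (0 : ℂ) 1 := fun v hv =>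
    mem_ball_zero_iff.mpr (mob_maps ha' (mem_ball_zero_iff.mp hv))
  have hφia : AnalyticOnNhd ℂ φi (ball (0 : ℂ) 1) := fun v hv =>
    (hψia _ (hmobm v hv)).comp (mob_analyticAt ha' (mem_ball_zero_iff.mp hv))
  have hφim : Set.MapsTo φi (ball (0 : ℂ) 1) U := fun v hv => hψim (hmobm v hv)
  have hconf : IsConfEquiv U φ := by
    refine ⟨φi, hφa, hφm, hφia, hφim, ?_, ?_⟩
    · intro w hw
      show ψi (mob (-a) (mob a (ψ w))) = w
      rw [mob_inv ha (hball w hw)]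
      exact hli w hw
    · intro v hv
      show mob a (ψ (ψi (mob (-a) v))) = v
      rw [hri _ (hmobm v hv)]
      have := mob_inv ha' (mem_ball_zero_iff.mp hv)
      rwa [neg_neg] at this
  have hφz : φ z = 0 := by
    show mob a a = 0
    simp [mob]
  refine ⟨φ, hconf, hφz, hφa, ?_⟩
  obtain ⟨φi', hφa', hφm', hφia', hφim', hli', hri'⟩ := hconf
  have hinj : ∀ w ∈ U, φ w = 0 → w = z := by
    intro w hw h0
    have h1 : φi' (φ w) = w := hli' w hw
    have h2 : φi' (φ z) = z := hli' z hz
    rw [h0] at h1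
    rw [hφz] at h2
    rw [← h1, h2]
  intro w hw
  by_cases hwz : w = z
  · subst hwz
    rw [dslope_same]
    have h0b : (0 : ℂ) ∈ ball (0 : ℂ) 1 := by simp
    have hφd : DifferentiableAt ℂ φ w := (hφa w hw).differentiableAt
    have hφid : DifferentiableAt ℂ φi' 0 := (hφia' 0 h0b).differentiableAt
    have hcomp : deriv (φi' ∘ φ) w = deriv φi' (φ w) * deriv φ w := by
      rw [deriv_comp (x := w) (by rwa [hφz]) hφd]
    have hev : (φi' ∘ φ) =ᶠ[nhds w] (id : ℂ → ℂ) := by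
      filter_upwards [A.isOpen_U.mem_nhds hw] with w' hw'
      exact hli' w' hw'
    have hone : deriv (φi' ∘ φ) w = 1 := by rw [hev.deriv_eq]; exact deriv_id w
    rw [hone] at hcomp
    exact right_ne_zero_of_mul (by rw [← hcomp]; exact one_ne_zero)
  · rw [dslope_of_ne φ hwz, slope_def_field, hφz, sub_zero]
    exact div_ne_zero (fun h => hwz (hinj w hw h)) (sub_ne_zero.mpr hwz)

/- ### Multiplication machinery -/

variable {A : AdmissibleSpace U W 𝓕} {z : ℂ} {φ : ℂ → ℂ}

def mulPow (A : AdmissibleSpace U W 𝓕) (hφ : IsConfEquiv U φ) : ℕ → 𝓕 → 𝓕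
  | 0, F => F
  | (j+1), F => Classical.choose (A.smul_mem φ hφ (mulPow A hφ j F))

lemma mulPow_spec (hφ : IsConfEquiv U φ) (j : ℕ) (F : 𝓕) :
    (∀ w ∈ U, A.toFun (mulPow A hφ j F) w = φ w ^ j • A.toFun F w) ∧
      ‖mulPow A hφ j F‖ = ‖F‖ := by
  induction j with
  | zero => exact ⟨fun w _ => by simp [mulPow], by simp [mulPow]⟩
  | succ j ih =>
    have hspec := Classical.choose_spec (A.smul_mem φ hφ (mulPow A hφ j F))
    constructor
    · intro w hw
      rw [show mulPow A hφ (j+1) F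
          = Classical.choose (A.smul_mem φ hφ (mulPow A hφ j F)) from rfl]
      rw [hspec.1 w hw, ih.1 w hw, smul_smul, pow_succ]
      ring_nf
    · rw [show mulPow A hφ (j+1) F
          = Classical.choose (A.smul_mem φ hφ (mulPow A hφ j F)) from rfl]
      rw [hspec.2, ih.2]

def comb (A : AdmissibleSpace U W 𝓕) (hφ : IsConfEquiv U φ) (m : ℕ) (c : ℕ → ℂ) (F : 𝓕) : 𝓕 :=
  ∑ i ∈ Finset.range m, c i • mulPow A hφ i F

lemma comb_toFun (hφ : IsConfEquiv U φ) (m : ℕ) (c : ℕ → ℂ) (F : 𝓕) :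
    ∀ w ∈ U, A.toFun (comb A hφ m c F) w
      = (∑ i ∈ Finset.range m, c i * φ w ^ i) • A.toFun F w := by
  intro w hw
  rw [comb, map_sum]
  rw [Finset.sum_apply, Finset.sum_smul]
  refine Finset.sum_congr rfl (fun i _ => ?_)
  rw [map_smul]
  show c i • (A.toFun (mulPow A hφ i F)) w = _
  rw [(mulPow_spec hφ i F).1 w hw, smul_smul]

lemma comb_norm (hφ : IsConfEquiv U φ) (m : ℕ) (c : ℕ → ℂ) (F : 𝓕) :
    ‖comb A hφ m c F‖ ≤ (∑ i ∈ Finset.range m, ‖c i‖) * ‖F‖ := by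
  refine le_trans (norm_sum_le _ _) ?_
  rw [Finset.sum_mul]
  refine Finset.sum_le_sum (fun i _ => ?_)
  rw [norm_smul, (mulPow_spec hφ i F).2]

/- ### Realization lemmas -/

lemma taylorCoeff_eq_tc (A : AdmissibleSpace U W 𝓕) (z : ℂ) (i : ℕ) (F : 𝓕) :
    taylorCoeff A z i F = tc z i (A.toFun F) := rfl

lemma shift_real (A : AdmissibleSpace U W 𝓕) {z : ℂ} (hz : z ∈ U)
    (hφ : IsConfEquiv U φ) (hφz : φ z = 0) (hφa : AnalyticOnNhd ℂ φ U)
    (hu : ∀ w ∈ U, dslope φ z w ≠ 0) (m j : ℕ) :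
    ∃ S : ℝ, 0 ≤ S ∧ ∀ F : 𝓕, ∃ G : 𝓕, ‖G‖ ≤ S * ‖F‖ ∧
      ∀ i, i < m + j →
        taylorCoeff A z i G
          = if j ≤ i then taylorCoeff A z (i - j) F else 0 := by
  have hua : AnalyticOnNhd ℂ (dslope φ z) U := analyticOnNhd_dslope hz hφa
  have hfa : AnalyticOnNhd ℂ (fun w => ((dslope φ z w)⁻¹) ^ j) U := fun w hw =>
    ((hua w hw).inv (hu w hw)).pow j
  obtain ⟨c, g, hg, hdec⟩ := decomp hz hφa hu hφz m _ hfa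
  refine ⟨∑ i ∈ Finset.range m, ‖c i‖, Finset.sum_nonneg (fun i _ => norm_nonneg _), ?_⟩
  intro F
  set G := mulPow A hφ j (comb A hφ m c F) with hGdef
  have hGn : ‖G‖ ≤ (∑ i ∈ Finset.range m, ‖c i‖) * ‖F‖ := by
    rw [hGdef, (mulPow_spec hφ j _).2]
    exact comb_norm hφ m c F
  refine ⟨G, hGn, ?_⟩
  have hfac : ∀ w, φ w = (w - z) * dslope φ z w := by
    intro w
    by_cases hwz : w = z
    · rw [hwz]; simp [hφz]
    · rw [dslope_of_ne φ hwz, slope_def_field]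
      field_simp [sub_ne_zero.mpr hwz, hφz]
      simp [hφz]
  have hkey : ∀ w ∈ U,
      A.toFun G w + φ w ^ (m + j) • (g w • A.toFun F w)
        = (w - z) ^ j • A.toFun F w := by
    intro w hw
    rw [hGdef, (mulPow_spec hφ j _).1 w hw, comb_toFun hφ m c F w hw]
    have h1 : (∑ i ∈ Finset.range m, c i * φ w ^ i)
        = ((dslope φ z w)⁻¹) ^ j - φ w ^ m * g w := by
      have := hdec w hw
      linear_combination -this
    rw [h1]
    rw [smul_smul, smul_smul, ← add_smul]
    congr 1
    have h2 : φ w ^ j * ((dslope φ z w)⁻¹) ^ j = (w - z) ^ j := by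
      rw [← mul_pow, hfac w]
      rw [mul_assoc, mul_inv_cancel₀ (hu w hw), mul_one]
    linear_combination h2
  intro i him
  have hGa : AnalyticAt ℂ (A.toFun G) z := A.analyticOn G z hz
  have hrest : AnalyticAt ℂ (fun w => g w • A.toFun F w) z :=
    (hg z hz).smul (A.analyticOn F z hz)
  have hφaz : AnalyticAt ℂ φ z := hφa z hz
  have hev : (fun w => A.toFun G w + φ w ^ (m + j) • (g w • A.toFun F w))
      =ᶠ[nhds z] (fun w => (w - z) ^ j • A.toFun F w) := by
    filter_upwards [A.isOpen_U.mem_nhds hz] with w hw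
    exact hkey w hw
  have h3 := tc_congr hev (i := i)
  rw [tc_add (g := fun w => φ w ^ (m + j) • (g w • A.toFun F w)) hGa ((hφaz.pow (m+j)).smul hrest) i] at h3
  rw [tc_kill hφaz hφz hrest (m + j) i him] at h3
  rw [add_zero] at h3
  rw [tc_pow_shift (A.analyticOn F z hz) j i] at h3
  rw [taylorCoeff_eq_tc, h3, taylorCoeff_eq_tc]

lemma tc_zero_eval (z : ℂ) (f : ℂ → W) : tc z 0 f = f z := by
  unfold tc
  rw [iteratedDeriv_zero]
  simp

lemma div_real (A : AdmissibleSpace U W 𝓕) {z : ℂ} (hz : z ∈ U)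
    (hφ : IsConfEquiv U φ) (hφz : φ z = 0) (hφa : AnalyticOnNhd ℂ φ U)
    (hu : ∀ w ∈ U, dslope φ z w ≠ 0) (m : ℕ) :
    ∃ E : ℝ, 0 ≤ E ∧ ∀ F : 𝓕, taylorCoeff A z 0 F = 0 →
      ∃ H : 𝓕, ‖H‖ ≤ E * ‖F‖ ∧
        ∀ i, i < m → taylorCoeff A z i H = taylorCoeff A z (i + 1) F := by
  have hua : AnalyticOnNhd ℂ (dslope φ z) U := analyticOnNhd_dslope hz hφa
  obtain ⟨c, g₂, hg₂, hdec⟩ := decomp hz hφa hu hφz m _ hua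
  refine ⟨∑ i ∈ Finset.range m, ‖c i‖, Finset.sum_nonneg (fun i _ => norm_nonneg _), ?_⟩
  intro F hF0
  have hFz : A.toFun F z = 0 := by
    rw [taylorCoeff_eq_tc, tc_zero_eval] at hF0
    exact hF0
  have hfac : ∀ w, φ w = (w - z) * dslope φ z w := by
    intro w
    by_cases hwz : w = z
    · rw [hwz]; simp [hφz]
    · rw [dslope_of_ne φ hwz, slope_def_field]
      field_simp [sub_ne_zero.mpr hwz, hφz]
      simp [hφz]
  have hFfac : ∀ w, A.toFun F w = (w - z) • dslope (A.toFun F) z w := by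
    intro w
    rw [sub_smul_dslope, hFz, sub_zero]
  set d : ℂ → W := dslope (A.toFun F) z with hd_def
  have hda : AnalyticOnNhd ℂ d U := analyticOnNhd_dslope hz (A.analyticOn F)
  set g : ℂ → W := fun w => (dslope φ z w)⁻¹ • d w with hg_def
  have hga : AnalyticOnNhd ℂ g U := fun w hw =>
    AnalyticAt.smul ((hua w hw).inv (hu w hw)) (hda w hw)
  have hFg : ∀ w ∈ U, A.toFun F w = φ w • g w := by
    intro w hw
    rw [hg_def]
    show A.toFun F w = φ w • ((dslope φ z w)⁻¹ • d w)
    rw [smul_smul, hfac w, mul_assoc, mul_inv_cancel₀ (hu w hw), mul_one, ← hFfac w]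
  obtain ⟨G, hGeq, hGn⟩ := A.mem_of_smul φ hφ F g hga hFg
  set H := comb A hφ m c G with hHdef
  refine ⟨H, ?_, ?_⟩
  · rw [hHdef]
    calc ‖comb A hφ m c G‖ ≤ (∑ i ∈ Finset.range m, ‖c i‖) * ‖G‖ := comb_norm hφ m c G
    _ = (∑ i ∈ Finset.range m, ‖c i‖) * ‖F‖ := by rw [hGn]
  intro i him
  have hkey : ∀ w ∈ U, A.toFun H w + φ w ^ m • (g₂ w • g w) = d w := by
    intro w hw
    rw [hHdef, comb_toFun hφ m c G w hw, hGeq w hw]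
    have h1 : (∑ i ∈ Finset.range m, c i * φ w ^ i)
        = dslope φ z w - φ w ^ m * g₂ w := by
      have := hdec w hw
      linear_combination -this
    rw [h1, hg_def]
    show (dslope φ z w - φ w ^ m * g₂ w) • ((dslope φ z w)⁻¹ • d w)
        + φ w ^ m • (g₂ w • ((dslope φ z w)⁻¹ • d w)) = d w
    rw [smul_smul, smul_smul, smul_smul, ← add_smul]
    have h2 : (dslope φ z w - φ w ^ m * g₂ w) * (dslope φ z w)⁻¹
        + φ w ^ m * g₂ w * (dslope φ z w)⁻¹ = 1 := by
      field_simp [hu w hw]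
      ring
    rw [h2, one_smul]
  have hHa : AnalyticAt ℂ (A.toFun H) z := A.analyticOn H z hz
  have hrest : AnalyticAt ℂ (fun w => g₂ w • g w) z := (hg₂ z hz).smul (hga z hz)
  have hφaz : AnalyticAt ℂ φ z := hφa z hz
  have hev : (fun w => A.toFun H w + φ w ^ m • (g₂ w • g w)) =ᶠ[nhds z] d := by
    filter_upwards [A.isOpen_U.mem_nhds hz] with w hw
    exact hkey w hw
  have h3 := tc_congr hev (i := i)
  rw [tc_add (g := fun w => φ w ^ m • (g₂ w • g w)) hHa ((hφaz.pow m).smul hrest) i, tc_kill hφaz hφz hrest m i him,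
    add_zero] at h3
  have hdz : AnalyticAt ℂ d z := hda z hz
  have h4 : tc z (i + 1) (A.toFun F) = tc z i d := by
    have h5 : A.toFun F = fun w => (w - z) • d w := funext hFfac
    rw [h5, (tc_shift hdz).2 i]
  rw [taylorCoeff_eq_tc, taylorCoeff_eq_tc, h3, h4]
/- ### taylorCoeff algebra -/

variable (A : AdmissibleSpace U W 𝓕) {z : ℂ}

lemma taylorCoeff_add (hz : z ∈ U) (i : ℕ) (F G : 𝓕) :
    taylorCoeff A z i (F + G) = taylorCoeff A z i F + taylorCoeff A z i G := by
  have h : A.toFun (F + G) = fun w => A.toFun F w + A.toFun G w := by rw [map_add]; rfl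
  rw [taylorCoeff_eq_tc, h, tc_add (A.analyticOn F z hz) (A.analyticOn G z hz)]
  rfl

lemma taylorCoeff_csmul (hz : z ∈ U) (c : ℂ) (i : ℕ) (F : 𝓕) :
    taylorCoeff A z i (c • F) = c • taylorCoeff A z i F := by
  have h : A.toFun (c • F) = fun w => c • A.toFun F w := by rw [map_smul]; rfl
  rw [taylorCoeff_eq_tc, h, tc_smul (A.analyticOn F z hz)]
  rfl

lemma taylorCoeff_zero' (i : ℕ) : taylorCoeff A z i (0 : 𝓕) = 0 := by
  have h : A.toFun (0 : 𝓕) = fun _ : ℂ => (0 : W) := by rw [map_zero]; rfl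
  rw [taylorCoeff_eq_tc, h, tc_zero_fun]

lemma taylorCoeff_sub (hz : z ∈ U) (i : ℕ) (F G : 𝓕) :
    taylorCoeff A z i (F - G) = taylorCoeff A z i F - taylorCoeff A z i G := by
  have h1 : F - G = F + (-1 : ℂ) • G := by module
  rw [h1, taylorCoeff_add A hz, taylorCoeff_csmul A hz]
  module

/- ### Zset basics -/

lemma Zset_zero (nn : ℕ) : (0 : Fin nn → W) ∈ Zset A z nn :=
  ⟨0, fun i => by rw [taylorCoeff_zero']; rfl⟩

lemma Zset_add (hz : z ∈ U) {nn : ℕ} {x y : Fin nn → W}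
    (hx : x ∈ Zset A z nn) (hy : y ∈ Zset A z nn) : x + y ∈ Zset A z nn := by
  obtain ⟨F, hF⟩ := hx
  obtain ⟨G, hG⟩ := hy
  exact ⟨F + G, fun i => by rw [taylorCoeff_add A hz, hF i, hG i]; rfl⟩

lemma Zset_sub (hz : z ∈ U) {nn : ℕ} {x y : Fin nn → W}
    (hx : x ∈ Zset A z nn) (hy : y ∈ Zset A z nn) : x - y ∈ Zset A z nn := by
  obtain ⟨F, hF⟩ := hx
  obtain ⟨G, hG⟩ := hy
  exact ⟨F - G, fun i => by rw [taylorCoeff_sub A hz, hF i, hG i]; rfl⟩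

lemma Zset_csmul (hz : z ∈ U) {nn : ℕ} (c : ℂ) {x : Fin nn → W}
    (hx : x ∈ Zset A z nn) : c • x ∈ Zset A z nn := by
  obtain ⟨F, hF⟩ := hx
  exact ⟨c • F, fun i => by rw [taylorCoeff_csmul A hz, hF i]; rfl⟩

/- ### Znorm basics -/

lemma Znorm_nonneg (nn : ℕ) (x : Fin nn → W) : 0 ≤ Znorm A z nn x := by
  apply Real.sInf_nonneg
  rintro c ⟨F, _, rfl⟩
  exact norm_nonneg F

lemma Znorm_le (nn : ℕ) (x : Fin nn → W) (F : 𝓕)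
    (hF : ∀ i : Fin nn, taylorCoeff A z i F = x i) : Znorm A z nn x ≤ ‖F‖ := by
  apply csInf_le
  · exact ⟨0, fun c ⟨G, _, hG⟩ => hG ▸ norm_nonneg G⟩
  · exact ⟨F, hF, rfl⟩

lemma Znorm_exists {nn : ℕ} {x : Fin nn → W} (hx : x ∈ Zset A z nn) {ε : ℝ} (hε : 0 < ε) :
    ∃ F : 𝓕, (∀ i : Fin nn, taylorCoeff A z i F = x i) ∧ ‖F‖ < Znorm A z nn x + ε := by
  obtain ⟨F₀, hF₀⟩ := hx
  have hne : {c : ℝ | ∃ F : 𝓕, (∀ i : Fin nn, taylorCoeff A z i F = x i) ∧ ‖F‖ = c}.Nonempty :=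
    ⟨‖F₀‖, F₀, hF₀, rfl⟩
  obtain ⟨c, ⟨F, hF, hFc⟩, hc⟩ := Real.lt_sInf_add_pos hne hε
  exact ⟨F, hF, by rw [hFc]; exact hc⟩

lemma Znorm_sub_le (hz : z ∈ U) {nn : ℕ} {x y : Fin nn → W}
    (hx : x ∈ Zset A z nn) (hy : y ∈ Zset A z nn) :
    Znorm A z nn (x - y) ≤ Znorm A z nn x + Znorm A z nn y := by
  apply le_of_forall_pos_le_add
  intro ε hε
  obtain ⟨F, hF, hFn⟩ := Znorm_exists A hx (half_pos hε)
  obtain ⟨G, hG, hGn⟩ := Znorm_exists A hy (half_pos hε)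
  have : Znorm A z nn (x - y) ≤ ‖F - G‖ :=
    Znorm_le A nn _ (F - G) (fun i => by rw [taylorCoeff_sub A hz, hF i, hG i]; rfl)
  calc Znorm A z nn (x - y) ≤ ‖F - G‖ := this
    _ ≤ ‖F‖ + ‖G‖ := norm_sub_le F G
    _ ≤ (Znorm A z nn x + ε / 2) + (Znorm A z nn y + ε / 2) := by
        exact add_le_add hFn.le hGn.le
    _ = Znorm A z nn x + Znorm A z nn y + ε := by ring

/- ### rightProj lemmas -/

lemma Zproj_mem {mm kk : ℕ} (h : kk ≤ mm) {x : Fin mm → W} (hx : x ∈ Zset A z mm) :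
    rightProj W mm kk h x ∈ Zset A z kk := by
  obtain ⟨F, hF⟩ := hx
  exact ⟨F, fun i => hF (Fin.castLE h i)⟩

lemma Zproj_norm {mm kk : ℕ} (h : kk ≤ mm) {x : Fin mm → W} (hx : x ∈ Zset A z mm) :
    Znorm A z kk (rightProj W mm kk h x) ≤ Znorm A z mm x := by
  apply le_of_forall_pos_le_add
  intro ε hε
  obtain ⟨F, hF, hFn⟩ := Znorm_exists A hx hε
  have : Znorm A z kk (rightProj W mm kk h x) ≤ ‖F‖ :=
    Znorm_le A kk _ F (fun i => hF (Fin.castLE h i))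
  linarith

/- ### leftShift lemmas -/

lemma leftShift_add {nn mm : ℕ} (x y : Fin nn → W) :
    leftShift W nn mm (x + y) = leftShift W nn mm x + leftShift W nn mm y := by
  funext i
  unfold leftShift
  by_cases h : mm - nn ≤ (i : ℕ) ∧ (i : ℕ) - (mm - nn) < nn
  · rw [Pi.add_apply, dif_pos h, dif_pos h, dif_pos h]; rfl
  · rw [Pi.add_apply, dif_neg h, dif_neg h, dif_neg h]; simp

lemma leftShift_smul {nn mm : ℕ} (c : ℂ) (x : Fin nn → W) :
    leftShift W nn mm (c • x) = c • leftShift W nn mm x := by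
  funext i
  unfold leftShift
  by_cases h : mm - nn ≤ (i : ℕ) ∧ (i : ℕ) - (mm - nn) < nn
  · rw [Pi.smul_apply, dif_pos h, dif_pos h]; rfl
  · rw [Pi.smul_apply, dif_neg h, dif_neg h]; simp

lemma leftShift_zero (nn mm : ℕ) : leftShift W nn mm (0 : Fin nn → W) = 0 := by
  funext i
  unfold leftShift
  by_cases h : mm - nn ≤ (i : ℕ) ∧ (i : ℕ) - (mm - nn) < nn
  · rw [dif_pos h]; rfl
  · rw [dif_neg h]; rfl

lemma leftShift_comp {a b c' : ℕ} (hab : a ≤ b) (hbc : b ≤ c') (x : Fin a → W) :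
    leftShift W b c' (leftShift W a b x) = leftShift W a c' x := by
  funext i
  have hic := i.isLt
  unfold leftShift
  by_cases h1 : c' - b ≤ (i : ℕ) ∧ (i : ℕ) - (c' - b) < b
  · rw [dif_pos h1]
    by_cases h2 : b - a ≤ (i : ℕ) - (c' - b) ∧ (i : ℕ) - (c' - b) - (b - a) < a
    · rw [dif_pos h2, dif_pos (show c' - a ≤ (i : ℕ) ∧ (i : ℕ) - (c' - a) < a by omega)]
      congr 1
      exact Fin.ext (by simp; omega)
    · rw [dif_neg h2, dif_neg (show ¬(c' - a ≤ (i : ℕ) ∧ (i : ℕ) - (c' - a) < a) by omega)]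
  · rw [dif_neg h1, dif_neg (show ¬(c' - a ≤ (i : ℕ) ∧ (i : ℕ) - (c' - a) < a) by omega)]

lemma leftShift_succ_eq {mm : ℕ} (d : Fin (mm + 1) → W) (h0 : d ⟨0, by omega⟩ = 0) :
    leftShift W mm (mm + 1) (fun i : Fin mm => d ⟨(i : ℕ) + 1, by omega⟩) = d := by
  funext i
  have hic := i.isLt
  unfold leftShift
  by_cases h : (mm + 1) - mm ≤ (i : ℕ) ∧ (i : ℕ) - ((mm + 1) - mm) < mm
  · rw [dif_pos h]
    show d ⟨(i : ℕ) - ((mm + 1) - mm) + 1, by omega⟩ = d i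
    congr 1
    apply Fin.ext
    show (i : ℕ) - ((mm + 1) - mm) + 1 = (i : ℕ)
    omega
  · rw [dif_neg h]
    have : (i : ℕ) = 0 := by omega
    rw [← h0]
    congr 1
    exact Fin.ext (by simp [this])

/- ### Z-level shift and division -/

lemma Zshift (hz : z ∈ U) (m mm j : ℕ) (hmm : mm = m + j) :
    ∃ S : ℝ, 0 ≤ S ∧ ∀ x ∈ Zset A z m,
      leftShift W m mm x ∈ Zset A z mm ∧
        Znorm A z mm (leftShift W m mm x) ≤ S * Znorm A z m x := by
  subst hmm
  obtain ⟨φ, hφ, hφz, hφa, hu⟩ := exists_normalized A hz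
  obtain ⟨S, hS0, hreal⟩ := shift_real A hz hφ hφz hφa hu m j
  refine ⟨S, hS0, ?_⟩
  intro x hx
  have hGreal : ∀ F : 𝓕, (∀ i : Fin m, taylorCoeff A z i F = x i) →
      ∃ G : 𝓕, ‖G‖ ≤ S * ‖F‖ ∧
        (∀ i : Fin (m + j), taylorCoeff A z i G = leftShift W m (m + j) x i) := by
    intro F hF
    obtain ⟨G, hGn, hGc⟩ := hreal F
    refine ⟨G, hGn, ?_⟩
    intro i
    have hi := i.isLt
    rw [hGc i hi]
    unfold leftShift
    by_cases h : j ≤ (i : ℕ)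
    · have h2 : (m + j) - m ≤ (i : ℕ) ∧ (i : ℕ) - ((m + j) - m) < m := by omega
      rw [if_pos h, dif_pos h2]
      have := hF ⟨(i : ℕ) - j, by omega⟩
      rw [show (((⟨(i : ℕ) - j, by omega⟩ : Fin m)) : ℕ) = (i : ℕ) - j from rfl] at this
      rw [this]
      congr 1
      apply Fin.ext
      show (i : ℕ) - j = (i : ℕ) - ((m + j) - m)
      omega
    · rw [if_neg h, dif_neg (by omega)]
  constructor
  · obtain ⟨F, hF⟩ := hx
    obtain ⟨G, _, hGc⟩ := hGreal F hF
    exact ⟨G, hGc⟩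
  · apply le_of_forall_pos_le_add
    intro ε hε
    have hεS : 0 < ε / (S + 1) := by positivity
    obtain ⟨F, hF, hFn⟩ := Znorm_exists A hx hεS
    obtain ⟨G, hGn, hGc⟩ := hGreal F hF
    have h1 : Znorm A z (m + j) (leftShift W m (m + j) x) ≤ ‖G‖ :=
      Znorm_le A (m + j) _ G hGc
    have h2 : ‖G‖ ≤ S * ‖F‖ := hGn
    have h3 : S * ‖F‖ ≤ S * (Znorm A z m x + ε / (S + 1)) :=
      mul_le_mul_of_nonneg_left hFn.le hS0
    have h4 : S * (ε / (S + 1)) ≤ ε := by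
      rw [div_eq_inv_mul]
      have : S / (S + 1) ≤ 1 := by
        rw [div_le_one (by linarith)]; linarith
      calc S * ((S + 1)⁻¹ * ε) = (S / (S + 1)) * ε := by ring
        _ ≤ 1 * ε := mul_le_mul_of_nonneg_right this hε.le
        _ = ε := one_mul ε
    nlinarith [Znorm_nonneg A (z := z) m x]

lemma Zdiv (hz : z ∈ U) (m mm : ℕ) (hmm : mm = m + 1) :
    ∃ E : ℝ, 0 ≤ E ∧ ∀ x ∈ Zset A z mm, x ⟨0, by omega⟩ = 0 →
      ((fun i : Fin m => x ⟨(i : ℕ) + 1, by omega⟩) ∈ Zset A z m ∧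
        Znorm A z m (fun i : Fin m => x ⟨(i : ℕ) + 1, by omega⟩) ≤ E * Znorm A z mm x) := by
  subst hmm
  obtain ⟨φ, hφ, hφz, hφa, hu⟩ := exists_normalized A hz
  obtain ⟨E, hE0, hreal⟩ := div_real A hz hφ hφz hφa hu m
  refine ⟨E, hE0, ?_⟩
  intro x hx h0
  have hHreal : ∀ F : 𝓕, (∀ i : Fin (m + 1), taylorCoeff A z i F = x i) →
      ∃ H : 𝓕, ‖H‖ ≤ E * ‖F‖ ∧
        (∀ i : Fin m, taylorCoeff A z i H = x ⟨(i : ℕ) + 1, by omega⟩) := by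
    intro F hF
    have hF0 : taylorCoeff A z 0 F = 0 := by
      have := hF ⟨0, by omega⟩
      rw [show (((⟨0, by omega⟩ : Fin (m + 1))) : ℕ) = 0 from rfl] at this
      rw [this, h0]
    obtain ⟨H, hHn, hHc⟩ := hreal F hF0
    refine ⟨H, hHn, ?_⟩
    intro i
    rw [hHc i i.isLt]
    exact hF ⟨(i : ℕ) + 1, by omega⟩
  constructor
  · obtain ⟨F, hF⟩ := hx
    obtain ⟨H, _, hHc⟩ := hHreal F hF
    exact ⟨H, hHc⟩
  · apply le_of_forall_pos_le_add
    intro ε hε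
    have hεE : 0 < ε / (E + 1) := by positivity
    obtain ⟨F, hF, hFn⟩ := Znorm_exists A hx hεE
    obtain ⟨H, hHn, hHc⟩ := hHreal F hF
    have h1 : Znorm A z m _ ≤ ‖H‖ := Znorm_le A m _ H hHc
    have h4 : E * (ε / (E + 1)) ≤ ε := by
      rw [div_eq_inv_mul]
      have : E / (E + 1) ≤ 1 := by
        rw [div_le_one (by linarith)]; linarith
      calc E * ((E + 1)⁻¹ * ε) = (E / (E + 1)) * ε := by ring
        _ ≤ 1 * ε := mul_le_mul_of_nonneg_right this hε.le
        _ = ε := one_mul ε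
    nlinarith [Znorm_nonneg A (z := z) (m + 1) x, mul_le_mul_of_nonneg_left hFn.le hE0]
lemma leftShift_apply_lt {nn mm : ℕ} (x : Fin nn → W) (i : Fin mm)
    (h : (i : ℕ) < mm - nn) : leftShift W nn mm x i = 0 := by
  unfold leftShift
  rw [dif_neg (by omega)]

lemma rightProj_add {mm kk : ℕ} (h : kk ≤ mm) (x y : Fin mm → W) :
    rightProj W mm kk h (x + y) = rightProj W mm kk h x + rightProj W mm kk h y := rfl

lemma rightProj_smul {mm kk : ℕ} (h : kk ≤ mm) (c : ℂ) (x : Fin mm → W) :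
    rightProj W mm kk h (c • x) = c • rightProj W mm kk h x := rfl


/-- **Nontriviality propagates from the seed case `n = k = 1`.**
If there is no bounded linear operator `P : Z^(2) → Z^(1)` with `P ∘ ι_{1,2} = id` (i.e.
the sequence `0 → Z^(1) → Z^(2) → Z^(1) → 0` is nontrivial), then for all `n, k ≥ 1`
there is no bounded linear operator `P : Z^(n+k) → Z^(n)` with `P ∘ ι_{n,n+k} = id`
(i.e. `0 → Z^(n) → Z^(n+k) → Z^(k) → 0` is nontrivial). -/
theorem AdmissibleSpace.nontrivial_of_nontrivial_seed (A : AdmissibleSpace U W 𝓕) (z : ℂ)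
    (hz : z ∈ U)
    (h1 : ¬∃ P : (Fin (1 + 1) → W) → Fin 1 → W, A.IsSplittingProjection z 1 1 P) :
    ∀ n k : ℕ, 1 ≤ n → 1 ≤ k →
      ¬∃ P : (Fin (n + k) → W) → Fin n → W, A.IsSplittingProjection z n k P := by

  classical
  intro n k hn hk
  rintro ⟨P, hPmem, hPadd, hPsmul, ⟨C0, hPbound0⟩, hPid⟩
  apply h1
  set C := max C0 0 with hCdef
  have hC0 : 0 ≤ C := le_max_right _ _
  have hPbound : ∀ x ∈ Zset A z (n + k), Znorm A z n (P x) ≤ C * Znorm A z (n + k) x := by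
    intro x hx
    exact le_trans (hPbound0 x hx)
      (mul_le_mul_of_nonneg_right (le_max_left _ _) (Znorm_nonneg A (z := z) _ x))
  obtain ⟨S₁, hS₁0, hS₁⟩ := Zshift A hz (n + 1) (n + k) (k - 1) (by omega)
  obtain ⟨S₂, hS₂0, hS₂⟩ := Zshift A hz n (n + 1) 1 rfl
  obtain ⟨E₁, hE₁0, hE₁⟩ := Zdiv A hz n (n + 1) rfl
  obtain ⟨E₂, hE₂0, hE₂⟩ := Zdiv A hz 1 (1 + 1) rfl
  set Q : (Fin (n + 1) → W) → Fin n → W := fun x => P (leftShift W (n + 1) (n + k) x)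
    with hQdef
  have hQmem : ∀ x ∈ Zset A z (n + 1), Q x ∈ Zset A z n := fun x hx =>
    hPmem _ (hS₁ x hx).1
  have hQadd : ∀ x ∈ Zset A z (n + 1), ∀ y ∈ Zset A z (n + 1), Q (x + y) = Q x + Q y := by
    intro x hx y hy
    show P (leftShift W (n + 1) (n + k) (x + y)) = _
    rw [leftShift_add]
    exact hPadd _ (hS₁ x hx).1 _ (hS₁ y hy).1
  have hQsmul : ∀ (c : ℂ), ∀ x ∈ Zset A z (n + 1), Q (c • x) = c • Q x := by
    intro c x hx
    show P (leftShift W (n + 1) (n + k) (c • x)) = _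
    rw [leftShift_smul]
    exact hPsmul c _ (hS₁ x hx).1
  have hQbound : ∀ x ∈ Zset A z (n + 1),
      Znorm A z n (Q x) ≤ (C * S₁) * Znorm A z (n + 1) x := by
    intro x hx
    calc Znorm A z n (Q x) ≤ C * Znorm A z (n + k) (leftShift W (n + 1) (n + k) x) :=
          hPbound _ (hS₁ x hx).1
      _ ≤ C * (S₁ * Znorm A z (n + 1) x) := mul_le_mul_of_nonneg_left (hS₁ x hx).2 hC0
      _ = (C * S₁) * Znorm A z (n + 1) x := by ring
  have hQid : ∀ y ∈ Zset A z n, Q (leftShift W n (n + 1) y) = y := by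
    intro y hy
    show P (leftShift W (n + 1) (n + k) (leftShift W n (n + 1) y)) = y
    rw [leftShift_comp (by omega) (by omega)]
    exact hPid y hy
  -- the chosen lift of an element of Z^(1) to Z^(n+1)
  set xl : (Fin 1 → W) → (Fin (n + 1) → W) := fun y =>
    if hy : y ∈ Zset A z 1 then (fun i => taylorCoeff A z i hy.choose) else 0 with hxldef
  have hxl_mem : ∀ y ∈ Zset A z 1, xl y ∈ Zset A z (n + 1) := by
    intro y hy
    simp only [hxldef, dif_pos hy]
    exact ⟨hy.choose, fun i => rfl⟩
  have hxl_bot : ∀ y ∈ Zset A z 1, (xl y) ⟨0, by omega⟩ = y ⟨0, by omega⟩ := by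
    intro y hy
    simp only [hxldef, dif_pos hy]
    exact hy.choose_spec ⟨0, by omega⟩
  set t : (Fin 1 → W) → (Fin (1 + 1) → W) := fun y =>
    rightProj W (n + 1) (1 + 1) (by omega) (xl y - leftShift W n (n + 1) (Q (xl y)))
    with htdef
  have hσ0 : ∀ v : Fin n → W, (leftShift W n (n + 1) v) ⟨0, by omega⟩ = 0 := by
    intro v
    exact leftShift_apply_lt v ⟨0, by omega⟩ (show (0 : ℕ) < (n + 1) - n by omega)
  -- well-definedness of `t` with respect to the choice of lift
  have hwd : ∀ y ∈ Zset A z 1, ∀ x ∈ Zset A z (n + 1),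
      x ⟨0, by omega⟩ = y ⟨0, by omega⟩ →
      x - leftShift W n (n + 1) (Q x)
        = xl y - leftShift W n (n + 1) (Q (xl y)) := by
    intro y hy x hx hx0
    have hxlm := hxl_mem y hy
    set d := x - xl y with hd
    have hdZ : d ∈ Zset A z (n + 1) := Zset_sub A hz hx hxlm
    have hd0 : d ⟨0, by omega⟩ = 0 := by
      rw [hd]
      show x ⟨0, by omega⟩ - (xl y) ⟨0, by omega⟩ = 0
      rw [hx0, hxl_bot y hy, sub_self]
    obtain ⟨heZ, _⟩ := hE₁ d hdZ hd0
    set e : Fin n → W := fun i => d ⟨(i : ℕ) + 1, by omega⟩ with he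
    have hσe : leftShift W n (n + 1) e = d := leftShift_succ_eq d hd0
    have hx_eq : x = xl y + d := by rw [hd]; abel
    have hQd : Q d = e := by
      conv_lhs => rw [← hσe]
      exact hQid e heZ
    have hQx : Q x = Q (xl y) + e := by
      rw [hx_eq, hQadd _ hxlm _ hdZ, hQd]
    rw [hQx, hx_eq, leftShift_add, hσe]
    abel
  have htwd : ∀ y ∈ Zset A z 1, ∀ x ∈ Zset A z (n + 1),
      x ⟨0, by omega⟩ = y ⟨0, by omega⟩ →
      t y = rightProj W (n + 1) (1 + 1) (by omega)
        (x - leftShift W n (n + 1) (Q x)) := by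
    intro y hy x hx hx0
    show rightProj W (n + 1) (1 + 1) (by omega)
        (xl y - leftShift W n (n + 1) (Q (xl y))) = _
    rw [hwd y hy x hx hx0]
  have htmem : ∀ y ∈ Zset A z 1, t y ∈ Zset A z (1 + 1) := by
    intro y hy
    apply Zproj_mem
    exact Zset_sub A hz (hxl_mem y hy) (hS₂ _ (hQmem _ (hxl_mem y hy))).1
  have htbot : ∀ y ∈ Zset A z 1, (t y) ⟨0, by omega⟩ = y ⟨0, by omega⟩ := by
    intro y hy
    show (xl y - leftShift W n (n + 1) (Q (xl y))) (Fin.castLE (by omega) ⟨0, by omega⟩)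
      = y ⟨0, by omega⟩
    show (xl y) ⟨0, by omega⟩ - (leftShift W n (n + 1) (Q (xl y))) ⟨0, by omega⟩ = _
    rw [hσ0, hxl_bot y hy, sub_zero]
  have htadd : ∀ y ∈ Zset A z 1, ∀ y' ∈ Zset A z 1, t (y + y') = t y + t y' := by
    intro y hy y' hy'
    have hx : xl y + xl y' ∈ Zset A z (n + 1) :=
      Zset_add A hz (hxl_mem y hy) (hxl_mem y' hy')
    have hbot : (xl y + xl y') ⟨0, by omega⟩ = (y + y') ⟨0, by omega⟩ := by
      show (xl y) ⟨0, by omega⟩ + (xl y') ⟨0, by omega⟩ = y ⟨0, by omega⟩ + y' ⟨0, by omega⟩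
      rw [hxl_bot y hy, hxl_bot y' hy']
    rw [htwd (y + y') (Zset_add A hz hy hy') _ hx hbot]
    have hQs : Q (xl y + xl y') = Q (xl y) + Q (xl y') :=
      hQadd _ (hxl_mem y hy) _ (hxl_mem y' hy')
    rw [hQs, leftShift_add]
    rw [show xl y + xl y' - (leftShift W n (n + 1) (Q (xl y)) + leftShift W n (n + 1) (Q (xl y')))
      = (xl y - leftShift W n (n + 1) (Q (xl y))) + (xl y' - leftShift W n (n + 1) (Q (xl y')))
      from by abel]
    rw [rightProj_add]
  have htsmul : ∀ (c : ℂ), ∀ y ∈ Zset A z 1, t (c • y) = c • t y := by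
    intro c y hy
    have hx : c • xl y ∈ Zset A z (n + 1) := Zset_csmul A hz c (hxl_mem y hy)
    have hbot : (c • xl y) ⟨0, by omega⟩ = (c • y) ⟨0, by omega⟩ := by
      show c • (xl y) ⟨0, by omega⟩ = c • y ⟨0, by omega⟩
      rw [hxl_bot y hy]
    rw [htwd (c • y) (Zset_csmul A hz c hy) _ hx hbot]
    rw [hQsmul c _ (hxl_mem y hy), leftShift_smul]
    rw [show c • xl y - c • leftShift W n (n + 1) (Q (xl y))
      = c • (xl y - leftShift W n (n + 1) (Q (xl y))) from by module]
    rw [rightProj_smul]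
  have ht0 : t 0 = 0 := by
    have hQ0 : Q 0 = 0 := by
      have := hQid 0 (Zset_zero A n)
      rwa [leftShift_zero] at this
    rw [htwd 0 (Zset_zero A 1) 0 (Zset_zero A (n + 1)) rfl, hQ0, leftShift_zero, sub_zero]
    rfl
  set B : ℝ := 1 + S₂ * (C * S₁) with hBdef
  have hB0 : 0 < B := by positivity
  have htbound : ∀ y ∈ Zset A z 1, Znorm A z (1 + 1) (t y) ≤ B * Znorm A z 1 y := by
    intro y hy
    apply le_of_forall_pos_le_add
    intro ε hε
    obtain ⟨F, hF, hFn⟩ := Znorm_exists A hy (div_pos hε hB0)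
    set x : Fin (n + 1) → W := fun i => taylorCoeff A z i F with hxdef
    have hxm : x ∈ Zset A z (n + 1) := ⟨F, fun i => rfl⟩
    have hbot : x ⟨0, by omega⟩ = y ⟨0, by omega⟩ := hF ⟨0, by omega⟩
    rw [htwd y hy x hxm hbot]
    have hQxm := hQmem x hxm
    have hσm := (hS₂ _ hQxm).1
    have hrm : x - leftShift W n (n + 1) (Q x) ∈ Zset A z (n + 1) :=
      Zset_sub A hz hxm hσm
    have hxn : Znorm A z (n + 1) x ≤ ‖F‖ := Znorm_le A (n + 1) x F (fun i => rfl)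
    have c1 : Znorm A z (1 + 1) (rightProj W (n + 1) (1 + 1) (by omega)
        (x - leftShift W n (n + 1) (Q x))) ≤ Znorm A z (n + 1) (x - leftShift W n (n + 1) (Q x)) :=
      Zproj_norm A _ hrm
    have c2 : Znorm A z (n + 1) (x - leftShift W n (n + 1) (Q x))
        ≤ Znorm A z (n + 1) x + Znorm A z (n + 1) (leftShift W n (n + 1) (Q x)) :=
      Znorm_sub_le A hz hxm hσm
    have c3 : Znorm A z (n + 1) (leftShift W n (n + 1) (Q x)) ≤ S₂ * Znorm A z n (Q x) :=
      (hS₂ _ hQxm).2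
    have c4 : Znorm A z n (Q x) ≤ (C * S₁) * Znorm A z (n + 1) x := hQbound x hxm
    have c5 : Znorm A z 1 y ≤ ‖F‖ := Znorm_le A 1 y F hF
    have hFpos : 0 ≤ ‖F‖ := norm_nonneg F
    have hchain : Znorm A z (1 + 1) (rightProj W (n + 1) (1 + 1) (by omega)
        (x - leftShift W n (n + 1) (Q x))) ≤ B * ‖F‖ := by
      have hc34 : S₂ * Znorm A z n (Q x) ≤ S₂ * ((C * S₁) * Znorm A z (n + 1) x) :=
        mul_le_mul_of_nonneg_left c4 hS₂0
      have h0 : 0 ≤ S₂ * (C * S₁) := mul_nonneg hS₂0 (mul_nonneg hC0 hS₁0)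
      have hmul : S₂ * ((C * S₁) * Znorm A z (n + 1) x) ≤ S₂ * (C * S₁) * ‖F‖ := by
        have h2 := mul_le_mul_of_nonneg_left hxn h0
        linarith [h2]
      have hBF : B * ‖F‖ = ‖F‖ + S₂ * (C * S₁) * ‖F‖ := by rw [hBdef]; ring
      linarith [c1, c2, c3, hc34, hmul, hxn]
    have hlast : B * ‖F‖ ≤ B * Znorm A z 1 y + ε := by
      have : B * ‖F‖ ≤ B * (Znorm A z 1 y + ε / B) := by
        apply mul_le_mul_of_nonneg_left hFn.le hB0.le
      calc B * ‖F‖ ≤ B * (Znorm A z 1 y + ε / B) := this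
        _ = B * Znorm A z 1 y + B * (ε / B) := by ring
        _ = B * Znorm A z 1 y + ε := by rw [mul_div_cancel₀ ε hB0.ne']
    linarith
  -- the splitting projection for (1,1)
  set P₁ : (Fin (1 + 1) → W) → Fin 1 → W := fun x => fun _ =>
    (x - t (rightProj W (1 + 1) 1 (by omega) x)) ⟨1, by omega⟩ with hP₁def
  -- common facts for x ∈ Zset A z (1+1)
  have hcore : ∀ x ∈ Zset A z (1 + 1),
      P₁ x ∈ Zset A z 1 ∧ Znorm A z 1 (P₁ x) ≤ (E₂ * (1 + B)) * Znorm A z (1 + 1) x := by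
    intro x hx
    set y := rightProj W (1 + 1) 1 (by omega) x with hydef
    have hy : y ∈ Zset A z 1 := Zproj_mem A (by omega) hx
    have hty := htmem y hy
    set r : Fin (1 + 1) → W := x - t y with hrdef
    have hrm : r ∈ Zset A z (1 + 1) := Zset_sub A hz hx hty
    have hr0 : r ⟨0, by omega⟩ = 0 := by
      rw [hrdef]
      show x ⟨0, by omega⟩ - (t y) ⟨0, by omega⟩ = 0
      rw [htbot y hy]
      show x ⟨0, by omega⟩ - x (Fin.castLE (by omega) ⟨0, by omega⟩) = 0
      exact sub_self _
    obtain ⟨heZ, heB⟩ := hE₂ r hrm hr0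
    have hP₁x : P₁ x = fun i : Fin 1 => r ⟨(i : ℕ) + 1, by omega⟩ := by
      funext i
      show r ⟨1, by omega⟩ = r ⟨(i : ℕ) + 1, by omega⟩
      congr 1
      apply Fin.ext
      show 1 = (i : ℕ) + 1
      have := i.isLt
      omega
    constructor
    · rw [hP₁x]; exact heZ
    · rw [hP₁x]
      have c1 : Znorm A z (1 + 1) r ≤ Znorm A z (1 + 1) x + Znorm A z (1 + 1) (t y) :=
        Znorm_sub_le A hz hx hty
      have c2 : Znorm A z (1 + 1) (t y) ≤ B * Znorm A z 1 y := htbound y hy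
      have c3 : Znorm A z 1 y ≤ Znorm A z (1 + 1) x := Zproj_norm A (by omega) hx
      have c4 : B * Znorm A z 1 y ≤ B * Znorm A z (1 + 1) x :=
        mul_le_mul_of_nonneg_left c3 hB0.le
      calc Znorm A z 1 (fun i : Fin 1 => r ⟨(i : ℕ) + 1, by omega⟩)
          ≤ E₂ * Znorm A z (1 + 1) r := heB
        _ ≤ E₂ * (Znorm A z (1 + 1) x + B * Znorm A z (1 + 1) x) := by
            apply mul_le_mul_of_nonneg_left _ hE₂0
            linarith
        _ = (E₂ * (1 + B)) * Znorm A z (1 + 1) x := by ring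
  refine ⟨P₁, fun x hx => (hcore x hx).1, ?_, ?_, ⟨E₂ * (1 + B), fun x hx => (hcore x hx).2⟩, ?_⟩
  · -- additivity
    intro x hx x' hx'
    have hπ : rightProj W (1 + 1) 1 (by omega) (x + x')
        = rightProj W (1 + 1) 1 (by omega) x + rightProj W (1 + 1) 1 (by omega) x' :=
      rightProj_add _ x x'
    have hπx : rightProj W (1 + 1) 1 (by omega) x ∈ Zset A z 1 := Zproj_mem A (by omega) hx
    have hπx' : rightProj W (1 + 1) 1 (by omega) x' ∈ Zset A z 1 := Zproj_mem A (by omega) hx'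
    funext i
    show ((x + x') - t (rightProj W (1 + 1) 1 (by omega) (x + x'))) ⟨1, by omega⟩
      = (x - t (rightProj W (1 + 1) 1 (by omega) x)) ⟨1, by omega⟩
        + (x' - t (rightProj W (1 + 1) 1 (by omega) x')) ⟨1, by omega⟩
    rw [hπ, htadd _ hπx _ hπx']
    show (x + x') ⟨1, by omega⟩ - (t (rightProj W (1 + 1) 1 (by omega) x)
        + t (rightProj W (1 + 1) 1 (by omega) x')) ⟨1, by omega⟩ = _
    show x ⟨1, by omega⟩ + x' ⟨1, by omega⟩
      - ((t (rightProj W (1 + 1) 1 (by omega) x)) ⟨1, by omega⟩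
        + (t (rightProj W (1 + 1) 1 (by omega) x')) ⟨1, by omega⟩) = _
    show _ = x ⟨1, by omega⟩ - (t (rightProj W (1 + 1) 1 (by omega) x)) ⟨1, by omega⟩
        + (x' ⟨1, by omega⟩ - (t (rightProj W (1 + 1) 1 (by omega) x')) ⟨1, by omega⟩)
    abel
  · -- homogeneity
    intro c x hx
    have hπ : rightProj W (1 + 1) 1 (by omega) (c • x)
        = c • rightProj W (1 + 1) 1 (by omega) x := rightProj_smul _ c x
    have hπx : rightProj W (1 + 1) 1 (by omega) x ∈ Zset A z 1 := Zproj_mem A (by omega) hx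
    funext i
    show ((c • x) - t (rightProj W (1 + 1) 1 (by omega) (c • x))) ⟨1, by omega⟩
      = c • ((x - t (rightProj W (1 + 1) 1 (by omega) x)) ⟨1, by omega⟩)
    rw [hπ, htsmul c _ hπx]
    show c • x ⟨1, by omega⟩ - c • (t (rightProj W (1 + 1) 1 (by omega) x)) ⟨1, by omega⟩ = _
    exact (smul_sub c (x ⟨1, by omega⟩) ((t (rightProj W (1 + 1) 1 (by omega) x)) ⟨1, by omega⟩)).symm
  · -- identity on Z^(1)
    intro v hv
    have hπσ : rightProj W (1 + 1) 1 (by omega) (leftShift W 1 (1 + 1) v) = 0 := by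
      funext i
      show (leftShift W 1 (1 + 1) v) (Fin.castLE (by omega) i) = 0
      unfold leftShift
      rw [dif_neg (by
        have := i.isLt
        have hval : ((Fin.castLE (by omega : 1 ≤ 1 + 1) i : Fin (1 + 1)) : ℕ) = (i : ℕ) := rfl
        omega)]
    funext i
    show (leftShift W 1 (1 + 1) v - t (rightProj W (1 + 1) 1 (by omega)
      (leftShift W 1 (1 + 1) v))) ⟨1, by omega⟩ = v i
    rw [hπσ, ht0]
    show (leftShift W 1 (1 + 1) v) ⟨1, by omega⟩ - (0 : Fin (1 + 1) → W) ⟨1, by omega⟩ = v i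
    rw [show (0 : Fin (1 + 1) → W) ⟨1, by omega⟩ = 0 from rfl, sub_zero]
    unfold leftShift
    rw [dif_pos (show (1 + 1) - 1 ≤ (1 : ℕ) ∧ (1 : ℕ) - ((1 + 1) - 1) < 1 from by omega)]
    congr 1
    apply Fin.ext
    show 1 - ((1 + 1) - 1) = (i : ℕ)
    have := i.isLt
    omega

end
end

section
/- Let A, B, C, D, E be Banach spaces and suppose given bounded linear operators forming a commutative diagram with exact rows 0 → A →^I B →^Q C → 0 and 0 → D →^J E →^R C → 0, together with bounded operators t : A → D and T : B → E satisfying T ∘ I = J ∘ t and R ∘ T = Q. If Q and t are strictly singular, then T is strictly singular. -/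
/-- A bounded linear operator between Banach spaces is *strictly singular* if there is no
infinite-dimensional closed subspace of its domain on which it is bounded below. -/
def StrictlySingular {X Y : Type*} [NormedAddCommGroup X] [NormedSpace ℂ X]
    [NormedAddCommGroup Y] [NormedSpace ℂ Y] (T : X →L[ℂ] Y) : Prop :=
  ¬∃ (M : Submodule ℂ X) (c : ℝ), 0 < c ∧ IsClosed (M : Set X) ∧
    ¬FiniteDimensional ℂ M ∧ ∀ x ∈ M, c * ‖x‖ ≤ ‖T x‖

/-- If `N` is infinite dimensional, so is `N ⊓ ker f` for a continuous linear functional `f`. -/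
lemma not_finiteDimensional_inf_ker {B : Type*} [NormedAddCommGroup B] [NormedSpace ℂ B]
    (N : Submodule ℂ B) (f : B →L[ℂ] ℂ) (h : ¬FiniteDimensional ℂ N) :
    ¬FiniteDimensional ℂ (N ⊓ LinearMap.ker f.toLinearMap : Submodule ℂ B) := by
  intro hfd
  apply h
  set φ : N →ₗ[ℂ] ℂ := (f : B →ₗ[ℂ] ℂ).domRestrict N with hφ
  have hker : LinearMap.ker φ = (N ⊓ LinearMap.ker f.toLinearMap : Submodule ℂ B).comap N.subtype := by
    ext x
    simp [hφ, LinearMap.mem_ker, Submodule.mem_comap, x.2]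
  have e := Submodule.comapSubtypeEquivOfLe (inf_le_left : N ⊓ LinearMap.ker f.toLinearMap ≤ N)
  have hkfd : FiniteDimensional ℂ (LinearMap.ker φ) := by
    rw [hker]
    exact Module.Finite.equiv e.symm
  have hqfd : FiniteDimensional ℂ (↥N ⧸ LinearMap.ker φ) :=
    Module.Finite.equiv φ.quotKerEquivRange.symm
  have : IsNoetherian ℂ ↥N :=
    (isNoetherian_iff_submodule_quotient (LinearMap.ker φ)).mpr
      ⟨IsNoetherian.iff_fg.mpr hkfd, IsNoetherian.iff_fg.mpr hqfd⟩
  exact IsNoetherian.iff_fg.mp this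

set_option maxHeartbeats 2000000 in
/-- **The 3-lemma for strictly singular operators.**
Given a commutative diagram of Banach spaces with exact rows
`0 → A → B → C → 0` and `0 → D → E → C → 0` and vertical arrows `t : A → D`,
`T : B → E` (and the identity on `C`), if `Q` and `t` are strictly singular then so
is `T`. -/
theorem strictlySingular_of_diagram
    {A B C D E : Type*}
    [NormedAddCommGroup A] [NormedSpace ℂ A] [CompleteSpace A]
    [NormedAddCommGroup B] [NormedSpace ℂ B] [CompleteSpace B]
    [NormedAddCommGroup C] [NormedSpace ℂ C] [CompleteSpace C]
    [NormedAddCommGroup D] [NormedSpace ℂ D] [CompleteSpace D]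
    [NormedAddCommGroup E] [NormedSpace ℂ E] [CompleteSpace E]
    (I : A →L[ℂ] B) (Q : B →L[ℂ] C) (J : D →L[ℂ] E) (R : E →L[ℂ] C)
    (t : A →L[ℂ] D) (T : B →L[ℂ] E)
    -- exactness of the first row
    (hI : Function.Injective I) (hQ : Function.Surjective Q)
    (hIQ : LinearMap.range (I : A →ₗ[ℂ] B) = LinearMap.ker (Q : B →ₗ[ℂ] C))
    -- exactness of the second row
    (hJ : Function.Injective J) (hR : Function.Surjective R)
    (hJR : LinearMap.range (J : D →ₗ[ℂ] E) = LinearMap.ker (R : E →ₗ[ℂ] C))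
    -- commutativity of the diagram
    (hcomm₁ : ∀ a : A, T (I a) = J (t a))
    (hcomm₂ : ∀ b : B, R (T b) = Q b)
    (hQss : StrictlySingular Q) (htss : StrictlySingular t) :
    StrictlySingular T := by
  rintro ⟨M, c, hc, hMcl, hMfd, hMbb⟩
  classical
  -- open mapping constant for Q
  obtain ⟨γ, hγpos, hγ⟩ := Q.exists_preimage_norm_le hQ
  -- lower bound for I
  have hQker_closed : IsClosed ((LinearMap.ker Q.toLinearMap : Submodule ℂ B) : Set B) :=
    ContinuousLinearMap.isClosed_ker Q
  haveI : CompleteSpace (LinearMap.ker Q.toLinearMap) := hQker_closed.completeSpace_coe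
  set I' : A →L[ℂ] LinearMap.ker Q.toLinearMap :=
    I.codRestrict (LinearMap.ker Q.toLinearMap)
      (fun a => by rw [← hIQ]; exact LinearMap.mem_range_self _ a) with hI'def
  have hI'ker : LinearMap.ker I'.toLinearMap = ⊥ := by
    rw [hI'def, ContinuousLinearMap.ker_codRestrict]
    exact LinearMap.ker_eq_bot.mpr hI
  have hI'range : LinearMap.range I'.toLinearMap = ⊤ := by
    rw [LinearMap.range_eq_top]
    rintro ⟨y, hy⟩
    rw [← hIQ] at hy
    obtain ⟨a, ha⟩ := hy
    exact ⟨a, Subtype.ext ha⟩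
  set e := ContinuousLinearEquiv.ofBijective I' hI'ker hI'range with he
  set K : ℝ := max ‖(e.symm : LinearMap.ker Q.toLinearMap →L[ℂ] A)‖ 1 with hK
  have hK1 : (1:ℝ) ≤ K := le_max_right _ _
  have hKpos : (0:ℝ) < K := lt_of_lt_of_le one_pos hK1
  have hlow : ∀ a : A, ‖a‖ ≤ K * ‖I a‖ := by
    intro a
    have h1 : a = e.symm (e a) := (e.symm_apply_apply a).symm
    have h2 : ‖e.symm (e a)‖ ≤ ‖(e.symm : LinearMap.ker Q.toLinearMap →L[ℂ] A)‖ * ‖e a‖ :=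
      (e.symm : LinearMap.ker Q.toLinearMap →L[ℂ] A).le_opNorm _
    have h3 : ‖e a‖ = ‖I a‖ := by
      have : ((e a : LinearMap.ker Q.toLinearMap) : B) = I a := by
        rw [he, ContinuousLinearEquiv.coeFn_ofBijective]
        rfl
      rw [← this]
      rfl
    calc ‖a‖ = ‖e.symm (e a)‖ := by rw [← h1]
      _ ≤ ‖(e.symm : LinearMap.ker Q.toLinearMap →L[ℂ] A)‖ * ‖e a‖ := h2
      _ ≤ K * ‖I a‖ := by
          rw [h3]; exact mul_le_mul_of_nonneg_right (le_max_left _ _) (norm_nonneg _)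
  -- constants
  set η : ℝ := min (1/4) (c / (4 * (‖T‖ + 1))) with hη
  have hηpos : 0 < η := lt_min (by norm_num) (div_pos hc (by positivity))
  have hη4 : η ≤ 1/4 := min_le_left _ _
  have hηT : ‖T‖ * (2 * η) ≤ c / 2 := by
    have h1 : η ≤ c / (4 * (‖T‖ + 1)) := min_le_right _ _
    have h4 : (0:ℝ) < 4 * (‖T‖ + 1) := by positivity
    have h1' : η * (4 * (‖T‖ + 1)) ≤ c := (le_div_iff₀ h4).mp h1
    nlinarith [norm_nonneg T, hηpos.le]
  set ε : ℕ → ℝ := fun n => η * (4 : ℝ)⁻¹ ^ n / (γ + 1) with hε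
  have hεpos : ∀ n, 0 < ε n := fun n =>
    div_pos (mul_pos hηpos (pow_pos (by norm_num) n)) (by linarith)
  have hγε : ∀ n, γ * ε n ≤ η * (4:ℝ)⁻¹ ^ n := by
    intro n
    have h0 : (0:ℝ) < γ + 1 := by linarith
    have h1 : (0:ℝ) ≤ η * (4:ℝ)⁻¹ ^ n := by positivity
    calc γ * ε n = (η * (4:ℝ)⁻¹ ^ n) * (γ / (γ + 1)) := by rw [hε]; ring
      _ ≤ (η * (4:ℝ)⁻¹ ^ n) * 1 :=
          mul_le_mul_of_nonneg_left ((div_le_one h0).mpr (by linarith)) h1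
      _ = η * (4:ℝ)⁻¹ ^ n := mul_one _
  -- the one-step construction
  have key : ∀ (n : ℕ) (N : Submodule ℂ B), IsClosed (N : Set B) → ¬FiniteDimensional ℂ N →
      ∃ (x : B) (f : B →L[ℂ] ℂ) (a : A),
        x ∈ N ∧ ‖x‖ = 1 ∧ ‖f‖ ≤ 1 ∧ f x = 1 ∧ ‖x - I a‖ ≤ γ * ε n := by
    intro n N hNcl hNfd
    have hQN : ¬ (∀ y ∈ N, ε n * ‖y‖ ≤ ‖Q y‖) :=
      fun hall => hQss ⟨N, ε n, hεpos n, hNcl, hNfd, hall⟩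
    push_neg at hQN
    obtain ⟨y, hyN, hy⟩ := hQN
    have hyne : y ≠ 0 := by
      rintro rfl
      simp only [map_zero, norm_zero, mul_zero] at hy
      exact lt_irrefl 0 hy
    have hynorm : (0:ℝ) < ‖y‖ := norm_pos_iff.mpr hyne
    set x : B := ((‖y‖ : ℝ) : ℂ)⁻¹ • y with hxdef
    have hxN : x ∈ N := N.smul_mem _ hyN
    have hxnorm : ‖x‖ = 1 := by
      rw [hxdef, norm_smul, norm_inv, Complex.norm_real,
        Real.norm_of_nonneg (norm_nonneg y)]
      exact inv_mul_cancel₀ (ne_of_gt hynorm)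
    have hxne : x ≠ 0 := by
      intro h0
      rw [h0, norm_zero] at hxnorm
      norm_num at hxnorm
    have hQx : ‖Q x‖ ≤ ε n := by
      rw [hxdef, map_smul, norm_smul, norm_inv, Complex.norm_real,
        Real.norm_of_nonneg (norm_nonneg y)]
      rw [inv_mul_le_iff₀ hynorm]
      exact le_of_lt (by rw [mul_comm]; exact hy)
    obtain ⟨f, hf1, hfx⟩ := exists_dual_vector ℂ x (norm_ne_zero_iff.mpr hxne)
    have hfx1 : f x = 1 := by rw [hfx, hxnorm]; norm_num
    obtain ⟨b, hb1, hb2⟩ := hγ (Q x)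
    have hxb : x - b ∈ LinearMap.ker Q.toLinearMap := by
      simp [LinearMap.mem_ker, map_sub, hb1]
    rw [← hIQ] at hxb
    obtain ⟨a, ha⟩ := hxb
    refine ⟨x, f, a, hxN, hxnorm, le_of_eq hf1, hfx1, ?_⟩
    have hxa : x - I a = b := by rw [show I a = x - b from ha]; abel
    rw [hxa]
    calc ‖b‖ ≤ γ * ‖Q x‖ := hb2
      _ ≤ γ * ε n := mul_le_mul_of_nonneg_left hQx (le_of_lt hγpos)
  -- build the sequences by recursion
  have step : ∀ (n : ℕ)
      (N : {N : Submodule ℂ B // IsClosed (N : Set B) ∧ ¬FiniteDimensional ℂ N ∧ N ≤ M}),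
      ∃ p : B × (B →L[ℂ] ℂ) × A ×
          {N : Submodule ℂ B // IsClosed (N : Set B) ∧ ¬FiniteDimensional ℂ N ∧ N ≤ M},
        p.1 ∈ N.1 ∧ ‖p.1‖ = 1 ∧ ‖p.2.1‖ ≤ 1 ∧ p.2.1 p.1 = 1 ∧ ‖p.1 - I p.2.2.1‖ ≤ γ * ε n ∧
        p.2.2.2.1 ≤ N.1 ∧ p.2.2.2.1 ≤ LinearMap.ker p.2.1.toLinearMap := by
    intro n N
    obtain ⟨x, f, a, hxN, hxn, hfn, hfx, hxa⟩ := key n N.1 N.2.1 N.2.2.1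
    have hcl : IsClosed ((N.1 ⊓ LinearMap.ker f.toLinearMap : Submodule ℂ B) : Set B) := by
      have : ((N.1 ⊓ LinearMap.ker f.toLinearMap : Submodule ℂ B) : Set B)
          = (N.1 : Set B) ∩ (LinearMap.ker f.toLinearMap : Set B) := rfl
      rw [this]
      exact N.2.1.inter (ContinuousLinearMap.isClosed_ker f)
    refine ⟨⟨x, f, a, ⟨N.1 ⊓ LinearMap.ker f.toLinearMap, hcl,
      not_finiteDimensional_inf_ker _ _ N.2.2.1, inf_le_left.trans N.2.2.2⟩⟩,
      hxN, hxn, hfn, hfx, hxa, inf_le_left, inf_le_right⟩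
  choose F hF1 hF2 hF3 hF4 hF5 hF6 hF7 using step
  set st : ℕ → {N : Submodule ℂ B // IsClosed (N : Set B) ∧ ¬FiniteDimensional ℂ N ∧ N ≤ M} :=
    fun n => Nat.rec ⟨M, hMcl, hMfd, le_rfl⟩ (fun k Nk => (F k Nk).2.2.2) n with hst
  set x : ℕ → B := fun n => (F n (st n)).1 with hx
  set f : ℕ → B →L[ℂ] ℂ := fun n => (F n (st n)).2.1 with hf
  set a : ℕ → A := fun n => (F n (st n)).2.2.1 with ha
  have hst_succ : ∀ n, st (n + 1) = (F n (st n)).2.2.2 := fun n => rfl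
  have hmono : ∀ m n, m ≤ n → (st n).1 ≤ (st m).1 := by
    intro m n h
    induction h with
    | refl => exact le_rfl
    | @step k hk ih =>
        exact le_trans (by rw [hst_succ k]; exact hF6 k (st k)) ih
  have hxmem : ∀ n, x n ∈ (st n).1 := fun n => hF1 n (st n)
  have hxM : ∀ n, x n ∈ M := fun n => (st n).2.2.2 (hxmem n)
  have hxnorm : ∀ n, ‖x n‖ = 1 := fun n => hF2 n (st n)
  have hfnorm : ∀ n, ‖f n‖ ≤ 1 := fun n => hF3 n (st n)
  have hfx : ∀ n, f n (x n) = 1 := fun n => hF4 n (st n)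
  have hxa : ∀ n, ‖x n - I (a n)‖ ≤ γ * ε n := fun n => hF5 n (st n)
  have hcross : ∀ i n, i < n → f i (x n) = 0 := by
    intro i n hin
    have h2 : (st n).1 ≤ (st (i + 1)).1 := hmono (i + 1) n hin
    have h3 : x n ∈ LinearMap.ker (f i).toLinearMap := by
      have := hF7 i (st i)
      rw [← hst_succ i] at this
      exact this (h2 (hxmem n))
    exact h3
  -- coefficient bound
  have hcoeff : ∀ (N : ℕ) (lam : ℕ → ℂ) (j : ℕ), j < N →
      ‖lam j‖ ≤ 2 ^ j * ‖∑ i ∈ Finset.range N, lam i • x i‖ := by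
    intro N lam j
    induction j using Nat.strong_induction_on with
    | _ j ih =>
      intro hjN
      set w := ∑ i ∈ Finset.range N, lam i • x i with hw
      have h1 : (f j) w = ∑ i ∈ Finset.range N, lam i * f j (x i) := by
        rw [hw, map_sum]
        exact Finset.sum_congr rfl fun i _ => by rw [map_smul, smul_eq_mul]
      have h2 : ∑ i ∈ Finset.range N, lam i * f j (x i)
          = ∑ i ∈ Finset.range (j + 1), lam i * f j (x i) := by
        symm
        apply Finset.sum_subset (Finset.range_subset_range.mpr hjN)
        intro i hi hni
        rw [Finset.mem_range] at hi hni
        have hji : j < i := by omega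
        rw [hcross j i hji, mul_zero]
      have h3 : ∑ i ∈ Finset.range (j + 1), lam i * f j (x i)
          = (∑ i ∈ Finset.range j, lam i * f j (x i)) + lam j := by
        rw [Finset.sum_range_succ, hfx j, mul_one]
      have h4 : lam j = f j w - ∑ i ∈ Finset.range j, lam i * f j (x i) := by
        rw [h1, h2, h3]; ring
      have h5 : ‖f j w‖ ≤ ‖w‖ := by
        calc ‖f j w‖ ≤ ‖f j‖ * ‖w‖ := (f j).le_opNorm w
          _ ≤ 1 * ‖w‖ := mul_le_mul_of_nonneg_right (hfnorm j) (norm_nonneg _)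
          _ = ‖w‖ := one_mul _
      have h6 : ∀ i ∈ Finset.range j, ‖lam i * f j (x i)‖ ≤ 2 ^ i * ‖w‖ := by
        intro i hi
        rw [Finset.mem_range] at hi
        have hxi : ‖f j (x i)‖ ≤ 1 := by
          calc ‖f j (x i)‖ ≤ ‖f j‖ * ‖x i‖ := (f j).le_opNorm _
            _ ≤ 1 * 1 := by
                rw [hxnorm i]
                exact mul_le_mul_of_nonneg_right (hfnorm j) zero_le_one
            _ = 1 := one_mul _
        calc ‖lam i * f j (x i)‖ = ‖lam i‖ * ‖f j (x i)‖ := norm_mul _ _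
          _ ≤ (2 ^ i * ‖w‖) * 1 :=
              mul_le_mul (ih i hi (lt_trans hi hjN)) hxi (norm_nonneg _) (by positivity)
          _ = 2 ^ i * ‖w‖ := mul_one _
      have h7 : ‖∑ i ∈ Finset.range j, lam i * f j (x i)‖
          ≤ ∑ i ∈ Finset.range j, 2 ^ i * ‖w‖ :=
        le_trans (norm_sum_le _ _) (Finset.sum_le_sum h6)
      have h8 : (∑ i ∈ Finset.range j, (2:ℝ) ^ i) = 2 ^ j - 1 := by
        have := geom_sum_eq (by norm_num : (2:ℝ) ≠ 1) j
        rw [this]; norm_num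
      calc ‖lam j‖ ≤ ‖f j w‖ + ‖∑ i ∈ Finset.range j, lam i * f j (x i)‖ := by
            rw [h4]; exact norm_sub_le _ _
        _ ≤ ‖w‖ + ∑ i ∈ Finset.range j, 2 ^ i * ‖w‖ := add_le_add h5 h7
        _ = (1 + ∑ i ∈ Finset.range j, (2:ℝ) ^ i) * ‖w‖ := by
            rw [← Finset.sum_mul]; ring
        _ = 2 ^ j * ‖w‖ := by rw [h8]; ring
  -- error estimate
  have herr : ∀ (N : ℕ) (lam : ℕ → ℂ),
      ‖I (∑ i ∈ Finset.range N, lam i • a i) - ∑ i ∈ Finset.range N, lam i • x i‖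
        ≤ 2 * η * ‖∑ i ∈ Finset.range N, lam i • x i‖ := by
    intro N lam
    set v := ∑ i ∈ Finset.range N, lam i • a i with hv
    set w := ∑ i ∈ Finset.range N, lam i • x i with hw
    have h1 : I v - w = ∑ i ∈ Finset.range N, lam i • (I (a i) - x i) := by
      rw [hv, hw, map_sum, ← Finset.sum_sub_distrib]
      exact Finset.sum_congr rfl fun i _ => by rw [map_smul, smul_sub]
    have h2 : ∀ i ∈ Finset.range N,
        ‖lam i • (I (a i) - x i)‖ ≤ (η * (2:ℝ)⁻¹ ^ i) * ‖w‖ := by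
      intro i hi
      rw [Finset.mem_range] at hi
      have hIa : ‖I (a i) - x i‖ ≤ γ * ε i := by rw [norm_sub_rev]; exact hxa i
      calc ‖lam i • (I (a i) - x i)‖ = ‖lam i‖ * ‖I (a i) - x i‖ := norm_smul _ _
        _ ≤ (2 ^ i * ‖w‖) * (γ * ε i) :=
            mul_le_mul (hcoeff N lam i hi) hIa (norm_nonneg _) (by positivity)
        _ ≤ (2 ^ i * ‖w‖) * (η * (4:ℝ)⁻¹ ^ i) :=
            mul_le_mul_of_nonneg_left (hγε i) (by positivity)
        _ = (η * ((2:ℝ) ^ i * (4:ℝ)⁻¹ ^ i)) * ‖w‖ := by ring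
        _ = (η * (2:ℝ)⁻¹ ^ i) * ‖w‖ := by
            rw [← mul_pow]
            norm_num
    have h3 : (∑ i ∈ Finset.range N, (2:ℝ)⁻¹ ^ i) ≤ 2 := by
      have := sum_geometric_two_le N
      simpa [one_div] using this
    calc ‖I v - w‖ ≤ ∑ i ∈ Finset.range N, ‖lam i • (I (a i) - x i)‖ := by
          rw [h1]; exact norm_sum_le _ _
      _ ≤ ∑ i ∈ Finset.range N, (η * (2:ℝ)⁻¹ ^ i) * ‖w‖ := Finset.sum_le_sum h2
      _ = (∑ i ∈ Finset.range N, (2:ℝ)⁻¹ ^ i) * (η * ‖w‖) := by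
          rw [Finset.sum_mul]
          exact Finset.sum_congr rfl fun i _ => by ring
      _ ≤ 2 * (η * ‖w‖) := mul_le_mul_of_nonneg_right h3 (by positivity)
      _ = 2 * η * ‖w‖ := by ring
  -- lower bound for t on finite combinations of the aₙ
  set c' : ℝ := c / (4 * K * (‖J‖ + 1)) with hc'def
  have hc'pos : 0 < c' := div_pos hc (by positivity)
  have hbb : ∀ (N : ℕ) (lam : ℕ → ℂ),
      c' * ‖∑ i ∈ Finset.range N, lam i • a i‖ ≤ ‖t (∑ i ∈ Finset.range N, lam i • a i)‖ := by
    intro N lam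
    set v := ∑ i ∈ Finset.range N, lam i • a i with hv
    set w := ∑ i ∈ Finset.range N, lam i • x i with hw
    have hwM : w ∈ M := Submodule.sum_mem M fun i _ => Submodule.smul_mem M _ (hxM i)
    have e1 : ‖I v - w‖ ≤ 2 * η * ‖w‖ := herr N lam
    have hTw : c * ‖w‖ ≤ ‖T w‖ := hMbb w hwM
    -- ‖T (I v)‖ ≥ (c/2) ‖w‖
    have hTsub : ‖T w - T (I v)‖ ≤ ‖T‖ * (2 * η * ‖w‖) := by
      calc ‖T w - T (I v)‖ = ‖T (w - I v)‖ := by rw [map_sub]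
        _ ≤ ‖T‖ * ‖w - I v‖ := T.le_opNorm _
        _ ≤ ‖T‖ * (2 * η * ‖w‖) := by
            rw [norm_sub_rev]
            exact mul_le_mul_of_nonneg_left e1 (norm_nonneg _)
    have hTeta : ‖T‖ * (2 * η * ‖w‖) ≤ (c / 2) * ‖w‖ := by
      rw [← mul_assoc]
      exact mul_le_mul_of_nonneg_right hηT (norm_nonneg _)
    have hA2 : (c / 2) * ‖w‖ ≤ ‖T (I v)‖ := by
      have h0 : ‖T w‖ - ‖T (I v)‖ ≤ ‖T w - T (I v)‖ := norm_sub_norm_le _ _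
      linarith
    -- ‖v‖ ≤ 2 K ‖w‖
    have hA3 : ‖v‖ ≤ 2 * K * ‖w‖ := by
      have h0 : ‖I v‖ ≤ ‖w‖ + 2 * η * ‖w‖ := by
        have : ‖I v‖ - ‖w‖ ≤ ‖I v - w‖ := norm_sub_norm_le _ _
        linarith
      have h1 : ‖I v‖ ≤ 2 * ‖w‖ := by nlinarith [norm_nonneg w]
      calc ‖v‖ ≤ K * ‖I v‖ := hlow v
        _ ≤ K * (2 * ‖w‖) := mul_le_mul_of_nonneg_left h1 (le_of_lt hKpos)
        _ = 2 * K * ‖w‖ := by ring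
    -- conclude
    have hA1 : ‖J (t v)‖ ≤ (‖J‖ + 1) * ‖t v‖ := by
      calc ‖J (t v)‖ ≤ ‖J‖ * ‖t v‖ := J.le_opNorm _
        _ ≤ (‖J‖ + 1) * ‖t v‖ := by nlinarith [norm_nonneg (t v)]
    have hA2' : (c / 2) * ‖w‖ ≤ ‖J (t v)‖ := by rw [← hcomm₁ v]; exact hA2
    rw [hc'def, div_mul_eq_mul_div, div_le_iff₀ (by positivity)]
    calc c * ‖v‖ ≤ c * (2 * K * ‖w‖) := mul_le_mul_of_nonneg_left hA3 (le_of_lt hc)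
      _ = (4 * K) * ((c / 2) * ‖w‖) := by ring
      _ ≤ (4 * K) * ‖J (t v)‖ :=
          mul_le_mul_of_nonneg_left hA2' (by positivity)
      _ ≤ (4 * K) * ((‖J‖ + 1) * ‖t v‖) :=
          mul_le_mul_of_nonneg_left hA1 (by positivity)
      _ = ‖t v‖ * (4 * K * (‖J‖ + 1)) := by ring
  -- the subspace of A witnessing non-strict-singularity of t
  set M' : Submodule ℂ A := (Submodule.span ℂ (Set.range a)).topologicalClosure with hM'def
  have hM'closed : IsClosed (M' : Set A) := Submodule.isClosed_topologicalClosure _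
  have hSclosed : IsClosed {v : A | c' * ‖v‖ ≤ ‖t v‖} :=
    isClosed_le (continuous_const.mul continuous_norm) t.continuous.norm
  have hspan : (Submodule.span ℂ (Set.range a) : Set A) ⊆ {v : A | c' * ‖v‖ ≤ ‖t v‖} := by
    intro v hv
    rw [SetLike.mem_coe, Finsupp.mem_span_range_iff_exists_finsupp] at hv
    obtain ⟨lf, hl⟩ := hv
    set N := (lf.support.sup id) + 1 with hN
    have hsub : lf.support ⊆ Finset.range N := fun j hj =>
      Finset.mem_range.mpr (Nat.lt_succ_of_le (Finset.le_sup (f := id) hj))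
    have hveq : v = ∑ i ∈ Finset.range N, lf i • a i := by
      rw [← hl, Finsupp.sum]
      exact (Finset.sum_subset (f := fun i => lf i • a i) hsub fun i _ hni => by
        simp only [Finsupp.notMem_support_iff.mp hni, zero_smul])
    show c' * ‖v‖ ≤ ‖t v‖
    rw [hveq]
    exact hbb N lf
  have hM'bb : ∀ v ∈ M', c' * ‖v‖ ≤ ‖t v‖ := by
    intro v hv
    have hsubset : (M' : Set A) ⊆ {v : A | c' * ‖v‖ ≤ ‖t v‖} := by
      rw [hM'def, Submodule.topologicalClosure_coe]
      exact closure_minimal hspan hSclosed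
    exact hsubset hv
  -- linear independence of the aₙ
  have hlinind : LinearIndependent ℂ a := by
    rw [linearIndependent_iff']
    intro s g hsum i his
    set N := (s.sup id) + 1 with hN
    have hsub : s ⊆ Finset.range N := fun j hj =>
      Finset.mem_range.mpr (Nat.lt_succ_of_le (Finset.le_sup (f := id) hj))
    set g' : ℕ → ℂ := fun j => if j ∈ s then g j else 0 with hg'
    have hsum' : ∑ j ∈ Finset.range N, g' j • a j = 0 := by
      have h1 : ∑ j ∈ Finset.range N, g' j • a j = ∑ j ∈ s, g' j • a j :=
        (Finset.sum_subset (f := fun j => g' j • a j) hsub fun j _ hnj => by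
          simp only [hg', if_neg hnj, zero_smul]).symm
      have h2 : ∑ j ∈ s, g' j • a j = ∑ j ∈ s, g j • a j :=
        Finset.sum_congr rfl fun j hj => by simp only [hg', if_pos hj]
      rw [h1, h2, hsum]
    have hw0 : ∑ j ∈ Finset.range N, g' j • x j = 0 := by
      have h1 := herr N g'
      rw [hsum', map_zero, zero_sub, norm_neg] at h1
      have h2 : ‖∑ j ∈ Finset.range N, g' j • x j‖ = 0 := by nlinarith [norm_nonneg (∑ j ∈ Finset.range N, g' j • x j)]
      exact norm_eq_zero.mp h2
    have hiN : i < N := Finset.mem_range.mp (hsub his)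
    have := hcoeff N g' i hiN
    rw [hw0, norm_zero, mul_zero] at this
    have h9 : g' i = 0 := norm_le_zero_iff.mp this
    simpa only [hg', if_pos his] using h9
  -- M' is infinite dimensional
  have hM'fd : ¬FiniteDimensional ℂ M' := by
    intro hfd
    have hle : Submodule.span ℂ (Set.range a) ≤ M' := Submodule.le_topologicalClosure _
    have hspanfd : FiniteDimensional ℂ (Submodule.span ℂ (Set.range a)) :=
      Submodule.finiteDimensional_of_le hle
    set a' : ℕ → Submodule.span ℂ (Set.range a) :=
      fun n => ⟨a n, Submodule.subset_span (Set.mem_range_self n)⟩ with ha'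
    have hli' : LinearIndependent ℂ a' := by
      apply LinearIndependent.of_comp (Submodule.span ℂ (Set.range a)).subtype
      exact hlinind
    have h1 := hli'.aleph0_le_rank
    have h2 := Module.rank_lt_aleph0_iff.mpr hspanfd
    exact absurd h1 (not_le.mpr h2)
  exact htss ⟨M', c', hc'pos, hM'closed, hM'fd, hM'bb⟩
end

section
/- Let 0 → A →^I B →^Q C → 0 be an exact sequence of Banach spaces and bounded linear operators in which Q is strictly singular. If A contains no complemented subspace isomorphic to ℓ₂, then B contains no complemented subspace isomorphic to ℓ₂. -/
open scoped InnerProductSpace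
open Topology

/-- A Banach space `X` *contains a complemented copy of `ℓ₂`* if there is a closed
subspace `X'` of `X` which is the range of a bounded linear projection and is
isomorphic (linearly homeomorphic) to the Hilbert space `ℓ₂` of square-summable
sequences. -/
def ContainsComplementedL2 (X : Type*) [NormedAddCommGroup X] [NormedSpace ℂ X] : Prop :=
  ∃ (X' : Submodule ℂ X) (P : X →L[ℂ] X),
    IsClosed (X' : Set X) ∧ LinearMap.range (P : X →ₗ[ℂ] X) = X' ∧ (∀ x ∈ X', P x = x) ∧
    Nonempty (X' ≃L[ℂ] ↥(lp (fun _ : ℕ => ℂ) 2))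

/-- Recursively pick a sequence, where the `n`-th term may depend on all previous terms. -/
noncomputable def pickSeq {E : Type*} (pick : ∀ n : ℕ, (Fin n → E) → E) : ℕ → E
  | n => pick n fun j => pickSeq pick j
termination_by n => n
decreasing_by exact j.isLt

theorem pickSeq_eq {E : Type*} (pick : ∀ n : ℕ, (Fin n → E) → E) (n : ℕ) :
    pickSeq pick n = pick n fun j => pickSeq pick j := by
  rw [pickSeq]

/-- A continuous linear equivalence restricts to an equivalence between a submodule and its
image. -/
noncomputable def cleSubmoduleMap {M N : Type*} [NormedAddCommGroup M] [NormedSpace ℂ M]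
    [NormedAddCommGroup N] [NormedSpace ℂ N] (σ : M ≃L[ℂ] N) (p : Submodule ℂ M) :
    p ≃L[ℂ] ↥(p.map (σ : M →ₗ[ℂ] N)) :=
  ContinuousLinearEquiv.equivOfInverse
    (((σ : M →L[ℂ] N).comp p.subtypeL).codRestrict (p.map (σ : M →ₗ[ℂ] N))
      (fun x => Submodule.mem_map_of_mem x.2))
    (((σ.symm : N →L[ℂ] M).comp (p.map (σ : M →ₗ[ℂ] N)).subtypeL).codRestrict p
      (fun x => by
        obtain ⟨y, hy, hxy⟩ := x.2
        have h : σ.symm x = y := by rw [← hxy]; exact σ.symm_apply_apply y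
        rw [show ((σ.symm : N →L[ℂ] M).comp (p.map (σ : M →ₗ[ℂ] N)).subtypeL) x
            = σ.symm (x : N) from rfl, h]
        exact hy))
    (fun x => Subtype.ext (σ.symm_apply_apply (x : M)))
    (fun x => Subtype.ext (σ.apply_symm_apply (x : N)))

/-- If `p ≤ q` then `p`, viewed as a submodule of `q`, is equivalent to `p`. -/
noncomputable def cleComapSubtype {M : Type*} [NormedAddCommGroup M] [NormedSpace ℂ M]
    {p q : Submodule ℂ M} (hpq : p ≤ q) :
    ↥(p.comap q.subtype) ≃L[ℂ] p :=
  ContinuousLinearEquiv.equivOfInverse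
    ((q.subtypeL.comp (p.comap q.subtype).subtypeL).codRestrict p (fun x => x.2))
    (((p.subtypeL.codRestrict q (fun x => hpq x.2)).codRestrict (p.comap q.subtype))
      (fun x => by simp [Submodule.mem_comap]))
    (fun x => by ext; rfl)
    (fun x => by ext; rfl)

set_option maxHeartbeats 2000000 in
theorem aux_main
    {A B C E : Type*}
    [NormedAddCommGroup A] [NormedSpace ℂ A] [CompleteSpace A]
    [NormedAddCommGroup B] [NormedSpace ℂ B] [CompleteSpace B]
    [NormedAddCommGroup C] [NormedSpace ℂ C] [CompleteSpace C]
    [NormedAddCommGroup E] [InnerProductSpace ℂ E] [CompleteSpace E]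
    (hEinf : ¬FiniteDimensional ℂ E)
    (I : A →L[ℂ] B) (Q : B →L[ℂ] C)
    (hI : Function.Injective I) (hQ : Function.Surjective Q)
    (hIQ : LinearMap.range (I : A →ₗ[ℂ] B) = LinearMap.ker (Q : B →ₗ[ℂ] C))
    (hQss : StrictlySingular Q)
    (X' : Submodule ℂ B) (P : B →L[ℂ] B)
    (hXc : IsClosed (X' : Set B)) (hPr : LinearMap.range (P : B →ₗ[ℂ] B) = X')
    (hPid : ∀ x ∈ X', P x = x) (e : X' ≃L[ℂ] E) :
    ContainsComplementedL2 A := by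
  classical
  -- the inclusion of `E` into `B`
  set g : E →L[ℂ] B := X'.subtypeL.comp (e.symm : E →L[ℂ] X') with hg_def
  have hgx : ∀ x : E, g x = ((e.symm x : X') : B) := fun x => rfl
  have hgmem : ∀ x : E, g x ∈ X' := fun x => (e.symm x).2
  have hginj : Function.Injective g := by
    intro x y hxy
    have h : (e.symm x : X') = e.symm y := Subtype.ext hxy
    simpa using congrArg e h
  have hgce : IsClosedEmbedding g := by
    have h : IsClosedEmbedding ((Subtype.val : X' → B) ∘ ⇑e.symm) :=
      hXc.isClosedEmbedding_subtypeVal.comp e.symm.toHomeomorph.isClosedEmbedding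
    exact h
  -- the projection onto `X'` with restricted codomain
  have hPmem : ∀ x : B, P x ∈ X' := fun x => hPr ▸ LinearMap.mem_range_self (P : B →ₗ[ℂ] B) x
  set P' : B →L[ℂ] X' := P.codRestrict X' hPmem with hP'_def
  have hP'g : ∀ x : E, P' (g x) = e.symm x := by
    intro x
    apply Subtype.ext
    show P (g x) = ((e.symm x : X') : B)
    rw [hPid _ (hgmem x)]
    rfl
  -- strict singularity transferred to `E`
  have hQg : ∀ (M : Submodule ℂ E), IsClosed (M : Set E) → ¬FiniteDimensional ℂ M →
      ∀ c : ℝ, 0 < c → ∃ x, x ∈ M ∧ x ≠ 0 ∧ ‖Q (g x)‖ < c * ‖x‖ := by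
    intro M hMc hMd c hc
    by_contra hcon
    push_neg at hcon
    apply hQss
    have hginj' : Function.Injective (g : E →ₗ[ℂ] B) := hginj
    refine ⟨M.map (g : E →ₗ[ℂ] B), c / (‖g‖ + 1), ?_, ?_, ?_, ?_⟩
    · apply div_pos hc; positivity
    · rw [Submodule.map_coe]
      exact hgce.isClosedMap _ hMc
    · intro hfin
      haveI := hfin
      exact hMd (Submodule.equivMapOfInjective (g : E →ₗ[ℂ] B) hginj' M).symm.finiteDimensional
    · rintro y ⟨x, hx, rfl⟩
      simp only [ContinuousLinearMap.coe_coe]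
      rcases eq_or_ne x 0 with rfl | hx0
      · simp
      · have h1 : c * ‖x‖ ≤ ‖Q (g x)‖ := hcon x hx hx0
        have h2 : ‖g x‖ ≤ (‖g‖ + 1) * ‖x‖ := by
          have := g.le_opNorm x
          nlinarith [norm_nonneg x]
        have hpos : (0:ℝ) < ‖g‖ + 1 := by positivity
        calc c / (‖g‖ + 1) * ‖g x‖ ≤ c / (‖g‖ + 1) * ((‖g‖ + 1) * ‖x‖) := by
              apply mul_le_mul_of_nonneg_left h2
              positivity
        _ = c * ((‖g‖ + 1)⁻¹ * (‖g‖ + 1)) * ‖x‖ := by rw [div_eq_mul_inv]; ring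
        _ = c * ‖x‖ := by
              rw [inv_mul_cancel₀ (by positivity : (‖g‖ : ℝ) + 1 ≠ 0)]
              ring
        _ ≤ ‖Q (g x)‖ := h1
  -- the constant from the open mapping theorem
  obtain ⟨C₀, hC₀pos, hC₀⟩ := Q.exists_preimage_norm_le hQ
  -- a bound for the coordinate functionals
  set CF : ℝ := ‖(e : X' →L[ℂ] E)‖ * ‖P‖ + 1 with hCF_def
  have hCFpos : 0 < CF := by positivity
  -- smallness parameter
  set δ : ℝ := (4 * (CF * C₀) + 4)⁻¹ with hδ_def
  have hδpos : 0 < δ := by rw [hδ_def]; positivity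
  -- selection of an orthonormal sequence with small `Q ∘ g` values
  have sel : ∀ (n : ℕ) (v : Fin n → E), ∃ x : E,
      x ∈ (Submodule.span ℂ (Set.range v))ᗮ ∧ ‖x‖ = 1 ∧
      ‖Q (g x)‖ < (2 : ℝ)⁻¹ ^ n * δ := by
    intro n v
    set F := Submodule.span ℂ (Set.range v) with hF_def
    haveI : FiniteDimensional ℂ F := FiniteDimensional.span_of_finite ℂ (Set.finite_range v)
    have hFd : ¬FiniteDimensional ℂ ↥Fᗮ := by
      intro hfin
      haveI := hfin
      have htop : F ⊔ Fᗮ = ⊤ := Submodule.sup_orthogonal_of_hasOrthogonalProjection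
      haveI h2 : FiniteDimensional ℂ ↥(F ⊔ Fᗮ) := inferInstance
      rw [htop] at h2
      exact hEinf Submodule.topEquiv.finiteDimensional
    have hcpos : (0 : ℝ) < (2 : ℝ)⁻¹ ^ n * δ := by positivity
    obtain ⟨x, hxM, hx0, hQx⟩ := hQg Fᗮ F.isClosed_orthogonal hFd _ hcpos
    have hxn : (0:ℝ) < ‖x‖ := norm_pos_iff.mpr hx0
    refine ⟨((‖x‖⁻¹ : ℝ) : ℂ) • x, Submodule.smul_mem _ _ hxM, ?_, ?_⟩
    · rw [norm_smul, Complex.norm_real, Real.norm_eq_abs, abs_of_nonneg (by positivity)]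
      exact inv_mul_cancel₀ hxn.ne'
    · have h1 : Q (g (((‖x‖⁻¹ : ℝ) : ℂ) • x)) = ((‖x‖⁻¹ : ℝ) : ℂ) • Q (g x) := by
        rw [map_smul, map_smul]
      rw [h1, norm_smul, Complex.norm_real, Real.norm_eq_abs, abs_of_nonneg (by positivity)]
      calc ‖x‖⁻¹ * ‖Q (g x)‖ < ‖x‖⁻¹ * ((2 : ℝ)⁻¹ ^ n * δ * ‖x‖) := by
            apply mul_lt_mul_of_pos_left hQx
            positivity
      _ = (2 : ℝ)⁻¹ ^ n * δ * (‖x‖⁻¹ * ‖x‖) := by ring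
      _ = (2 : ℝ)⁻¹ ^ n * δ := by rw [inv_mul_cancel₀ hxn.ne', mul_one]
  -- the orthonormal sequence
  set pick : ∀ n : ℕ, (Fin n → E) → E := fun n v => Classical.choose (sel n v) with hpick_def
  set u : ℕ → E := pickSeq pick with hu_def
  have hu0 : ∀ n, u n = pick n (fun j : Fin n => u j) := by
    intro n
    rw [hu_def]
    exact pickSeq_eq pick n
  have hu : ∀ n : ℕ, u n ∈ (Submodule.span ℂ (Set.range (fun j : Fin n => u j)))ᗮ ∧
      ‖u n‖ = 1 ∧ ‖Q (g (u n))‖ < (2 : ℝ)⁻¹ ^ n * δ := by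
    intro n
    rw [hu0 n, hpick_def]
    exact Classical.choose_spec (sel n (fun j : Fin n => u j))
  have hu_norm : ∀ n, ‖u n‖ = 1 := fun n => (hu n).2.1
  have hu_small : ∀ n, ‖Q (g (u n))‖ < (2:ℝ)⁻¹ ^ n * δ := fun n => (hu n).2.2
  have horth : Orthonormal ℂ u := by
    rw [orthonormal_iff_ite]
    have key : ∀ i j : ℕ, i < j → ⟪u i, u j⟫_ℂ = 0 := by
      intro i j hij
      have h1 := (hu j).1
      rw [Submodule.mem_orthogonal] at h1
      exact h1 (u i) (Submodule.subset_span ⟨⟨i, hij⟩, rfl⟩)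
    intro i j
    rcases lt_trichotomy i j with h | rfl | h
    · rw [key i j h, if_neg h.ne]
    · rw [if_pos rfl, inner_self_eq_norm_sq_to_K, hu_norm i]
      norm_num
    · rw [if_neg h.ne', ← inner_conj_symm, key j i h, map_zero]
  -- the Hilbert subspace generated by the sequence
  set Hs : Submodule ℂ E := (Submodule.span ℂ (Set.range u)).topologicalClosure with hHs_def
  have hHc : IsClosed (Hs : Set E) := Submodule.isClosed_topologicalClosure _
  haveI : CompleteSpace Hs := hHc.completeSpace_coe
  set u' : ℕ → Hs := fun n =>
    ⟨u n, Submodule.le_topologicalClosure _ (Submodule.subset_span ⟨n, rfl⟩)⟩ with hu'_def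
  have horth' : Orthonormal ℂ u' := by
    rw [orthonormal_iff_ite] at horth ⊢
    intro i j
    exact horth i j
  have hdense : ⊤ ≤ (Submodule.span ℂ (Set.range u')).topologicalClosure := by
    intro x _
    have hx : (x : E) ∈ closure ((Submodule.span ℂ (Set.range u) : Submodule ℂ E) : Set E) := by
      rw [← Submodule.topologicalClosure_coe]
      exact x.2
    have himg : Subtype.val '' ((Submodule.span ℂ (Set.range u') : Submodule ℂ Hs) : Set Hs)
        = ((Submodule.span ℂ (Set.range u) : Submodule ℂ E) : Set E) := by
      have h1 : (Submodule.span ℂ (Set.range u')).map Hs.subtype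
          = Submodule.span ℂ (Set.range u) := by
        rw [Submodule.map_span]
        congr 1
        rw [← Set.range_comp]
        rfl
      rw [← h1]
      rfl
    rw [← SetLike.mem_coe, Submodule.topologicalClosure_coe, closure_subtype, himg]
    exact hx
  -- choice of good preimages via the open mapping theorem
  have hwex : ∀ k : ℕ, ∃ wk : B, Q wk = Q (g (u k)) ∧ ‖wk‖ ≤ C₀ * ‖Q (g (u k))‖ :=
    fun k => hC₀ (Q (g (u k)))
  choose w hwQ hwn using hwex
  -- the coordinate functionals on `B`
  set f : ℕ → (B →L[ℂ] ℂ) := fun k =>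
    (innerSL ℂ (u k)).comp ((e : X' →L[ℂ] E).comp P') with hf_def
  have hfb : ∀ k, ‖f k‖ ≤ CF := by
    intro k
    apply ContinuousLinearMap.opNorm_le_bound _ hCFpos.le
    intro x
    have h1 : ‖f k x‖ = ‖⟪u k, (e : X' →L[ℂ] E) (P' x)⟫_ℂ‖ := rfl
    rw [h1]
    calc ‖⟪u k, (e : X' →L[ℂ] E) (P' x)⟫_ℂ‖ ≤ ‖u k‖ * ‖(e : X' →L[ℂ] E) (P' x)‖ :=
          norm_inner_le_norm _ _
    _ = ‖(e : X' →L[ℂ] E) (P' x)‖ := by rw [hu_norm k, one_mul]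
    _ ≤ ‖(e : X' →L[ℂ] E)‖ * ‖P' x‖ := (e : X' →L[ℂ] E).le_opNorm _
    _ = ‖(e : X' →L[ℂ] E)‖ * ‖P x‖ := rfl
    _ ≤ ‖(e : X' →L[ℂ] E)‖ * (‖P‖ * ‖x‖) := by
          have h2 := P.le_opNorm x
          have h0 := norm_nonneg (e : X' →L[ℂ] E)
          nlinarith
    _ ≤ CF * ‖x‖ := by
          have h0 := norm_nonneg (e : X' →L[ℂ] E)
          have h1 := norm_nonneg P
          have h2 := norm_nonneg x
          rw [hCF_def]
          nlinarith
  have hfv : ∀ k j : ℕ, f k (g (u j)) = if k = j then 1 else 0 := by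
    intro k j
    have h1 : f k (g (u j)) = ⟪u k, (e : X' →L[ℂ] E) (P' (g (u j)))⟫_ℂ := rfl
    rw [h1, hP'g]
    have h2 : (e : X' →L[ℂ] E) (e.symm (u j)) = u j := e.apply_symm_apply (u j)
    rw [h2]
    rw [orthonormal_iff_ite] at horth
    exact horth k j
  -- the perturbation operator
  set dd : ℕ → B := fun k => -(w k) with hdd_def
  have hddQ : ∀ k, Q (dd k) = -(Q (g (u k))) := by
    intro k
    rw [hdd_def]
    show Q (-(w k)) = _
    rw [map_neg, hwQ k]
  have hddn : ∀ k, ‖dd k‖ ≤ C₀ * ((2:ℝ)⁻¹ ^ k * δ) := by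
    intro k
    calc ‖dd k‖ = ‖w k‖ := norm_neg _
    _ ≤ C₀ * ‖Q (g (u k))‖ := hwn k
    _ ≤ C₀ * ((2:ℝ)⁻¹ ^ k * δ) := mul_le_mul_of_nonneg_left (hu_small k).le hC₀pos.le
  have hterm : ∀ k, ‖(f k).smulRight (dd k)‖ ≤ (CF * (C₀ * δ)) * (2:ℝ)⁻¹ ^ k := by
    intro k
    rw [ContinuousLinearMap.norm_smulRight_apply]
    calc ‖f k‖ * ‖dd k‖ ≤ CF * (C₀ * ((2:ℝ)⁻¹ ^ k * δ)) :=
          mul_le_mul (hfb k) (hddn k) (norm_nonneg _) hCFpos.le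
    _ = (CF * (C₀ * δ)) * (2:ℝ)⁻¹ ^ k := by ring
  have hgeom : Summable (fun k : ℕ => (CF * (C₀ * δ)) * (2:ℝ)⁻¹ ^ k) :=
    (summable_geometric_of_lt_one (by norm_num) (by norm_num)).mul_left _
  have hsum : Summable (fun k => (f k).smulRight (dd k)) :=
    Summable.of_norm_bounded hgeom hterm
  set D : B →L[ℂ] B := ∑' k, (f k).smulRight (dd k) with hD_def
  have hsumnorm : Summable (fun k => ‖(f k).smulRight (dd k)‖) :=
    Summable.of_nonneg_of_le (fun _ => norm_nonneg _) hterm hgeom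
  have hDnorm : ‖D‖ ≤ (CF * (C₀ * δ)) * 2 := by
    rw [hD_def]
    calc ‖∑' k, (f k).smulRight (dd k)‖ ≤ ∑' k, ‖(f k).smulRight (dd k)‖ :=
          norm_tsum_le_tsum_norm hsumnorm
    _ ≤ ∑' k : ℕ, (CF * (C₀ * δ)) * (2:ℝ)⁻¹ ^ k := Summable.tsum_le_tsum hterm hsumnorm hgeom
    _ = (CF * (C₀ * δ)) * ∑' k : ℕ, (2:ℝ)⁻¹ ^ k := tsum_mul_left
    _ = (CF * (C₀ * δ)) * 2 := by
          rw [tsum_geometric_of_lt_one (by norm_num) (by norm_num)]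
          norm_num
  have hD1 : ‖D‖ < 1 := by
    apply lt_of_le_of_lt hDnorm
    have h4 : (0:ℝ) < 4 * (CF * C₀) + 4 := by positivity
    calc CF * (C₀ * δ) * 2 = 2 * (CF * C₀) / (4 * (CF * C₀) + 4) := by
          rw [hδ_def, div_eq_mul_inv]; ring
    _ < 1 := by
          rw [div_lt_one h4]
          nlinarith [mul_pos hCFpos hC₀pos]
  have hDapp : ∀ x : B, HasSum (fun k => f k x • dd k) (D x) := by
    intro x
    have h1 := (ContinuousLinearMap.apply ℂ B x).hasSum hsum.hasSum
    simpa using h1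
  have hDv : ∀ j, D (g (u j)) = dd j := by
    intro j
    have h1 := hDapp (g (u j))
    have h2 : (fun k => f k (g (u j)) • dd k) = (fun k => if k = j then dd j else 0) := by
      funext k
      rw [hfv k j]
      by_cases h : k = j
      · subst h; simp
      · simp [h]
    rw [h2] at h1
    exact h1.unique (hasSum_ite_eq j (dd j))
  -- the small perturbation of the identity
  set Tu : (B →L[ℂ] B)ˣ := Units.oneSub (-D) (by rwa [norm_neg]) with hTu_def
  have hTuval : (Tu : B →L[ℂ] B) = 1 + D := by
    rw [hTu_def]
    show 1 - -D = 1 + D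
    rw [sub_neg_eq_add]
  set T : B ≃L[ℂ] B := ContinuousLinearEquiv.equivOfInverse (Tu : B →L[ℂ] B)
    (↑Tu⁻¹ : B →L[ℂ] B)
    (fun x => by
      have h := Tu.inv_mul
      calc (↑Tu⁻¹ : B →L[ℂ] B) ((Tu : B →L[ℂ] B) x)
          = ((↑Tu⁻¹ * ↑Tu : B →L[ℂ] B)) x := rfl
      _ = x := by rw [h]; rfl)
    (fun x => by
      have h := Tu.mul_inv
      calc (Tu : B →L[ℂ] B) ((↑Tu⁻¹ : B →L[ℂ] B) x)
          = ((↑Tu * ↑Tu⁻¹ : B →L[ℂ] B)) x := rfl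
      _ = x := by rw [h]; rfl) with hT_def
  have hTapp : ∀ x : B, T x = x + D x := by
    intro x
    show (Tu : B →L[ℂ] B) x = x + D x
    rw [hTuval]
    rfl
  have hTv : ∀ j, T (g (u j)) = g (u j) + dd j := fun j => by rw [hTapp, hDv]
  -- `T ∘ g` maps `Hs` into the kernel of `Q`
  have hQT : ∀ x : E, x ∈ Hs → Q (T (g x)) = 0 := by
    set R : E →L[ℂ] C := Q.comp ((T : B →L[ℂ] B).comp g) with hR_def
    have hRu : ∀ j : ℕ, u j ∈ LinearMap.ker (R : E →ₗ[ℂ] C) := by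
      intro j
      rw [LinearMap.mem_ker]
      have h1 : (R : E →ₗ[ℂ] C) (u j) = Q (T (g (u j))) := rfl
      rw [h1, hTv j, map_add, hddQ j, add_neg_cancel]
    have hspan : Submodule.span ℂ (Set.range u) ≤ LinearMap.ker (R : E →ₗ[ℂ] C) := by
      rw [Submodule.span_le]
      rintro _ ⟨j, rfl⟩
      exact hRu j
    have h3 : Hs ≤ LinearMap.ker (R : E →ₗ[ℂ] C) := by
      rw [hHs_def]
      exact Submodule.topologicalClosure_minimal _ hspan (ContinuousLinearMap.isClosed_ker R)
    intro x hx
    exact LinearMap.mem_ker.mp (h3 hx)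
  -- the subspace `K` of `B`
  set gT : E →L[ℂ] B := (T : B →L[ℂ] B).comp g with hgT_def
  set Ks : Submodule ℂ B := Hs.map (gT : E →ₗ[ℂ] B) with hKs_def
  have hKQ : Ks ≤ LinearMap.ker (Q : B →ₗ[ℂ] C) := by
    rintro _ ⟨x, hx, rfl⟩
    exact LinearMap.mem_ker.mpr (hQT x hx)
  have hKcl : IsClosed (Ks : Set B) := by
    have h1 : (Ks : Set B) = ⇑T '' (⇑g '' (Hs : Set E)) := by
      rw [hKs_def, Submodule.map_coe, ← Set.image_comp]
      rfl
    rw [h1]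
    exact T.toHomeomorph.isClosedMap _ (hgce.isClosedMap _ hHc)
  -- the projection onto `Ks`
  set PH : E →L[ℂ] E := Hs.subtypeL.comp (Submodule.orthogonalProjectionOnto Hs) with hPH_def
  set Pi0 : B →L[ℂ] B := g.comp (PH.comp ((e : X' →L[ℂ] E).comp P')) with hPi0_def
  set Pi : B →L[ℂ] B := ((T : B →L[ℂ] B).comp Pi0).comp (T.symm : B →L[ℂ] B) with hPi_def
  have hPiapp : ∀ x : B,
      Pi x = T (g (PH ((e : X' →L[ℂ] E) (P' (T.symm x))))) := fun x => rfl
  have hPHmem : ∀ y : E, PH y ∈ Hs := fun y => (Submodule.orthogonalProjectionOnto Hs y).2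
  have hPHfix : ∀ y : E, y ∈ Hs → PH y = y := by
    intro y hy
    show ↑(Submodule.orthogonalProjectionOnto Hs y) = y
    exact Submodule.starProjection_eq_self_iff.mpr hy
  have hePg : ∀ y : E, (e : X' →L[ℂ] E) (P' (g y)) = y := by
    intro y
    rw [hP'g]
    exact e.apply_symm_apply y
  have hPimem : ∀ x : B, Pi x ∈ Ks := by
    intro x
    rw [hPiapp]
    exact ⟨PH ((e : X' →L[ℂ] E) (P' (T.symm x))), hPHmem _, rfl⟩
  have hPifix : ∀ x ∈ Ks, Pi x = x := by
    rintro _ ⟨y, hy, rfl⟩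
    have h1 : ((gT : E →ₗ[ℂ] B) y : B) = T (g y) := rfl
    rw [h1, hPiapp, T.symm_apply_apply, hePg, hPHfix y hy]
  have hPirange : LinearMap.range (Pi : B →ₗ[ℂ] B) = Ks := by
    apply le_antisymm
    · rintro _ ⟨x, rfl⟩
      exact hPimem x
    · intro x hx
      exact ⟨x, hPifix x hx⟩
  -- `Hs ≃L Ks`
  have hK1 : ∀ x : Hs, (gT.comp Hs.subtypeL) x ∈ Ks := fun x => ⟨x.1, x.2, rfl⟩
  set eq1 : Hs ≃L[ℂ] Ks := ContinuousLinearEquiv.equivOfInverse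
    ((gT.comp Hs.subtypeL).codRestrict Ks hK1)
    ((Submodule.orthogonalProjectionOnto Hs).comp (((e : X' →L[ℂ] E).comp P').comp
      ((T.symm : B →L[ℂ] B).comp Ks.subtypeL)))
    (fun x => by
      have h1 : ((Submodule.orthogonalProjectionOnto Hs).comp (((e : X' →L[ℂ] E).comp P').comp
          ((T.symm : B →L[ℂ] B).comp Ks.subtypeL)))
          (((gT.comp Hs.subtypeL).codRestrict Ks hK1) x)
          = Submodule.orthogonalProjectionOnto Hs ((e : X' →L[ℂ] E) (P' (T.symm (T (g ↑x))))) := rfl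
      rw [h1, T.symm_apply_apply, hePg]
      exact Submodule.orthogonalProjection_mem_subspace_eq_self x)
    (fun k => by
      obtain ⟨y, hy, hky⟩ := k.2
      apply Subtype.ext
      have h1 : ((((gT.comp Hs.subtypeL).codRestrict Ks hK1)
          (((Submodule.orthogonalProjectionOnto Hs).comp (((e : X' →L[ℂ] E).comp P').comp
          ((T.symm : B →L[ℂ] B).comp Ks.subtypeL))) k)) : B)
          = T (g ((Submodule.orthogonalProjectionOnto Hs
              ((e : X' →L[ℂ] E) (P' (T.symm (k : B))))) : E)) := rfl
      have h2 : T.symm (k : B) = g y := by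
        rw [← hky]
        exact T.symm_apply_apply (g y)
      rw [h1, h2, hePg]
      have h3 : ((Submodule.orthogonalProjectionOnto Hs y) : E) = y :=
        Submodule.starProjection_eq_self_iff.mpr hy
      rw [h3]
      exact hky) with heq1_def
  -- `Hs ≃L ℓ²`
  set bas : HilbertBasis ℕ ℂ Hs := HilbertBasis.mk horth' hdense with hbas_def
  set eq2 : Hs ≃L[ℂ] ↥(lp (fun _ : ℕ => ℂ) 2) :=
    bas.repr.toContinuousLinearEquiv with heq2_def
  -- pulling everything back to `A`
  set Ns : Submodule ℂ B := LinearMap.ker (Q : B →ₗ[ℂ] C) with hNs_def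
  have hNc : IsClosed (Ns : Set B) := ContinuousLinearMap.isClosed_ker Q
  haveI : CompleteSpace Ns := hNc.completeSpace_coe
  have hImem : ∀ a : A, I a ∈ Ns := fun a => hIQ ▸ LinearMap.mem_range_self (I : A →ₗ[ℂ] B) a
  set Ic : A →L[ℂ] Ns := I.codRestrict Ns hImem with hIc_def
  have hIcinj : LinearMap.ker (Ic : A →ₗ[ℂ] Ns) = ⊥ := by
    rw [LinearMap.ker_eq_bot]
    intro a b hab
    exact hI (congrArg Subtype.val hab)
  have hIcsurj : LinearMap.range (Ic : A →ₗ[ℂ] Ns) = ⊤ := by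
    rw [LinearMap.range_eq_top]
    intro y
    have h1 : (y : B) ∈ LinearMap.range (I : A →ₗ[ℂ] B) := by rw [hIQ]; exact y.2
    obtain ⟨a, ha⟩ := h1
    exact ⟨a, Subtype.ext ha⟩
  set J : A ≃L[ℂ] Ns := ContinuousLinearEquiv.ofBijective Ic hIcinj hIcsurj with hJ_def
  set Ks' : Submodule ℂ Ns := Ks.comap Ns.subtype with hKs'_def
  have hKs'c : IsClosed (Ks' : Set Ns) := by
    have h1 : (Ks' : Set Ns) = Subtype.val ⁻¹' (Ks : Set B) := rfl
    rw [h1]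
    exact hKcl.preimage continuous_subtype_val
  set A' : Submodule ℂ A := Ks'.map (J.symm : Ns →ₗ[ℂ] A) with hA'_def
  have hA'c : IsClosed (A' : Set A) := by
    have h1 : (A' : Set A) = ⇑J.symm '' (Ks' : Set Ns) := by
      rw [hA'_def, Submodule.map_coe]
      rfl
    rw [h1]
    exact J.symm.toHomeomorph.isClosedMap _ hKs'c
  set PiN : B →L[ℂ] Ns := Pi.codRestrict Ns (fun x => hKQ (hPimem x)) with hPiN_def
  set PA : A →L[ℂ] A := ((J.symm : Ns →L[ℂ] A).comp PiN).comp
    (Ns.subtypeL.comp (J : A →L[ℂ] Ns)) with hPA_def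
  have hPAx : ∀ a : A, PA a = J.symm (PiN ↑(J a)) := fun a => rfl
  have hPiNmem : ∀ x : B, PiN x ∈ Ks' := fun x => hPimem x
  have hPAmem : ∀ a : A, PA a ∈ A' := by
    intro a
    rw [hPAx]
    exact ⟨PiN ↑(J a), hPiNmem _, rfl⟩
  have hPAfix : ∀ a ∈ A', PA a = a := by
    rintro _ ⟨k, hk, rfl⟩
    have h1 : PA ((J.symm : Ns →ₗ[ℂ] A) k) = J.symm (PiN ↑(J (J.symm k))) := rfl
    rw [h1, J.apply_symm_apply]
    have h2 : PiN ↑k = k := by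
      apply Subtype.ext
      show Pi ↑k = ↑k
      exact hPifix ↑k hk
    rw [h2]
    rfl
  have hPArange : LinearMap.range (PA : A →ₗ[ℂ] A) = A' := by
    apply le_antisymm
    · rintro _ ⟨a, rfl⟩
      exact hPAmem a
    · intro a ha
      exact ⟨a, hPAfix a ha⟩
  refine ⟨A', PA, hA'c, hPArange, hPAfix, ⟨?_⟩⟩
  exact ((cleSubmoduleMap J.symm Ks').symm.trans (cleComapSubtype hKQ)).trans
    (eq1.symm.trans eq2)

set_option maxHeartbeats 1000000 in
/-- **No complemented `ℓ₂` in twisted sums with strictly singular quotient.**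
If `0 → A → B → C → 0` is an exact sequence of Banach spaces with strictly singular
quotient map `Q` and `A` contains no complemented subspace isomorphic to `ℓ₂`, then `B`
contains no complemented subspace isomorphic to `ℓ₂`. -/
theorem not_containsComplementedL2_of_exact
    {A B C : Type*}
    [NormedAddCommGroup A] [NormedSpace ℂ A] [CompleteSpace A]
    [NormedAddCommGroup B] [NormedSpace ℂ B] [CompleteSpace B]
    [NormedAddCommGroup C] [NormedSpace ℂ C] [CompleteSpace C]
    (I : A →L[ℂ] B) (Q : B →L[ℂ] C)
    (hI : Function.Injective I) (hQ : Function.Surjective Q)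
    (hIQ : LinearMap.range (I : A →ₗ[ℂ] B) = LinearMap.ker (Q : B →ₗ[ℂ] C))
    (hQss : StrictlySingular Q)
    (hA : ¬ContainsComplementedL2 A) :
    ¬ContainsComplementedL2 B := by
  intro hB
  obtain ⟨X', P, hXc, hPr, hPid, ⟨e⟩⟩ := hB
  have hEinf : ¬FiniteDimensional ℂ ↥(lp (fun _ : ℕ => ℂ) 2) := by
    intro h
    have b : HilbertBasis ℕ ℂ ↥(lp (fun _ : ℕ => ℂ) 2) := default
    exact Module.Finite.not_linearIndependent_of_infinite (⇑b) b.orthonormal.linearIndependent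
  exact hA (aux_main hEinf I Q hI hQ hIQ hQss X' P hXc hPr hPid e)
end
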